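/- arXiv:2212.05002 — 4 statements merged into one kernel-verified Lean document; each statement's English description precedes it below -/
import Mathlib

section
/- Suppose v and w are fully commutative permutations in S_n with w = v·s_i, ℓ(w) = ℓ(v) + 1, and i ∈ supp(v). If P(v) ≠ P(w), then w is a crowded permutation, i.e., Row₂(P(w)) is a crowded set. -/
/-- The value in position `j` (0-indexed) of the one-line notation of `w`,
extended by the identity outside the range `[0, n)`. -/
def entry {n : ℕ} (w : Equiv.Perm (Fin n)) (j : ℕ) : ℕ :=
  if h : j < n then (w ⟨j, h⟩ : ℕ) else j

/-- One-line notation of a permutation, as a list of natural numbers (0-indexed values). -/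
def oneLine {n : ℕ} (w : Equiv.Perm (Fin n)) : List ℕ :=
  List.ofFn (fun i => (w i : ℕ))

/-- A permutation is fully commutative iff it avoids the pattern 321. -/
def FullyCommutative {n : ℕ} (w : Equiv.Perm (Fin n)) : Prop :=
  ¬ ∃ i j k : Fin n, i < j ∧ j < k ∧ w k < w j ∧ w j < w i

/-- A permutation is boolean iff it avoids the patterns 321 and 3412. -/
def BooleanPerm {n : ℕ} (w : Equiv.Perm (Fin n)) : Prop :=
  FullyCommutative w ∧
    ¬ ∃ i j k l : Fin n, i < j ∧ j < k ∧ k < l ∧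
        w k < w l ∧ w l < w i ∧ w i < w j

/-- The Coxeter length of a permutation: its number of inversions. -/
def invCount {n : ℕ} (w : Equiv.Perm (Fin n)) : ℕ :=
  (Finset.univ.filter fun p : Fin n × Fin n => p.1 < p.2 ∧ w p.2 < w p.1).card

/-- The support of `w`: the set of (0-indexed) indices `i` such that the simple
transposition `s_i` appears in some (equivalently, every) reduced word of `w`;
equivalently, `{w(0),…,w(i)} ≠ {0,…,i}`, i.e. `max {w(j) : j ≤ i} > i`. -/
def Supp {n : ℕ} (w : Equiv.Perm (Fin n)) : Set ℕ :=
  {i | ∃ j : Fin n, (j : ℕ) ≤ i ∧ i < (w j : ℕ)}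

/-- The simple transposition `s_i`, swapping positions `i` and `i+1` (0-indexed). -/
def simpleTr {n : ℕ} (i : ℕ) (h : i + 1 < n) : Equiv.Perm (Fin n) :=
  Equiv.swap ⟨i, by omega⟩ ⟨i + 1, h⟩

/-- Schensted row insertion of a value into a tableau (a list of rows). -/
def rowInsert : List (List ℕ) → ℕ → List (List ℕ)
  | [], x => [[x]]
  | r :: rest, x =>
    match r.find? (fun y => decide (x < y)) with
    | none => (r ++ [x]) :: rest
    | some y => (r.map fun z => if z = y then x else z) :: rowInsert rest y

/-- RSK insertion tableau of a list. -/
def RSKList (l : List ℕ) : List (List ℕ) := l.foldl rowInsert []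

/-- RSK insertion tableau `P(w)` of a permutation. -/
def RSKP {n : ℕ} (w : Equiv.Perm (Fin n)) : List (List ℕ) := RSKList (oneLine w)

/-- RSK recording tableau `Q(w) = P(w⁻¹)`. -/
def RSKQ {n : ℕ} (w : Equiv.Perm (Fin n)) : List (List ℕ) := RSKP w⁻¹

/-- The set of entries in the first row of a tableau. -/
def Row1 (T : List (List ℕ)) : Finset ℕ := (T.getD 0 []).toFinset

/-- The set of entries in the second row of a tableau. -/
def Row2 (T : List (List ℕ)) : Finset ℕ := (T.getD 1 []).toFinset

/-- `BumpsAt l k z` : during the RSK insertion of the list `l`, the insertion of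
the `(k+1)`-st letter of `l` bumps the value `z` from the first row to the
second row (`z` is the smallest first-row entry larger than the inserted letter). -/
def BumpsAt (l : List ℕ) (k : ℕ) (z : ℕ) : Prop :=
  k < l.length ∧
    ((RSKList (l.take k)).getD 0 []).find? (fun y => decide (l.getD k 0 < y)) = some z

/-- `Bumps l b z` : during the RSK insertion of `l`, the value `b` bumps the
value `z` from the first row to the second row. -/
def Bumps (l : List ℕ) (b z : ℕ) : Prop :=
  ∃ k, l.getD k 0 = b ∧ BumpsAt l k z

/-- A finite set of naturals is crowded if some integer interval `[y, y+2x]`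
(with `x > 0`) contains more than `x+1` of its elements. -/
def CrowdedSet (L : Finset ℕ) : Prop :=
  ∃ x y : ℤ, 0 < x ∧
    x + 1 < ((L.filter fun a : ℕ => y ≤ (a : ℤ) ∧ (a : ℤ) ≤ y + 2 * x).card : ℤ)

/-- A fully commutative permutation is crowded if the second row of its RSK
insertion tableau is a crowded set. -/
def CrowdedPerm {n : ℕ} (w : Equiv.Perm (Fin n)) : Prop :=
  CrowdedSet (Row2 (RSKP w))

/-- Covering relation of the right weak order. -/
def RWCovers {n : ℕ} (u v : Equiv.Perm (Fin n)) : Prop :=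
  ∃ i, ∃ h : i + 1 < n, v = u * simpleTr i h ∧ invCount v = invCount u + 1

/-- The right weak order on `S_n`. -/
def RightWeakLE {n : ℕ} : Equiv.Perm (Fin n) → Equiv.Perm (Fin n) → Prop :=
  Relation.ReflTransGen RWCovers

/-- Covering relation of the left weak order. -/
def LWCovers {n : ℕ} (u v : Equiv.Perm (Fin n)) : Prop :=
  ∃ i, ∃ h : i + 1 < n, v = simpleTr i h * u ∧ invCount v = invCount u + 1

/-- The left weak order on `S_n`. -/
def LeftWeakLE {n : ℕ} : Equiv.Perm (Fin n) → Equiv.Perm (Fin n) → Prop :=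
  Relation.ReflTransGen LWCovers

/-- A minimal crowded permutation: a crowded fully commutative permutation all of
whose strict predecessors (among fully commutative permutations) in the right
weak order are uncrowded. -/
def MinimalCrowded {n : ℕ} (w : Equiv.Perm (Fin n)) : Prop :=
  FullyCommutative w ∧ CrowdedPerm w ∧
    ∀ v : Equiv.Perm (Fin n), FullyCommutative v → RightWeakLE v w → v ≠ w →
      ¬ CrowdedPerm v

/-- `l` is an increasing subsequence of the one-line notation of `w`. -/
def IncreasingSubseq {n : ℕ} (w : Equiv.Perm (Fin n)) (l : List ℕ) : Prop :=
  l.Sublist (oneLine w) ∧ l.Pairwise (· < ·)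

/-- The length of a longest increasing subsequence of `w`. -/
noncomputable def lisLen {n : ℕ} (w : Equiv.Perm (Fin n)) : ℕ :=
  sSup {k | ∃ l : List ℕ, IncreasingSubseq w l ∧ l.length = k}

/-- A consecutive occurrence of the pattern 415263 starting at (0-indexed) position `i`. -/
def Consec415263 {n : ℕ} (w : Equiv.Perm (Fin n)) (i : ℕ) : Prop :=
  i + 5 < n ∧
    entry w (i + 1) < entry w (i + 3) ∧ entry w (i + 3) < entry w (i + 5) ∧
    entry w (i + 5) < entry w i ∧ entry w i < entry w (i + 2) ∧
    entry w (i + 2) < entry w (i + 4)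

/-- A consecutive occurrence of the pattern 315264 starting at (0-indexed) position `i`. -/
def Consec315264 {n : ℕ} (w : Equiv.Perm (Fin n)) (i : ℕ) : Prop :=
  i + 5 < n ∧
    entry w (i + 1) < entry w (i + 3) ∧ entry w (i + 3) < entry w i ∧
    entry w i < entry w (i + 5) ∧ entry w (i + 5) < entry w (i + 2) ∧
    entry w (i + 2) < entry w (i + 4)

/-- An occurrence (not necessarily consecutive) of the pattern 415263 in `w`,
at positions `p 0 < p 1 < ⋯ < p 5`. -/
def Occ415263 {n : ℕ} (w : Equiv.Perm (Fin n)) (p : Fin 6 → Fin n) : Prop :=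
  StrictMono p ∧
    w (p 1) < w (p 3) ∧ w (p 3) < w (p 5) ∧ w (p 5) < w (p 0) ∧
    w (p 0) < w (p 2) ∧ w (p 2) < w (p 4)
-- List helper lemmas
namespace CW

lemma getD_append_left {l l' : List ℕ} {j : ℕ} (hj : j < l.length) :
    (l ++ l').getD j 0 = l.getD j 0 := by
  rw [List.getD_eq_getElem?_getD, List.getD_eq_getElem?_getD,
    List.getElem?_append_left hj]

lemma getD_append_right {l l' : List ℕ} {j : ℕ} (hj : l.length ≤ j) :
    (l ++ l').getD j 0 = l'.getD (j - l.length) 0 := by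
  rw [List.getD_eq_getElem?_getD, List.getD_eq_getElem?_getD,
    List.getElem?_append_right hj]

lemma getD_mem {l : List ℕ} {j : ℕ} (hj : j < l.length) : l.getD j 0 ∈ l := by
  rw [List.getD_eq_getElem l 0 hj]; exact List.getElem_mem _

lemma mem_getD {l : List ℕ} {t : ℕ} (ht : t ∈ l) :
    ∃ j, j < l.length ∧ l.getD j 0 = t := by
  obtain ⟨j, hj, he⟩ := List.mem_iff_getElem.1 ht
  exact ⟨j, hj, by rw [List.getD_eq_getElem l 0 hj, he]⟩

/-- strictly sorted lists with the same members are equal -/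
lemma sorted_ext {l l' : List ℕ} (h : l.Pairwise (· < ·)) (h' : l'.Pairwise (· < ·))
    (hm : ∀ t, t ∈ l ↔ t ∈ l') : l = l' := by
  apply List.Perm.eq_of_pairwise' h h'
  apply List.perm_of_nodup_nodup_toFinset_eq h.nodup h'.nodup
  ext t; simp [hm t]

lemma sorted_append_singleton {l : List ℕ} {x : ℕ} (h : l.Pairwise (· < ·))
    (hx : ∀ y ∈ l, y < x) : (l ++ [x]).Pairwise (· < ·) := by
  rw [List.pairwise_append]
  exact ⟨h, List.pairwise_singleton _ x, by simpa using hx⟩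

/-- find? on a sorted list: characterization of `none` -/
lemma find?_none {l : List ℕ} {x : ℕ} (h : ∀ y ∈ l, ¬ x < y) :
    l.find? (fun y => decide (x < y)) = none := by
  rw [List.find?_eq_none]; intro y hy; simpa using h y hy

/-- find? on a sorted list finds the minimum element above x -/
lemma find?_min {l : List ℕ} (hs : l.Pairwise (· < ·)) {x z : ℕ}
    (hz : z ∈ l) (hxz : x < z) (hmin : ∀ y ∈ l, x < y → z ≤ y) :
    l.find? (fun y => decide (x < y)) = some z := by
  induction l with
  | nil => simp at hz
  | cons w t ih =>
    rcases List.mem_cons.1 hz with rfl | hz'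
    · rw [List.find?_cons_of_pos (by simpa using hxz)]
    · have hwz : w < z := (List.pairwise_cons.1 hs).1 z hz'
      by_cases hxw : x < w
      · exact absurd (hmin w (by simp) hxw) (by omega)
      · rw [List.find?_cons_of_neg (by simpa using hxw)]
        exact ih (List.pairwise_cons.1 hs).2 hz' (fun y hy h2 => hmin y (by simp [hy]) h2)

lemma exists_min_above {l : List ℕ} (hs : l.Pairwise (· < ·)) {x : ℕ}
    (h : ∃ y ∈ l, x < y) : ∃ z ∈ l, x < z ∧ ∀ y ∈ l, x < y → z ≤ y := by
  induction l with
  | nil => simp at h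
  | cons w t ih =>
    by_cases hxw : x < w
    · refine ⟨w, by simp, hxw, ?_⟩
      intro y hy _
      rcases List.mem_cons.1 hy with rfl | hy'
      · exact le_rfl
      · exact le_of_lt ((List.pairwise_cons.1 hs).1 y hy')
    · obtain ⟨y, hy, hxy⟩ := h
      rcases List.mem_cons.1 hy with rfl | hy'
      · exact absurd hxy hxw
      · obtain ⟨z, hz, h1, h2⟩ := ih (List.pairwise_cons.1 hs).2 ⟨y, hy', hxy⟩
        refine ⟨z, by simp [hz], h1, ?_⟩
        intro u hu hxu
        rcases List.mem_cons.1 hu with rfl | hu'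
        · exact absurd hxu hxw
        · exact h2 u hu' hxu

/-- membership in the substituted list -/
lemma mem_subst {l : List ℕ} {x z t : ℕ} (hnd : l.Nodup) (hz : z ∈ l) (hxl : x ∉ l) :
    (t ∈ l.map (fun s => if s = z then x else s)) ↔ ((t ∈ l ∧ t ≠ z) ∨ t = x) := by
  simp only [List.mem_map]
  constructor
  · rintro ⟨s, hs, he⟩
    by_cases hsz : s = z
    · simp [hsz] at he; right; omega
    · simp [hsz] at he; subst he; left; exact ⟨hs, hsz⟩
  · rintro (⟨ht, hne⟩ | rfl)
    · exact ⟨t, ht, by simp [hne]⟩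
    · exact ⟨z, hz, by simp⟩

lemma sorted_subst {l : List ℕ} (hs : l.Pairwise (· < ·)) {x z : ℕ}
    (hz : z ∈ l) (hxz : x < z) (hmin : ∀ y ∈ l, x < y → z ≤ y) (hxl : x ∉ l) :
    (l.map (fun s => if s = z then x else s)).Pairwise (· < ·) := by
  induction l with
  | nil => simp
  | cons w t ih =>
    have hsc := List.pairwise_cons.1 hs
    by_cases hwz : w = z
    · subst hwz
      have htt : t.map (fun s => if s = w then x else s) = t := by
        rw [List.map_congr_left (g := id), List.map_id]
        intro s hs'
        have : w < s := hsc.1 s hs'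
        simp [show s ≠ w by omega]
      simp only [List.map_cons, if_pos rfl, htt, List.pairwise_cons]
      exact ⟨fun b hb => lt_trans hxz (hsc.1 b hb), hsc.2⟩
    · have hz' : z ∈ t := by
        rcases List.mem_cons.1 hz with h1 | h1
        · exact absurd h1.symm hwz
        · exact h1
      have hwz2 : w < z := hsc.1 z hz'
      have hwx : w < x := by
        by_cases h1 : x < w
        · exact absurd (hmin w (by simp) h1) (by omega)
        · have : w ≠ x := fun hc => hxl (by simp [← hc])
          omega
      have hxt : x ∉ t := fun hc => hxl (by simp [hc])
      simp only [List.map_cons, if_neg hwz, List.pairwise_cons]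
      refine ⟨?_, ih hsc.2 hz' (fun y hy h2 => hmin y (by simp [hy]) h2) hxt⟩
      intro b hb
      rcases (mem_subst (List.Pairwise.nodup hsc.2) hz' hxt).1 hb with ⟨hb1, _⟩ | rfl
      · exact hsc.1 b hb1
      · exact hwx

end CW
namespace CW

/-- 321-pattern-avoidance for a list -/
def FCL (l : List ℕ) : Prop :=
  ∀ j k m : ℕ, j < k → k < m → m < l.length →
    ¬ (l.getD m 0 < l.getD k 0 ∧ l.getD k 0 < l.getD j 0)

lemma fcl_prefix {l t : List ℕ} (h : FCL (l ++ t)) : FCL l := by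
  intro j k m hjk hkm hm hp
  have hm' : m < (l ++ t).length := by simp; omega
  refine h j k m hjk hkm hm' ?_
  rw [getD_append_left hm, getD_append_left (by omega), getD_append_left (by omega)]
  exact hp

def mkT (r1 r2 : List ℕ) : List (List ℕ) :=
  if r1 = [] then [] else if r2 = [] then [r1] else [r1, r2]

structure RunInv (arr r1 r2 : List ℕ) : Prop where
  tab : RSKList arr = mkT r1 r2
  s1 : r1.Pairwise (· < ·)
  s2 : r2.Pairwise (· < ·)
  hr : r1 = [] → r2 = []
  mem : ∀ t, t ∈ arr ↔ (t ∈ r1 ∨ t ∈ r2)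
  dis : ∀ t, t ∈ r1 → t ∈ r2 → False
  iv : ∀ u ∈ r2, ∀ z ∈ r1, z < u → ∃ j k : ℕ, j < k ∧ k < arr.length ∧
        arr.getD j 0 = u ∧ z ≤ arr.getD k 0 ∧ arr.getD k 0 < u

lemma RSKList_append_singleton (l : List ℕ) (x : ℕ) :
    RSKList (l ++ [x]) = rowInsert (RSKList l) x := by
  simp [RSKList, List.foldl_append]

lemma RunInv.nil : RunInv [] [] [] := by
  refine ⟨by simp [RSKList, mkT], by simp, by simp, fun _ => rfl, by simp, by simp, by simp⟩

/-- p-values are below-a etc: index of a member after append -/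
lemma index_in_append {arr : List ℕ} {u : ℕ} (hu : u ∈ arr) (x : ℕ) :
    ∃ j, j < arr.length ∧ (arr ++ [x]).getD j 0 = u := by
  obtain ⟨j, hj, he⟩ := mem_getD hu
  exact ⟨j, hj, by rw [getD_append_left hj]; exact he⟩

lemma getD_append_last (arr : List ℕ) (x : ℕ) :
    (arr ++ [x]).getD arr.length 0 = x := by
  rw [getD_append_right le_rfl]; simp

/-- iv transport for new pairs with witness x at the end -/
lemma iv_new {arr : List ℕ} {u z x : ℕ} (hu : u ∈ arr) (hzx : z ≤ x) (hxu : x < u) :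
    ∃ j k : ℕ, j < k ∧ k < (arr ++ [x]).length ∧ (arr ++ [x]).getD j 0 = u ∧
      z ≤ (arr ++ [x]).getD k 0 ∧ (arr ++ [x]).getD k 0 < u := by
  obtain ⟨j, hj, he⟩ := index_in_append hu x
  exact ⟨j, arr.length, hj, by simp, he, by rw [getD_append_last]; exact hzx,
    by rw [getD_append_last]; exact hxu⟩

/-- iv transport for old pairs -/
lemma iv_old {arr : List ℕ} {u z x : ℕ}
    (h : ∃ j k : ℕ, j < k ∧ k < arr.length ∧ arr.getD j 0 = u ∧
      z ≤ arr.getD k 0 ∧ arr.getD k 0 < u) :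
    ∃ j k : ℕ, j < k ∧ k < (arr ++ [x]).length ∧ (arr ++ [x]).getD j 0 = u ∧
      z ≤ (arr ++ [x]).getD k 0 ∧ (arr ++ [x]).getD k 0 < u := by
  obtain ⟨j, k, h1, h2, h3, h4, h5⟩ := h
  refine ⟨j, k, h1, by simp; omega, ?_, ?_, ?_⟩ <;>
    rw [getD_append_left (by omega)] <;> first | exact h3 | exact h4 | exact h5

/-- Step (append case). -/
lemma step_append {arr r1 r2 : List ℕ} {x : ℕ} (R : RunInv arr r1 r2)
    (hxarr : x ∉ arr) (hlt : ∀ y ∈ r1, y < x) :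
    rowInsert (mkT r1 r2) x = mkT (r1 ++ [x]) r2 ∧ RunInv (arr ++ [x]) (r1 ++ [x]) r2 := by
  have hxr1 : x ∉ r1 := fun hc => hxarr ((R.mem x).2 (Or.inl hc))
  have hxr2 : x ∉ r2 := fun hc => hxarr ((R.mem x).2 (Or.inr hc))
  have hrow : rowInsert (mkT r1 r2) x = mkT (r1 ++ [x]) r2 := by
    by_cases h1 : r1 = []
    · have h2 := R.hr h1
      subst h1 h2
      simp [mkT, rowInsert]
    · by_cases h2 : r2 = []
      · subst h2
        have hf : r1.find? (fun y => decide (x < y)) = none :=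
          find?_none (fun y hy => by have := hlt y hy; omega)
        simp only [mkT, if_neg h1, if_pos rfl, if_neg (by simp : ¬ r1 ++ [x] = [])]
        simp [rowInsert, hf]
      · have hf : r1.find? (fun y => decide (x < y)) = none :=
          find?_none (fun y hy => by have := hlt y hy; omega)
        simp only [mkT, if_neg h1, if_neg h2, if_neg (by simp : ¬ r1 ++ [x] = [])]
        simp [rowInsert, hf]
  refine ⟨hrow, ?_, sorted_append_singleton R.s1 hlt, R.s2, by simp, ?_, ?_, ?_⟩
  · rw [RSKList_append_singleton, R.tab, hrow]
  · intro t; simp only [List.mem_append, List.mem_singleton]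
    rw [R.mem t]; tauto
  · intro t ht1 ht2
    rcases List.mem_append.1 ht1 with h1 | h1
    · exact R.dis t h1 ht2
    · simp at h1; subst h1; exact hxr2 ht2
  · intro u hu z hz hzu
    rcases List.mem_append.1 hz with h1 | h1
    · exact iv_old (R.iv u hu z h1 hzu)
    · simp at h1; subst h1
      exact iv_new ((R.mem u).2 (Or.inr hu)) le_rfl hzu

/-- Step (bump case). -/
lemma step_bump {arr r1 r2 : List ℕ} {x z : ℕ} (R : RunInv arr r1 r2)
    (hxarr : x ∉ arr) (hz : z ∈ r1) (hxz : x < z)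
    (hmin : ∀ y ∈ r1, x < y → z ≤ y)
    (hfc : FCL (arr ++ [x])) :
    rowInsert (mkT r1 r2) x =
      mkT (r1.map (fun s => if s = z then x else s)) (r2 ++ [z]) ∧
    RunInv (arr ++ [x]) (r1.map (fun s => if s = z then x else s)) (r2 ++ [z]) := by
  have hxr1 : x ∉ r1 := fun hc => hxarr ((R.mem x).2 (Or.inl hc))
  have hxr2 : x ∉ r2 := fun hc => hxarr ((R.mem x).2 (Or.inr hc))
  have hzarr : z ∈ arr := (R.mem z).2 (Or.inl hz)
  have hr1ne : r1 ≠ [] := fun hc => by subst hc; simp at hz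
  -- all elements of r2 are < z
  have hall : ∀ u ∈ r2, u < z := by
    intro u hu
    by_contra hc
    have huz : z < u := by
      have : z ≠ u := fun hc2 => R.dis z hz (hc2 ▸ hu)
      omega
    obtain ⟨j, k, h1, h2, h3, h4, h5⟩ := R.iv u hu z hz huz
    refine hfc j k arr.length h1 h2 (by simp) ?_
    rw [getD_append_last, getD_append_left h2, getD_append_left (by omega), h3]
    omega
  have hfind : r1.find? (fun y => decide (x < y)) = some z := find?_min R.s1 hz hxz hmin
  have hmapne : r1.map (fun s => if s = z then x else s) ≠ [] := by
    simpa using hr1ne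
  have hrow : rowInsert (mkT r1 r2) x =
      mkT (r1.map (fun s => if s = z then x else s)) (r2 ++ [z]) := by
    by_cases h2 : r2 = []
    · subst h2
      simp only [mkT, if_neg hr1ne, if_pos rfl, if_neg hmapne,
        if_neg (by simp : ¬ ([] : List ℕ) ++ [z] = [])]
      simp [rowInsert, hfind]
    · simp only [mkT, if_neg hr1ne, if_neg h2, if_neg hmapne,
        if_neg (by simp : ¬ r2 ++ [z] = [])]
      have hf2 : r2.find? (fun y => decide (z < y)) = none :=
        find?_none (fun y hy => by have := hall y hy; omega)
      simp [rowInsert, hfind, hf2]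
  have hmemmap : ∀ t, (t ∈ r1.map (fun s => if s = z then x else s)) ↔
      ((t ∈ r1 ∧ t ≠ z) ∨ t = x) := fun t => mem_subst R.s1.nodup hz hxr1
  refine ⟨hrow, ?_, sorted_subst R.s1 hz hxz hmin hxr1,
    sorted_append_singleton R.s2 hall, fun hc => absurd hc hmapne, ?_, ?_, ?_⟩
  · rw [RSKList_append_singleton, R.tab, hrow]
  · intro t
    rw [List.mem_append, List.mem_append, hmemmap t, R.mem t]
    simp only [List.mem_singleton]
    by_cases htz : t = z
    · subst htz
      simp only [hz, true_and, ne_eq, not_true_eq_false, and_false, false_or]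
      tauto
    · tauto
  · intro t ht1 ht2
    rcases (hmemmap t).1 ht1 with ⟨h1, h2⟩ | rfl
    · rcases List.mem_append.1 ht2 with h3 | h3
      · exact R.dis t h1 h3
      · simp at h3; exact h2 h3
    · rcases List.mem_append.1 ht2 with h3 | h3
      · exact hxr2 h3
      · simp at h3; omega
  · intro u hu t ht htu
    rcases (hmemmap t).1 ht with ⟨h1, h2⟩ | rfl
    · -- t old element of r1
      rcases List.mem_append.1 hu with h3 | h3
      · exact iv_old (R.iv u h3 t h1 htu)
      · -- u = z, t ∈ r1, t < z, t ≠ z : then t ≤ x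
        simp at h3; subst h3
        have htx : t ≤ x := by
          by_contra hc
          have := hmin t h1 (by omega)
          omega
        exact iv_new hzarr htx hxz
    · -- t = x
      rcases List.mem_append.1 hu with h3 | h3
      · exact iv_new ((R.mem u).2 (Or.inr h3)) le_rfl htu
      · simp at h3; subst h3
        exact iv_new hzarr le_rfl hxz

/-- Build the invariant by running RSK over a whole word. -/
lemma buildRun : ∀ (u : List ℕ), FCL u → u.Nodup → ∃ r1 r2, RunInv u r1 r2 := by
  intro u
  induction u using List.reverseRecOn with
  | nil => exact fun _ _ => ⟨[], [], RunInv.nil⟩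
  | append_singleton u x ih =>
    intro hfc hnd
    obtain ⟨r1, r2, R⟩ := ih (fcl_prefix hfc) (List.Nodup.of_append_left (by simpa using hnd))
    have hxarr : x ∉ u := by
      have := List.disjoint_of_nodup_append (by simpa using hnd)
      intro hc; exact this hc (by simp)
    by_cases hex : ∃ y ∈ r1, x < y
    · obtain ⟨z, hz, hxz, hmin⟩ := exists_min_above R.s1 hex
      exact ⟨_, _, (step_bump R hxarr hz hxz hmin hfc).2⟩
    · push_neg at hex
      have hlt : ∀ y ∈ r1, y < x := by
        intro y hy
        have h1 := hex y hy
        have : y ≠ x := fun hc => hxarr ((R.mem x).2 (Or.inl (hc ▸ hy)))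
        omega
      exact ⟨_, _, (step_append R hxarr hlt).2⟩

end CW
namespace CW
variable {n : ℕ}

lemma oneLine_length (w : Equiv.Perm (Fin n)) : (oneLine w).length = n := by
  simp [oneLine]

lemma oneLine_getD (w : Equiv.Perm (Fin n)) {j : ℕ} (hj : j < n) :
    (oneLine w).getD j 0 = (w ⟨j, hj⟩ : ℕ) := by
  rw [oneLine, List.getD_eq_getElem _ 0 (by simpa using hj)]
  simp

lemma oneLine_mem (w : Equiv.Perm (Fin n)) {t : ℕ} : t ∈ oneLine w ↔ t < n := by
  constructor
  · intro ht
    simp only [oneLine, List.mem_ofFn] at ht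
    obtain ⟨j, hj⟩ := ht
    exact hj ▸ (w j).isLt
  · intro ht
    simp only [oneLine, List.mem_ofFn]
    exact ⟨w.symm ⟨t, ht⟩, by simp⟩

lemma oneLine_nodup (w : Equiv.Perm (Fin n)) : (oneLine w).Nodup := by
  rw [oneLine]
  apply List.nodup_ofFn.2
  intro j k he
  have : w j = w k := Fin.ext he
  exact w.injective this

lemma fcl_oneLine {w : Equiv.Perm (Fin n)} (h : FullyCommutative w) : FCL (oneLine w) := by
  intro j k m hjk hkm hm hp
  rw [oneLine_length] at hm
  obtain ⟨h1, h2⟩ := hp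
  have hj : j < n := by omega
  have hk : k < n := by omega
  rw [oneLine_getD w hj] at h2
  rw [oneLine_getD w hk] at h1 h2
  rw [oneLine_getD w hm] at h1
  exact h ⟨⟨j, hj⟩, ⟨k, hk⟩, ⟨m, hm⟩, Fin.mk_lt_mk.2 hjk, Fin.mk_lt_mk.2 hkm, h1, h2⟩

lemma oneLine_decomp (w : Equiv.Perm (Fin n)) {i : ℕ} (h : i + 1 < n) :
    oneLine w = (oneLine w).take i ++ (w ⟨i, by omega⟩ : ℕ) :: (w ⟨i+1, h⟩ : ℕ) ::
      (oneLine w).drop (i+2) := by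
  have e1 : (oneLine w).drop i = (oneLine w)[i]'(by rw [oneLine_length]; omega) ::
      (oneLine w).drop (i+1) := List.drop_eq_getElem_cons (by rw [oneLine_length]; omega)
  have e2 : (oneLine w).drop (i+1) = (oneLine w)[i+1]'(by rw [oneLine_length]; omega) ::
      (oneLine w).drop (i+2) := List.drop_eq_getElem_cons (by rw [oneLine_length]; omega)
  have g1 : (oneLine w)[i]'(by rw [oneLine_length]; omega) = (w ⟨i, by omega⟩ : ℕ) := by
    simp [oneLine]
  have g2 : (oneLine w)[i+1]'(by rw [oneLine_length]; omega) = (w ⟨i+1, h⟩ : ℕ) := by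
    simp [oneLine]
  conv_lhs => rw [← List.take_append_drop i (oneLine w), e1, e2, g1, g2]

/-- swap facts -/
lemma perm_swap_vals (v : Equiv.Perm (Fin n)) {i : ℕ} (h : i + 1 < n) :
    ((v * simpleTr i h) ⟨i, by omega⟩ = v ⟨i+1, h⟩) ∧
    ((v * simpleTr i h) ⟨i+1, h⟩ = v ⟨i, by omega⟩) ∧
    (∀ j : Fin n, (j : ℕ) ≠ i → (j : ℕ) ≠ i+1 → (v * simpleTr i h) j = v j) := by
  refine ⟨?_, ?_, ?_⟩
  · rw [Equiv.Perm.mul_apply, simpleTr, Equiv.swap_apply_left]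
  · rw [Equiv.Perm.mul_apply, simpleTr, Equiv.swap_apply_right]
  · intro j h1 h2
    rw [Equiv.Perm.mul_apply, simpleTr, Equiv.swap_apply_of_ne_of_ne]
    · exact fun hc => h1 (by rw [hc])
    · exact fun hc => h2 (by rw [hc])

lemma oneLine_decomp_v (v : Equiv.Perm (Fin n)) {i : ℕ} (h : i + 1 < n) :
    oneLine v = (oneLine (v * simpleTr i h)).take i ++
      (v ⟨i, by omega⟩ : ℕ) :: (v ⟨i+1, h⟩ : ℕ) ::
      (oneLine (v * simpleTr i h)).drop (i+2) := by
  set w := v * simpleTr i h with hw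
  have hp := perm_swap_vals v h
  have h1 : (oneLine w).take i = (oneLine v).take i := by
    apply List.ext_getElem
    · simp [oneLine_length]
    · intro j hj1 hj2
      simp only [List.getElem_take]
      have hjn : j < n := by
        simp [oneLine_length] at hj1; omega
      simp only [oneLine, List.getElem_ofFn]
      have hji : j < i := by simp [oneLine_length] at hj1; omega
      rw [hp.2.2 _ (by simp; omega) (by simp; omega)]
  have h2 : (oneLine w).drop (i+2) = (oneLine v).drop (i+2) := by
    apply List.ext_getElem
    · simp [oneLine_length]
    · intro j hj1 hj2
      simp only [List.getElem_drop]
      simp only [oneLine, List.getElem_ofFn]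
      rw [hp.2.2 _ (by simp; omega) (by simp; omega)]
  rw [h1, h2]
  exact oneLine_decomp v h

end CW
namespace CW
variable {n : ℕ}

lemma swap_val {i : ℕ} (h : i + 1 < n) (x : Fin n) :
    ((Equiv.swap (⟨i, by omega⟩ : Fin n) ⟨i+1, h⟩) x : ℕ) =
      if (x : ℕ) = i then i+1 else if (x : ℕ) = i+1 then i else (x : ℕ) := by
  set I : Fin n := ⟨i, by omega⟩
  set J : Fin n := ⟨i+1, h⟩
  rcases eq_or_ne x I with rfl | hxI
  · rw [Equiv.swap_apply_left]
    simp [I, J]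
  · rcases eq_or_ne x J with rfl | hxJ
    · rw [Equiv.swap_apply_right]
      simp [I, J]
    · rw [Equiv.swap_apply_of_ne_of_ne hxI hxJ]
      have h1 : (x : ℕ) ≠ i := fun hc => hxI (Fin.ext hc)
      have h2 : (x : ℕ) ≠ i + 1 := fun hc => hxJ (Fin.ext hc)
      simp [h1, h2]

lemma swap_pair_mono {i : ℕ} (h : i + 1 < n) {p q : Fin n}
    (hpq : p < q) (hne : ¬ ((p : ℕ) = i ∧ (q : ℕ) = i + 1)) :
    Equiv.swap (⟨i, by omega⟩ : Fin n) ⟨i+1, h⟩ p <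
    Equiv.swap (⟨i, by omega⟩ : Fin n) ⟨i+1, h⟩ q := by
  have hpq' : (p : ℕ) < (q : ℕ) := hpq
  rw [Fin.lt_def, swap_val h p, swap_val h q]
  have hq : (q : ℕ) < n := q.isLt
  split_ifs <;> omega

lemma invCount_mul_swap (u : Equiv.Perm (Fin n)) {i : ℕ} (h : i + 1 < n)
    (hlt : (u ⟨i, by omega⟩ : ℕ) < (u ⟨i+1, h⟩ : ℕ)) :
    invCount (u * simpleTr i h) = invCount u + 1 := by
  classical
  set I : Fin n := ⟨i, by omega⟩
  set J : Fin n := ⟨i+1, h⟩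
  set σ : Equiv.Perm (Fin n) := Equiv.swap I J with hσ
  have happ : ∀ p : Fin n, (u * simpleTr i h) p = u (σ p) := fun p => rfl
  set S := Finset.univ.filter
    (fun p : Fin n × Fin n => p.1 < p.2 ∧ (u * simpleTr i h) p.2 < (u * simpleTr i h) p.1)
    with hS
  set T := Finset.univ.filter
    (fun p : Fin n × Fin n => p.1 < p.2 ∧ u p.2 < u p.1) with hT
  have key : S = insert (I, J) (T.image (fun p : Fin n × Fin n => (σ p.1, σ p.2))) := by
    ext q
    simp only [hS, hT, Finset.mem_filter, Finset.mem_univ, true_and, Finset.mem_insert,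
      Finset.mem_image]
    constructor
    · rintro ⟨hq1, hq2⟩
      by_cases hqIJ : q.1 = I ∧ q.2 = J
      · left; exact Prod.ext hqIJ.1 hqIJ.2
      · right
        refine ⟨(σ q.1, σ q.2), ⟨?_, ?_⟩, ?_⟩
        · exact swap_pair_mono h hq1 (fun hc => hqIJ ⟨Fin.ext hc.1, Fin.ext hc.2⟩)
        · simpa [happ, σ, Equiv.swap_apply_self] using hq2
        · simp [σ, Equiv.swap_apply_self]
    · rintro (rfl | ⟨p, ⟨hp1, hp2⟩, rfl⟩)
      · refine ⟨by rw [Fin.lt_def]; simp [I, J], ?_⟩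
        rw [happ, happ]
        simp only [σ, Equiv.swap_apply_left, Equiv.swap_apply_right]
        exact hlt
      · constructor
        · apply swap_pair_mono h hp1
          rintro ⟨hc1, hc2⟩
          have hp1I : p.1 = I := Fin.ext hc1
          have hp2J : p.2 = J := Fin.ext hc2
          rw [hp1I, hp2J] at hp2
          exact absurd hlt (by omega)
        · rw [happ, happ]
          simpa [σ, Equiv.swap_apply_self] using hp2
  have hnotmem : (I, J) ∉ T.image (fun p : Fin n × Fin n => (σ p.1, σ p.2)) := by
    simp only [Finset.mem_image, hT, Finset.mem_filter, Finset.mem_univ, true_and]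
    rintro ⟨p, ⟨hp1, _⟩, hpe⟩
    have h1 : σ p.1 = I := congrArg Prod.fst hpe
    have h2 : σ p.2 = J := congrArg Prod.snd hpe
    have e1 : p.1 = J := by
      have := congrArg σ h1
      simpa [σ, Equiv.swap_apply_self, Equiv.swap_apply_left] using this
    have e2 : p.2 = I := by
      have := congrArg σ h2
      simpa [σ, Equiv.swap_apply_self, Equiv.swap_apply_right] using this
    rw [e1, e2] at hp1
    rw [Fin.lt_def] at hp1
    simp [I, J] at hp1
  have hinj : Function.Injective (fun p : Fin n × Fin n => (σ p.1, σ p.2)) := by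
    intro p q hpq
    have h1 : σ p.1 = σ q.1 := congrArg Prod.fst hpq
    have h2 : σ p.2 = σ q.2 := congrArg Prod.snd hpq
    exact Prod.ext (σ.injective h1) (σ.injective h2)
  have : S.card = T.card + 1 := by
    rw [key, Finset.card_insert_of_notMem hnotmem, Finset.card_image_of_injective _ hinj]
  simpa [invCount, hS, hT] using this

lemma b_lt_a {v w : Equiv.Perm (Fin n)} {i : ℕ} (h : i + 1 < n)
    (hwv : w = v * simpleTr i h) (hl : invCount w = invCount v + 1) :
    (v ⟨i, by omega⟩ : ℕ) < (v ⟨i+1, h⟩ : ℕ) := by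
  by_contra hc
  have hne : (v ⟨i, by omega⟩ : ℕ) ≠ (v ⟨i+1, h⟩ : ℕ) := by
    intro he
    have : (⟨i, by omega⟩ : Fin n) = ⟨i+1, h⟩ := v.injective (Fin.ext he)
    simp [Fin.ext_iff] at this
  have hlt : (v ⟨i+1, h⟩ : ℕ) < (v ⟨i, by omega⟩ : ℕ) := by omega
  -- w ⟨i⟩ = v ⟨i+1⟩ < v ⟨i⟩ = w ⟨i+1⟩, and v = w * simpleTr i h
  have hp := perm_swap_vals v h
  have hvw : v = w * simpleTr i h := by
    rw [hwv, mul_assoc]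
    have : simpleTr (n := n) i h * simpleTr i h = 1 := by
      simp [simpleTr]
    rw [this, mul_one]
  have hwi : (w ⟨i, by omega⟩ : ℕ) < (w ⟨i+1, h⟩ : ℕ) := by
    rw [hwv]
    rw [hp.1, hp.2.1]
    exact hlt
  have := invCount_mul_swap w h hwi
  rw [← hvw] at this
  omega

end CW
namespace CW

def Nfun (m : ℕ) (r2 : List ℕ) (δ : ℕ) : ℕ :=
  ((r2.toFinset).filter (fun t => m ≤ t ∧ t ≤ δ)).card

def Afun (f : List ℕ) (δ : ℕ) : ℕ :=
  ((f.toFinset).filter (fun t => t < δ)).card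

lemma toFinset_append_singleton (l : List ℕ) (b : ℕ) :
    (l ++ [b]).toFinset = insert b l.toFinset := by
  ext t; simp [or_comm]

lemma rel1_subst {r1v r1w : List ℕ} {x β δ : ℕ}
    (h2 : ∀ t, t ∈ r1v ↔ (t ∈ r1w ∨ t = δ)) (hδβ : δ ≠ β) (t : ℕ) :
    ((t ∈ r1v ∧ t ≠ β) ∨ t = x) ↔ (((t ∈ r1w ∧ t ≠ β) ∨ t = x) ∨ t = δ) := by
  constructor
  · rintro (⟨h4, h5⟩ | rfl)
    · rcases (h2 t).1 h4 with h6 | rfl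
      · exact Or.inl (Or.inl ⟨h6, h5⟩)
      · exact Or.inr rfl
    · exact Or.inl (Or.inr rfl)
  · rintro ((⟨h4, h5⟩ | rfl) | rfl)
    · exact Or.inl ⟨(h2 t).2 (Or.inl h4), h5⟩
    · exact Or.inr rfl
    · exact Or.inl ⟨(h2 t).2 (Or.inr rfl), fun hc => hδβ hc⟩

lemma rel2_append {r2v r2w : List ℕ} {β δ : ℕ}
    (h : ∀ t, t ∈ r2w ↔ (t ∈ r2v ∨ t = δ)) (t : ℕ) :
    (t ∈ r2w ∨ t = β) ↔ ((t ∈ r2v ∨ t = β) ∨ t = δ) := by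
  constructor
  · rintro (h1 | rfl)
    · rcases (h t).1 h1 with h2 | h2
      · exact Or.inl (Or.inl h2)
      · exact Or.inr h2
    · exact Or.inl (Or.inr rfl)
  · rintro ((h1 | rfl) | rfl)
    · exact Or.inl ((h t).2 (Or.inl h1))
    · exact Or.inr rfl
    · exact Or.inl ((h t).2 (Or.inr rfl))

lemma master (n m : ℕ) (f : List ℕ) :
    ∀ (arrv arrw r1v r2v r1w r2w : List ℕ) (δ : ℕ),
    FCL (arrv ++ f) → FCL (arrw ++ f) →
    (arrv ++ f).Nodup → (arrw ++ f).Nodup →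
    (∀ t ∈ arrw, t < n) → (∀ t ∈ f, t < n) →
    (∀ t, t < n → t ∈ arrw ∨ t ∈ f) →
    RunInv arrv r1v r2v → RunInv arrw r1w r2w →
    (∀ t, t ∈ r1v ↔ (t ∈ r1w ∨ t = δ)) → δ ∉ r1w →
    (∀ t, t ∈ r2w ↔ (t ∈ r2v ∨ t = δ)) → δ ∉ r2v →
    m < δ →
    (∀ t ∈ r1w, t < m → ∀ x ∈ f, t < x) →
    (∀ j k : ℕ, j < k → k < f.length → f.getD j 0 < m → f.getD j 0 < f.getD k 0) →
    2 * Nfun m r2w δ + Afun f δ + m ≥ δ + 4 →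
    (List.foldl rowInsert (mkT r1v r2v) f = List.foldl rowInsert (mkT r1w r2w) f) ∨
    (∃ r1 r2 δ', List.foldl rowInsert (mkT r1w r2w) f = [r1, r2] ∧ m < δ' ∧
      2 * Nfun m r2 δ' + m ≥ δ' + 4) := by
  induction f with
  | nil =>
    intro arrv arrw r1v r2v r1w r2w δ _ _ _ _ _ _ _ _ Rw rel1 hδ1 rel2 hδ2 hmδ _ _ hpot
    right
    have hδr2w : δ ∈ r2w := (rel2 δ).2 (Or.inr rfl)
    have hr2ne : r2w ≠ [] := fun hc => by subst hc; simp at hδr2w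
    have hr1ne : r1w ≠ [] := fun hc => hr2ne (Rw.hr hc)
    refine ⟨r1w, r2w, δ, ?_, hmδ, ?_⟩
    · simp [mkT, if_neg hr1ne, if_neg hr2ne]
    · have : Afun ([] : List ℕ) δ = 0 := by simp [Afun]
      omega
  | cons x f' ih =>
    intro arrv arrw r1v r2v r1w r2w δ hfcv hfcw hndv hndw harrn hfn hcomp Rv Rw rel1 hδ1
      rel2 hδ2 hmδ hG hM hpot
    -- basic facts
    have eV : arrv ++ x :: f' = (arrv ++ [x]) ++ f' := by simp
    have eW : arrw ++ x :: f' = (arrw ++ [x]) ++ f' := by simp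
    have hfcv' : FCL ((arrv ++ [x]) ++ f') := by rw [← eV]; exact hfcv
    have hfcw' : FCL ((arrw ++ [x]) ++ f') := by rw [← eW]; exact hfcw
    have hndv' : ((arrv ++ [x]) ++ f').Nodup := by rw [← eV]; exact hndv
    have hndw' : ((arrw ++ [x]) ++ f').Nodup := by rw [← eW]; exact hndw
    have hxarrv : x ∉ arrv := fun hc =>
      (List.disjoint_of_nodup_append hndv) hc (by simp)
    have hxarrw : x ∉ arrw := fun hc =>
      (List.disjoint_of_nodup_append hndw) hc (by simp)
    have hxf' : x ∉ f' := by
      have := (List.Nodup.of_append_right hndw)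
      exact (List.nodup_cons.1 this).1
    have hxr1v : x ∉ r1v := fun hc => hxarrv ((Rv.mem x).2 (Or.inl hc))
    have hxr1w : x ∉ r1w := fun hc => hxarrw ((Rw.mem x).2 (Or.inl hc))
    have hδr2w : δ ∈ r2w := (rel2 δ).2 (Or.inr rfl)
    have hδarrw : δ ∈ arrw := (Rw.mem δ).2 (Or.inr hδr2w)
    have hδx : δ ≠ x := fun hc => hxarrw (hc ▸ hδarrw)
    have hδr1v : δ ∈ r1v := (rel1 δ).2 (Or.inr rfl)
    have hxn : x < n := hfn x (by simp)
    have harrn' : ∀ t ∈ arrw ++ [x], t < n := by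
      intro t ht
      rcases List.mem_append.1 ht with h1 | h1
      · exact harrn t h1
      · simp at h1; omega
    have hfn' : ∀ t ∈ f', t < n := fun t ht => hfn t (by simp [ht])
    have hcomp' : ∀ t, t < n → t ∈ arrw ++ [x] ∨ t ∈ f' := by
      intro t ht
      rcases hcomp t ht with h1 | h1
      · left; exact List.mem_append.2 (Or.inl h1)
      · rcases List.mem_cons.1 h1 with rfl | h2
        · left; exact List.mem_append.2 (Or.inr (by simp))
        · right; exact h2
    have hM' : ∀ j k : ℕ, j < k → k < f'.length → f'.getD j 0 < m →
        f'.getD j 0 < f'.getD k 0 := by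
      intro j k h1 h2 h3
      have := hM (j+1) (k+1) (by omega) (by simp; omega)
        (by rw [List.getD_cons_succ]; exact h3)
      rw [List.getD_cons_succ, List.getD_cons_succ] at this
      exact this
    -- if x < m then all later letters are bigger
    have hxbig : x < m → ∀ x' ∈ f', x < x' := by
      intro hxm x' hx'
      obtain ⟨k, hk, he⟩ := mem_getD hx'
      have := hM 0 (k+1) (by omega) (by simp; omega)
        (by rw [List.getD_cons_zero]; exact hxm)
      rw [List.getD_cons_zero, List.getD_cons_succ, he] at this
      exact this
    have hfoldv : List.foldl rowInsert (mkT r1v r2v) (x :: f') =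
        List.foldl rowInsert (rowInsert (mkT r1v r2v) x) f' := rfl
    have hfoldw : List.foldl rowInsert (mkT r1w r2w) (x :: f') =
        List.foldl rowInsert (rowInsert (mkT r1w r2w) x) f' := rfl
    by_cases hxδ : δ < x
    · -- CASE x > δ
      have hAeq : Afun (x :: f') δ = Afun f' δ := by
        simp only [Afun, List.toFinset_cons, Finset.filter_insert, if_neg (by omega : ¬ x < δ)]
      by_cases hex : ∃ y ∈ r1w, x < y
      · -- both bump β
        obtain ⟨β, hβ1, hβ2, hβ3⟩ := exists_min_above Rw.s1 hex
        have hβr1v : β ∈ r1v := (rel1 β).2 (Or.inl hβ1)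
        have hminv : ∀ y ∈ r1v, x < y → β ≤ y := by
          intro y hy hxy
          rcases (rel1 y).1 hy with h1 | rfl
          · exact hβ3 y h1 hxy
          · omega
        obtain ⟨hrowv, Rv'⟩ := step_bump Rv hxarrv hβr1v hβ2 hminv (fcl_prefix hfcv')
        obtain ⟨hroww, Rw'⟩ := step_bump Rw hxarrw hβ1 hβ2 hβ3 (fcl_prefix hfcw')
        have hδβ : δ ≠ β := fun hc => by omega
        have rel1' : ∀ t, t ∈ r1v.map (fun s => if s = β then x else s) ↔
            (t ∈ r1w.map (fun s => if s = β then x else s) ∨ t = δ) := by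
          intro t
          rw [mem_subst Rv.s1.nodup hβr1v hxr1v, mem_subst Rw.s1.nodup hβ1 hxr1w]
          exact rel1_subst rel1 hδβ t
        have hδ1' : δ ∉ r1w.map (fun s => if s = β then x else s) := by
          rw [mem_subst Rw.s1.nodup hβ1 hxr1w]
          rintro (⟨h1, _⟩ | h1) <;> [exact hδ1 h1; exact hδx h1]
        have rel2' : ∀ t, t ∈ r2w ++ [β] ↔ (t ∈ r2v ++ [β] ∨ t = δ) := by
          intro t
          simp only [List.mem_append, List.mem_singleton]
          exact rel2_append rel2 t
        have hδ2' : δ ∉ r2v ++ [β] := by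
          simp only [List.mem_append, List.mem_singleton]
          rintro (h1 | h1) <;> [exact hδ2 h1; exact hδβ h1]
        have hG' : ∀ t ∈ r1w.map (fun s => if s = β then x else s), t < m →
            ∀ x' ∈ f', t < x' := by
          intro t ht htm x' hx'
          rcases (mem_subst Rw.s1.nodup hβ1 hxr1w).1 ht with ⟨h1, _⟩ | rfl
          · exact hG t h1 htm x' (by simp [hx'])
          · exact hxbig htm x' hx'
        have hNeq : Nfun m (r2w ++ [β]) δ = Nfun m r2w δ := by
          rw [Nfun, toFinset_append_singleton, Finset.filter_insert,
            if_neg (by push_neg; intro; omega)]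
          rfl
        have hpot' : 2 * Nfun m (r2w ++ [β]) δ + Afun f' δ + m ≥ δ + 4 := by
          rw [hNeq]; omega
        rcases ih (arrv ++ [x]) (arrw ++ [x])
          (r1v.map (fun s => if s = β then x else s)) (r2v ++ [β])
          (r1w.map (fun s => if s = β then x else s)) (r2w ++ [β]) δ
          hfcv' hfcw' hndv' hndw' harrn' hfn'
          hcomp' Rv' Rw' rel1' hδ1' rel2' hδ2' hmδ hG' hM' hpot' with hL | hR
        · left; rw [hfoldv, hfoldw, hrowv, hroww]; exact hL
        · right; rw [hfoldw, hroww]; exact hR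
      · -- both append
        push_neg at hex
        have hltw : ∀ y ∈ r1w, y < x := by
          intro y hy
          have h1 := hex y hy
          have : y ≠ x := fun hc => hxr1w (hc ▸ hy)
          omega
        have hltv : ∀ y ∈ r1v, y < x := by
          intro y hy
          rcases (rel1 y).1 hy with h1 | rfl
          · exact hltw y h1
          · omega
        obtain ⟨hrowv, Rv'⟩ := step_append Rv hxarrv hltv
        obtain ⟨hroww, Rw'⟩ := step_append Rw hxarrw hltw
        have rel1' : ∀ t, t ∈ r1v ++ [x] ↔ (t ∈ r1w ++ [x] ∨ t = δ) := by
          intro t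
          simp only [List.mem_append, List.mem_singleton]
          constructor
          · rintro (h1 | rfl)
            · rcases (rel1 t).1 h1 with h2 | h2
              · exact Or.inl (Or.inl h2)
              · exact Or.inr h2
            · exact Or.inl (Or.inr rfl)
          · rintro ((h1 | rfl) | rfl)
            · exact Or.inl ((rel1 t).2 (Or.inl h1))
            · exact Or.inr rfl
            · exact Or.inl ((rel1 t).2 (Or.inr rfl))
        have hδ1' : δ ∉ r1w ++ [x] := by
          simp only [List.mem_append, List.mem_singleton]
          rintro (h1 | h1) <;> [exact hδ1 h1; exact hδx h1]
        have hG' : ∀ t ∈ r1w ++ [x], t < m → ∀ x' ∈ f', t < x' := by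
          intro t ht htm x' hx'
          rcases List.mem_append.1 ht with h1 | h1
          · exact hG t h1 htm x' (by simp [hx'])
          · simp at h1; subst h1; exact hxbig htm x' hx'
        have hpot' : 2 * Nfun m r2w δ + Afun f' δ + m ≥ δ + 4 := by omega
        rcases ih (arrv ++ [x]) (arrw ++ [x])
          (r1v ++ [x]) r2v (r1w ++ [x]) r2w δ
          hfcv' hfcw' hndv' hndw' harrn' hfn'
          hcomp' Rv' Rw' rel1' hδ1' rel2 hδ2 hmδ hG' hM' hpot' with hL | hR
        · left; rw [hfoldv, hfoldw, hrowv, hroww]; exact hL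
        · right; rw [hfoldw, hroww]; exact hR
    · -- CASE x < δ
      have hxδ' : x < δ := by
        have : x ≠ δ := fun hc => hδx hc.symm
        omega
      have hAsplit : Afun (x :: f') δ = Afun f' δ + 1 := by
        simp only [Afun, List.toFinset_cons, Finset.filter_insert, if_pos hxδ']
        rw [Finset.card_insert_of_notMem (by simp [hxf'])]
      by_cases hex : ∃ y ∈ r1w, x < y
      · obtain ⟨β, hβ1, hβ2, hβ3⟩ := exists_min_above Rw.s1 hex
        have hβδ : β ≠ δ := fun hc => hδ1 (hc ▸ hβ1)
        have hβm : m ≤ β := by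
          by_contra hc
          have := hG β hβ1 (by omega) x (by simp)
          omega
        have hβarrw : β ∈ arrw := (Rw.mem β).2 (Or.inl hβ1)
        have hβr2v : β ∉ r2v := by
          intro hc
          have : β ∈ r2w := (rel2 β).2 (Or.inl hc)
          exact Rw.dis β hβ1 this
        obtain ⟨hroww, Rw'⟩ := step_bump Rw hxarrw hβ1 hβ2 hβ3 (fcl_prefix hfcw')
        by_cases hβδ2 : β < δ
        · -- 2a: both bump β
          have hβr1v : β ∈ r1v := (rel1 β).2 (Or.inl hβ1)
          have hminv : ∀ y ∈ r1v, x < y → β ≤ y := by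
            intro y hy hxy
            rcases (rel1 y).1 hy with h1 | rfl
            · exact hβ3 y h1 hxy
            · omega
          obtain ⟨hrowv, Rv'⟩ := step_bump Rv hxarrv hβr1v hβ2 hminv (fcl_prefix hfcv')
          have rel1' : ∀ t, t ∈ r1v.map (fun s => if s = β then x else s) ↔
              (t ∈ r1w.map (fun s => if s = β then x else s) ∨ t = δ) := by
            intro t
            rw [mem_subst Rv.s1.nodup hβr1v hxr1v, mem_subst Rw.s1.nodup hβ1 hxr1w]
            exact rel1_subst rel1 (fun hc => hβδ hc.symm) t
          have hδ1' : δ ∉ r1w.map (fun s => if s = β then x else s) := by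
            rw [mem_subst Rw.s1.nodup hβ1 hxr1w]
            rintro (⟨h1, _⟩ | h1) <;> [exact hδ1 h1; exact hδx h1]
          have rel2' : ∀ t, t ∈ r2w ++ [β] ↔ (t ∈ r2v ++ [β] ∨ t = δ) := by
            intro t
            simp only [List.mem_append, List.mem_singleton]
            exact rel2_append rel2 t
          have hδ2' : δ ∉ r2v ++ [β] := by
            simp only [List.mem_append, List.mem_singleton]
            rintro (h1 | h1) <;> [exact hδ2 h1; exact hβδ h1.symm]
          have hG' : ∀ t ∈ r1w.map (fun s => if s = β then x else s), t < m →
              ∀ x' ∈ f', t < x' := by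
            intro t ht htm x' hx'
            rcases (mem_subst Rw.s1.nodup hβ1 hxr1w).1 ht with ⟨h1, _⟩ | rfl
            · exact hG t h1 htm x' (by simp [hx'])
            · exact hxbig htm x' hx'
          have hβr2w : β ∉ r2w := fun hc => Rw.dis β hβ1 hc
          have hNeq : Nfun m (r2w ++ [β]) δ = Nfun m r2w δ + 1 := by
            rw [Nfun, toFinset_append_singleton, Finset.filter_insert,
              if_pos (by exact ⟨by omega, by omega⟩),
              Finset.card_insert_of_notMem (by simp [hβr2w])]
            rfl
          have hpot' : 2 * Nfun m (r2w ++ [β]) δ + Afun f' δ + m ≥ δ + 4 := by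
            rw [hNeq]; omega
          rcases ih (arrv ++ [x]) (arrw ++ [x])
            (r1v.map (fun s => if s = β then x else s)) (r2v ++ [β])
            (r1w.map (fun s => if s = β then x else s)) (r2w ++ [β]) δ
            hfcv' hfcw' hndv' hndw' harrn' hfn'
            hcomp' Rv' Rw' rel1' hδ1' rel2' hδ2' hmδ hG' hM' hpot' with hL | hR
          · left; rw [hfoldv, hfoldw, hrowv, hroww]; exact hL
          · right; rw [hfoldw, hroww]; exact hR
        · -- 2b: jump. v bumps δ, w bumps β > δ.
          have hβδ3 : δ < β := by omega
          have hminvδ : ∀ y ∈ r1v, x < y → δ ≤ y := by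
            intro y hy hxy
            rcases (rel1 y).1 hy with h1 | rfl
            · have := hβ3 y h1 hxy; omega
            · omega
          obtain ⟨hrowv, Rv'⟩ := step_bump Rv hxarrv hδr1v hxδ' hminvδ (fcl_prefix hfcv')
          have rel1' : ∀ t, t ∈ r1v.map (fun s => if s = δ then x else s) ↔
              (t ∈ r1w.map (fun s => if s = β then x else s) ∨ t = β) := by
            intro t
            rw [mem_subst Rv.s1.nodup hδr1v hxr1v, mem_subst Rw.s1.nodup hβ1 hxr1w]
            have h2 := rel1 t
            have h3 : t ∈ r1w → t ≠ δ := fun h4 h5 => hδ1 (h5 ▸ h4)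
            have h4 : t = β → t ∈ r1w := fun h5 => h5 ▸ hβ1
            have h5 : t ∈ r1w ∧ t = β → True := fun _ => trivial
            constructor
            · rintro (⟨h6, h7⟩ | rfl)
              · rcases h2.1 h6 with h8 | h8
                · by_cases hb : t = β
                  · right; exact hb
                  · left; left; exact ⟨h8, hb⟩
                · exact absurd h8 h7
              · left; right; rfl
            · rintro ((⟨h6, h7⟩ | rfl) | rfl)
              · exact Or.inl ⟨h2.2 (Or.inl h6), h3 h6⟩
              · exact Or.inr rfl
              · exact Or.inl ⟨h2.2 (Or.inl hβ1), h3 hβ1⟩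
          have hβ1' : β ∉ r1w.map (fun s => if s = β then x else s) := by
            rw [mem_subst Rw.s1.nodup hβ1 hxr1w]
            rintro (⟨_, h1⟩ | h1) <;> omega
          have rel2' : ∀ t, t ∈ r2w ++ [β] ↔ (t ∈ r2v ++ [δ] ∨ t = β) := by
            intro t
            simp only [List.mem_append, List.mem_singleton]
            constructor
            · rintro (h1 | rfl)
              · exact Or.inl ((rel2 t).1 h1)
              · exact Or.inr rfl
            · rintro ((h1 | rfl) | rfl)
              · exact Or.inl ((rel2 t).2 (Or.inl h1))
              · exact Or.inl ((rel2 t).2 (Or.inr rfl))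
              · exact Or.inr rfl
          have hβ2' : β ∉ r2v ++ [δ] := by
            simp only [List.mem_append, List.mem_singleton]
            rintro (h1 | h1) <;> [exact hβr2v h1; exact hβδ h1]
          have hG' : ∀ t ∈ r1w.map (fun s => if s = β then x else s), t < m →
              ∀ x' ∈ f', t < x' := by
            intro t ht htm x' hx'
            rcases (mem_subst Rw.s1.nodup hβ1 hxr1w).1 ht with ⟨h1, _⟩ | rfl
            · exact hG t h1 htm x' (by simp [hx'])
            · exact hxbig htm x' hx'
          have hmβ : m < β := by omega
          -- the potential: count the gap
          have hβn : β < n := harrn β hβarrw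
          set R : Finset ℕ := r2w.toFinset with hR
          set g : ℕ := (R.filter (fun t => δ < t ∧ t < β)).card with hg
          set g2 : ℕ := (f'.toFinset.filter (fun t => δ < t ∧ t < β)).card with hg2
          have hδf' : δ ∉ f' := by
            intro hc
            exact (List.disjoint_of_nodup_append hndw) hδarrw (by simp [hc])
          -- gap bound
          have hgap : β ≤ δ + 1 + g + g2 := by
            have hsub : Finset.Ioo δ β ⊆
                (R.filter (fun t => δ < t ∧ t < β)) ∪
                (f'.toFinset.filter (fun t => δ < t ∧ t < β)) := by
              intro t ht
              simp only [Finset.mem_Ioo] at ht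
              have htn : t < n := by omega
              rcases hcomp t htn with h1 | h1
              · rcases (Rw.mem t).1 h1 with h2 | h2
                · exact absurd (hβ3 t h2 (by omega)) (by omega)
                · exact Finset.mem_union.2 (Or.inl (by simp [hR, h2, ht.1, ht.2]))
              · rcases List.mem_cons.1 h1 with rfl | h2
                · omega
                · exact Finset.mem_union.2 (Or.inr (by simp [h2, ht.1, ht.2]))
            have h1 := Finset.card_le_card hsub
            have h2 := Finset.card_union_le (R.filter (fun t => δ < t ∧ t < β))
              (f'.toFinset.filter (fun t => δ < t ∧ t < β))
            rw [Nat.card_Ioo] at h1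
            omega
          -- new count
          have hβR : β ∉ R := by simp [hR]; intro hc; exact Rw.dis β hβ1 hc
          have hNnew : Nfun m (r2w ++ [β]) β = Nfun m r2w δ + g + 1 := by
            have e1 : (r2w ++ [β]).toFinset = insert β R := by
              rw [toFinset_append_singleton, hR]
            rw [Nfun, e1, Finset.filter_insert, if_pos ⟨by omega, le_rfl⟩,
              Finset.card_insert_of_notMem (by simp [hβR])]
            have e2 : R.filter (fun t => m ≤ t ∧ t ≤ β) =
                (R.filter (fun t => m ≤ t ∧ t ≤ δ)) ∪ (R.filter (fun t => δ < t ∧ t < β)) := by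
              ext t
              simp only [Finset.mem_filter, Finset.mem_union]
              constructor
              · rintro ⟨h1, h2, h3⟩
                have htβ : t ≠ β := fun hc => hβR (hc ▸ h1)
                by_cases h4 : t ≤ δ
                · exact Or.inl ⟨h1, h2, h4⟩
                · exact Or.inr ⟨h1, by omega, by omega⟩
              · rintro (⟨h1, h2, h3⟩ | ⟨h1, h2, h3⟩)
                · exact ⟨h1, h2, by omega⟩
                · exact ⟨h1, by omega, by omega⟩
            have hdisj : Disjoint (R.filter (fun t => m ≤ t ∧ t ≤ δ))
                (R.filter (fun t => δ < t ∧ t < β)) := by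
              rw [Finset.disjoint_left]
              intro t ht1 ht2
              simp only [Finset.mem_filter] at ht1 ht2
              omega
            rw [e2, Finset.card_union_of_disjoint hdisj]
            rfl
          -- Afun split
          have hAf'β : Afun f' β = Afun f' δ + g2 := by
            have e3 : f'.toFinset.filter (fun t => t < β) =
                (f'.toFinset.filter (fun t => t < δ)) ∪
                (f'.toFinset.filter (fun t => δ < t ∧ t < β)) := by
              ext t
              simp only [Finset.mem_filter, Finset.mem_union]
              constructor
              · rintro ⟨h1, h2⟩
                have : t ≠ δ := fun hc => hδf' (by rw [hc] at h1; exact List.mem_toFinset.1 h1)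
                by_cases h3 : t < δ
                · exact Or.inl ⟨h1, h3⟩
                · exact Or.inr ⟨h1, by omega, h2⟩
              · rintro (⟨h1, h2⟩ | ⟨h1, h2, h3⟩)
                · exact ⟨h1, by omega⟩
                · exact ⟨h1, h3⟩
            have hdisj : Disjoint (f'.toFinset.filter (fun t => t < δ))
                (f'.toFinset.filter (fun t => δ < t ∧ t < β)) := by
              rw [Finset.disjoint_left]
              intro t ht1 ht2
              simp only [Finset.mem_filter] at ht1 ht2
              omega
            have e4 := congrArg Finset.card e3
            rw [Finset.card_union_of_disjoint hdisj] at e4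
            exact e4
          have hpot' : 2 * Nfun m (r2w ++ [β]) β + Afun f' β + m ≥ β + 4 := by
            rw [hNnew, hAf'β]
            omega
          rcases ih (arrv ++ [x]) (arrw ++ [x])
            (r1v.map (fun s => if s = δ then x else s)) (r2v ++ [δ])
            (r1w.map (fun s => if s = β then x else s)) (r2w ++ [β]) β
            hfcv' hfcw' hndv' hndw' harrn' hfn'
            hcomp' Rv' Rw' rel1' hβ1' rel2' hβ2' hmβ hG' hM' hpot' with hL | hR
          · left; rw [hfoldv, hfoldw, hrowv, hroww]; exact hL
          · right; rw [hfoldw, hroww]; exact hR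
      · -- 2c: w appends, v bumps δ: states equalize
        push_neg at hex
        have hltw : ∀ y ∈ r1w, y < x := by
          intro y hy
          have h1 := hex y hy
          have : y ≠ x := fun hc => hxr1w (hc ▸ hy)
          omega
        have hminvδ : ∀ y ∈ r1v, x < y → δ ≤ y := by
          intro y hy hxy
          rcases (rel1 y).1 hy with h1 | rfl
          · exact absurd hxy (by have := hltw y h1; omega)
          · omega
        obtain ⟨hrowv, Rv'⟩ := step_bump Rv hxarrv hδr1v hxδ' hminvδ (fcl_prefix hfcv')
        obtain ⟨hroww, Rw'⟩ := step_append Rw hxarrw hltw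
        left
        rw [hfoldv, hfoldw, hrowv, hroww]
        have e1 : r1v.map (fun s => if s = δ then x else s) = r1w ++ [x] := by
          apply sorted_ext Rv'.s1 Rw'.s1
          intro t
          rw [mem_subst Rv.s1.nodup hδr1v hxr1v]
          simp only [List.mem_append, List.mem_singleton]
          have h2 := rel1 t
          have h3 : t ∈ r1w → t ≠ δ := fun h4 h5 => hδ1 (h5 ▸ h4)
          constructor
          · rintro (⟨h4, h5⟩ | rfl)
            · rcases h2.1 h4 with h6 | h6
              · exact Or.inl h6
              · exact absurd h6 h5
            · exact Or.inr rfl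
          · rintro (h4 | rfl)
            · exact Or.inl ⟨h2.2 (Or.inl h4), h3 h4⟩
            · exact Or.inr rfl
        have e2 : r2v ++ [δ] = r2w := by
          apply sorted_ext Rv'.s2 Rw.s2
          intro t
          simp only [List.mem_append, List.mem_singleton]
          exact (rel2 t).symm
        rw [e1, e2]
  
end CW
namespace CW

lemma RSKList_append (u f : List ℕ) :
    RSKList (u ++ f) = f.foldl rowInsert (RSKList u) := by
  simp [RSKList, List.foldl_append]

end CW

/-- **Theorem.** If `v`, `w = v·sᵢ` are fully commutative, `ℓ(w) = ℓ(v)+1`,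
`i ∈ supp(v)`, and `P(v) ≠ P(w)`, then `w` is crowded. -/
theorem cover_with_new_tableau_is_crowded {n : ℕ} (v w : Equiv.Perm (Fin n))
    (i : ℕ) (h : i + 1 < n) (hv : FullyCommutative v) (hw : FullyCommutative w)
    (hwv : w = v * simpleTr i h) (hl : invCount w = invCount v + 1)
    (hsupp : i ∈ Supp v) (hP : RSKP v ≠ RSKP w) :
    CrowdedSet (Row2 (RSKP w)) := by
  classical
  open CW in
  -- basic values
  have hin : i < n := by omega
  set a : ℕ := (w ⟨i, by omega⟩ : ℕ) with ha
  set b : ℕ := (w ⟨i+1, h⟩ : ℕ) with hb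
  have hswap := CW.perm_swap_vals v h
  have hva : (v ⟨i+1, h⟩ : ℕ) = a := by rw [ha, hwv, hswap.1]
  have hvb : (v ⟨i, by omega⟩ : ℕ) = b := by rw [hb, hwv, hswap.2.1]
  have hba : b < a := by
    have := CW.b_lt_a h hwv hl
    omega
  have han : a < n := (w ⟨i, by omega⟩).isLt
  have hbn : b < n := (w ⟨i+1, h⟩).isLt
  set p : List ℕ := (oneLine w).take i with hp
  set s : List ℕ := (oneLine w).drop (i+2) with hs
  have hdw : oneLine w = p ++ a :: b :: s := CW.oneLine_decomp w h
  have hdv : oneLine v = p ++ b :: a :: s := by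
    have := CW.oneLine_decomp_v v h
    rw [← hwv] at this
    rw [this, hva, hvb]
  have hfw : CW.FCL (oneLine w) := CW.fcl_oneLine hw
  have hfv : CW.FCL (oneLine v) := CW.fcl_oneLine hv
  have hnw : (oneLine w).Nodup := CW.oneLine_nodup w
  have hnv : (oneLine v).Nodup := CW.oneLine_nodup v
  have hlen : (oneLine w).length = n := CW.oneLine_length w
  have hplen : p.length = i := by
    rw [hp, List.length_take, hlen]; omega
  have hslen : s.length = n - (i+2) := by
    rw [hs, List.length_drop, hlen]
  -- membership decomposition
  have hmemw : ∀ t : ℕ, t < n ↔ (t ∈ p ∨ t = a ∨ t = b ∨ t ∈ s) := by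
    intro t
    rw [← CW.oneLine_mem w]
    conv_lhs => rw [hdw]
    simp only [List.mem_append, List.mem_cons]
  -- nodup decomposition
  have hnw2 : (p ++ a :: b :: s).Nodup := hdw ▸ hnw
  have hdisj := List.disjoint_of_nodup_append hnw2
  have hanp : a ∉ p := fun hc => hdisj hc (by simp)
  have hbnp : b ∉ p := fun hc => hdisj hc (by simp)
  have hrest := List.Nodup.of_append_right hnw2
  have hab : a ≠ b := by
    intro hc
    rw [List.nodup_cons] at hrest
    exact hrest.1 (by simp [hc])
  have hans : a ∉ s := by
    rw [List.nodup_cons] at hrest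
    exact fun hc => hrest.1 (by simp [hc])
  have hbns : b ∉ s := by
    rw [List.nodup_cons] at hrest
    rw [List.nodup_cons] at hrest
    exact fun hc => hrest.2.1 hc
  have hsnd : s.Nodup := by
    rw [List.nodup_cons, List.nodup_cons] at hrest
    exact hrest.2.2
  have hpnd : p.Nodup := List.Nodup.of_append_left hnw2
  have hpdisj : ∀ t ∈ p, t ∉ s := fun t ht hc => hdisj ht (by simp [hc])
  -- getD facts for oneLine w
  have hgp : ∀ j, j < i → (oneLine w).getD j 0 = p.getD j 0 := by
    intro j hj
    rw [hdw]; exact CW.getD_append_left (by omega)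
  have hgA : (oneLine w).getD i 0 = a := by
    rw [hdw, CW.getD_append_right (by omega), hplen]
    simp
  have hgB : (oneLine w).getD (i+1) 0 = b := by
    rw [hdw, CW.getD_append_right (by omega), hplen]
    have : i + 1 - i = 1 := by omega
    rw [this]
    rfl
  have hgS : ∀ k, (oneLine w).getD (i+2+k) 0 = s.getD k 0 := by
    intro k
    rw [hdw, CW.getD_append_right (by omega), hplen]
    have e : i + 2 + k - i = (k + 1) + 1 := by omega
    rw [e, List.getD_cons_succ, List.getD_cons_succ]
  -- all p values < a
  have hp_lt_a : ∀ t ∈ p, t < a := by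
    intro t ht
    obtain ⟨j, hj, he⟩ := CW.mem_getD ht
    rw [hplen] at hj
    have hpat := hfw j i (i+1) (by omega) (by omega) (by omega)
    rw [hgA, hgB, hgp j hj, he] at hpat
    have hta : t ≠ a := fun hc => hanp (hc ▸ ht)
    by_contra hc
    exact hpat ⟨hba, by omega⟩
  -- all s values > b
  have hs_gt_b : ∀ t ∈ s, b < t := by
    intro t ht
    obtain ⟨k, hk, he⟩ := CW.mem_getD ht
    have hpat := hfw i (i+1) (i+2+k) (by omega) (by omega) (by rw [hlen]; rw [hslen] at hk; omega)
    rw [hgA, hgB, hgS k, he] at hpat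
    have htb : t ≠ b := fun hc => hbns (hc ▸ ht)
    by_contra hc
    exact hpat ⟨by omega, hba⟩
  have hsmall_in_p : ∀ t, t < b → t ∈ p := by
    intro t ht
    rcases (hmemw t).1 (by omega) with h1 | h1 | h1 | h1
    · exact h1
    · omega
    · omega
    · exact absurd (hs_gt_b t h1) (by omega)
  -- run the prefix
  have hfcp : CW.FCL p := CW.fcl_prefix (by rw [← hdw]; exact hfw)
  obtain ⟨r1p, r2p, Rp⟩ := CW.buildRun p hfcp hpnd
  have hr1p_sub : ∀ y ∈ r1p, y ∈ p := fun y hy => (Rp.mem y).2 (Or.inl hy)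
  have hr2p_sub : ∀ y ∈ r2p, y ∈ p := fun y hy => (Rp.mem y).2 (Or.inr hy)
  have hr1p_lt_a : ∀ y ∈ r1p, y < a := fun y hy => hp_lt_a y (hr1p_sub y hy)
  have hanr1p : a ∉ r1p := fun hc => hanp (hr1p_sub a hc)
  have hbnr1p : b ∉ r1p := fun hc => hbnp (hr1p_sub b hc)
  have hanr2p : a ∉ r2p := fun hc => hanp (hr2p_sub a hc)
  -- list reassociations
  have eLv : oneLine v = ((p ++ [b]) ++ [a]) ++ s := by rw [hdv]; simp
  have eLw : oneLine w = ((p ++ [a]) ++ [b]) ++ s := by rw [hdw]; simp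
  have hfv2 : CW.FCL (((p ++ [b]) ++ [a]) ++ s) := by rw [← eLv]; exact hfv
  have hfw2 : CW.FCL (((p ++ [a]) ++ [b]) ++ s) := by rw [← eLw]; exact hfw
  have hnv2 : (((p ++ [b]) ++ [a]) ++ s).Nodup := by rw [← eLv]; exact hnv
  have hnw3 : (((p ++ [a]) ++ [b]) ++ s).Nodup := by rw [← eLw]; exact hnw
  by_cases hA : ∃ y ∈ r1p, b < y
  · -- CASE A : tableaux agree, contradiction
    exfalso
    obtain ⟨z1, hz11, hz12, hz13⟩ := CW.exists_min_above Rp.s1 hA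
    have hz1a : z1 < a := hr1p_lt_a z1 hz11
    have hz1nb : z1 ≠ b := by omega
    have hz1na : z1 ≠ a := by omega
    -- v run
    obtain ⟨hrv1, Rv1⟩ := CW.step_bump Rp hbnp hz11 hz12 hz13
      (CW.fcl_prefix (by rw [show (p ++ [b]) ++ (a :: s) = oneLine v by rw [hdv]; simp]; exact hfv))
    have hanpb : a ∉ p ++ [b] := by
      simp only [List.mem_append, List.mem_singleton]
      rintro (h1 | h1) <;> [exact hanp h1; exact hab h1]
    have hltv2 : ∀ y ∈ r1p.map (fun t => if t = z1 then b else t), y < a := by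
      intro y hy
      rcases (CW.mem_subst Rp.s1.nodup hz11 hbnr1p).1 hy with ⟨h1, _⟩ | rfl
      · exact hr1p_lt_a y h1
      · exact hba
    obtain ⟨hrv2, Rv2⟩ := CW.step_append Rv1 hanpb hltv2
    -- w run
    obtain ⟨hrw1, Rw1⟩ := CW.step_append Rp hanp hr1p_lt_a
    have hbnpa : b ∉ p ++ [a] := by
      simp only [List.mem_append, List.mem_singleton]
      rintro (h1 | h1) <;> [exact hbnp h1; exact hab h1.symm]
    have hz1m : z1 ∈ r1p ++ [a] := List.mem_append.2 (Or.inl hz11)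
    have hminw : ∀ y ∈ r1p ++ [a], b < y → z1 ≤ y := by
      intro y hy hby
      rcases List.mem_append.1 hy with h1 | h1
      · exact hz13 y h1 hby
      · simp at h1; omega
    obtain ⟨hrw2, Rw2⟩ := CW.step_bump Rw1 hbnpa hz1m hz12 hminw
      (CW.fcl_prefix (l := (p ++ [a]) ++ [b]) (by rw [← eLw]; exact hfw))
    -- the two tableaux after i+2 steps coincide
    have emap : (r1p ++ [a]).map (fun t => if t = z1 then b else t) =
        (r1p.map (fun t => if t = z1 then b else t)) ++ [a] := by
      rw [List.map_append]
      simp [hz1na.symm]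
    have htabv : RSKList ((p ++ [b]) ++ [a]) =
        CW.mkT ((r1p.map (fun t => if t = z1 then b else t)) ++ [a]) (r2p ++ [z1]) := Rv2.tab
    have htabw : RSKList ((p ++ [a]) ++ [b]) =
        CW.mkT ((r1p.map (fun t => if t = z1 then b else t)) ++ [a]) (r2p ++ [z1]) := by
      rw [Rw2.tab, emap]
    apply hP
    rw [RSKP, RSKP, eLv, eLw, CW.RSKList_append ((p ++ [b]) ++ [a]) s,
      CW.RSKList_append ((p ++ [a]) ++ [b]) s, htabv, htabw]
  · -- CASE (▲)
    push_neg at hA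
    have hr1p_lt_b : ∀ y ∈ r1p, y < b := by
      intro y hy
      have h1 := hA y hy
      have : y ≠ b := fun hc => hbnr1p (hc ▸ hy)
      omega
    -- v run : two appends
    obtain ⟨hrv1, Rv1⟩ := CW.step_append Rp hbnp hr1p_lt_b
    have hanpb : a ∉ p ++ [b] := by
      simp only [List.mem_append, List.mem_singleton]
      rintro (h1 | h1) <;> [exact hanp h1; exact hab h1]
    have hltv2 : ∀ y ∈ r1p ++ [b], y < a := by
      intro y hy
      rcases List.mem_append.1 hy with h1 | h1
      · exact hr1p_lt_a y h1
      · simp at h1; omega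
    obtain ⟨hrv2, Rv2⟩ := CW.step_append Rv1 hanpb hltv2
    -- w run : append a then bump a with b
    obtain ⟨hrw1, Rw1⟩ := CW.step_append Rp hanp hr1p_lt_a
    have hbnpa : b ∉ p ++ [a] := by
      simp only [List.mem_append, List.mem_singleton]
      rintro (h1 | h1) <;> [exact hbnp h1; exact hab h1.symm]
    have ham : a ∈ r1p ++ [a] := List.mem_append.2 (Or.inr (by simp))
    have hminw : ∀ y ∈ r1p ++ [a], b < y → a ≤ y := by
      intro y hy hby
      rcases List.mem_append.1 hy with h1 | h1
      · exact absurd hby (by have := hr1p_lt_b y h1; omega)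
      · simp at h1; omega
    obtain ⟨hrw2, Rw2⟩ := CW.step_bump Rw1 hbnpa ham hba hminw
      (CW.fcl_prefix (l := (p ++ [a]) ++ [b]) (by rw [← eLw]; exact hfw))
    have emap : (r1p ++ [a]).map (fun t => if t = a then b else t) = r1p ++ [b] := by
      rw [List.map_append]
      congr 1
      · rw [List.map_congr_left (g := id), List.map_id]
        intro t ht
        simp [show t ≠ a from fun hc => hanr1p (hc ▸ ht)]
      · simp
    rw [emap] at Rw2 hrw2
    -- counting setup
    set Cset : Finset ℕ := p.toFinset.filter (fun t => b < t ∧ t < a) with hCset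
    set c : ℕ := Cset.card with hc
    have hCsub : ∀ t ∈ Cset, t ∈ p ∧ b < t ∧ t < a := by
      intro t ht
      rw [hCset, Finset.mem_filter, List.mem_toFinset] at ht
      exact ⟨ht.1, ht.2.1, ht.2.2⟩
    have hCmem : ∀ t, t ∈ p → b < t → t ∈ Cset := by
      intro t ht hbt
      rw [hCset, Finset.mem_filter, List.mem_toFinset]
      exact ⟨ht, hbt, hp_lt_a t ht⟩
    -- i = b + c
    have hpt : p.toFinset = Finset.range b ∪ Cset := by
      ext t
      rw [Finset.mem_union, Finset.mem_range, List.mem_toFinset, hCset, Finset.mem_filter,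
        List.mem_toFinset]
      constructor
      · intro ht
        have hta : t < a := hp_lt_a t ht
        have htb : t ≠ b := fun hc => hbnp (hc ▸ ht)
        by_cases h1 : t < b
        · exact Or.inl h1
        · exact Or.inr ⟨ht, by omega, hta⟩
      · rintro (h1 | h1)
        · exact hsmall_in_p t h1
        · exact h1.1
    have hibc : i = b + c := by
      have h1 : p.toFinset.card = i := by
        rw [List.toFinset_card_of_nodup hpnd, hplen]
      have h2 : (Finset.range b ∪ Cset).card = b + c := by
        rw [Finset.card_union_of_disjoint, Finset.card_range]
        rw [Finset.disjoint_left]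
        intro t ht1 ht2
        rw [Finset.mem_range] at ht1
        have := (hCsub t ht2).2.1
        omega
      rw [hpt, h2] at h1
      omega
    -- supp gives z₀
    obtain ⟨j, hj1, hj2⟩ := hsupp
    have hjne : (j : ℕ) ≠ i := by
      intro hc
      have : v j = v ⟨i, by omega⟩ := by congr 1; exact Fin.ext hc
      rw [this] at hj2
      omega
    have hji : (j : ℕ) < i := by omega
    set z₀ : ℕ := (v j : ℕ) with hz₀
    have hz₀w : (w j : ℕ) = z₀ := by
      rw [hwv]
      rw [hswap.2.2 j (by omega) (by omega)]
    have hz₀p : z₀ ∈ p := by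
      have h1 : (oneLine w).getD (j : ℕ) 0 = z₀ := by
        rw [CW.oneLine_getD w (by omega : (j:ℕ) < n)]
        have : (⟨(j:ℕ), by omega⟩ : Fin n) = j := Fin.ext rfl
        rw [this, hz₀w]
      rw [hgp _ hji] at h1
      rw [← h1]
      exact CW.getD_mem (by omega)
    have hz₀i : i < z₀ := hj2
    have hz₀C : z₀ ∈ Cset := hCmem z₀ hz₀p (by omega)
    have hCne : Cset.Nonempty := ⟨z₀, hz₀C⟩
    have hcge1 : 1 ≤ c := Finset.card_pos.2 hCne
    set m : ℕ := Cset.min' hCne with hm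
    have hmC : m ∈ Cset := Cset.min'_mem hCne
    have hmb : b < m := (hCsub m hmC).2.1
    have hma : m < a := (hCsub m hmC).2.2
    have hmz₀ : m ≤ z₀ := Cset.min'_le z₀ hz₀C
    have hkey : b + 3 ≤ m + c := by
      by_cases h1 : c = 1
      · have : m = z₀ := Finset.card_le_one.1 (by omega) m hmC z₀ hz₀C
        omega
      · omega
    -- master hypotheses
    have harrn : ∀ t ∈ (p ++ [a]) ++ [b], t < n := by
      intro t ht
      simp only [List.mem_append, List.mem_singleton] at ht
      rcases ht with (h1 | h1) | h1
      · have := hp_lt_a t h1; omega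
      · omega
      · omega
    have hfn : ∀ t ∈ s, t < n := by
      intro t ht
      exact (CW.oneLine_mem w).1 (by rw [hdw]; simp [ht])
    have hcomp : ∀ t, t < n → t ∈ (p ++ [a]) ++ [b] ∨ t ∈ s := by
      intro t ht
      rcases (hmemw t).1 ht with h1 | h1 | h1 | h1
      · left; simp [h1]
      · left; simp [h1]
      · left; simp [h1]
      · right; exact h1
    have rel1 : ∀ t, t ∈ (r1p ++ [b]) ++ [a] ↔ (t ∈ r1p ++ [b] ∨ t = a) := by
      intro t
      simp only [List.mem_append, List.mem_singleton]
    have hδ1 : a ∉ r1p ++ [b] := by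
      simp only [List.mem_append, List.mem_singleton]
      rintro (h1 | h1) <;> [exact hanr1p h1; exact hab h1]
    have rel2 : ∀ t, t ∈ r2p ++ [a] ↔ (t ∈ r2p ∨ t = a) := by
      intro t
      simp only [List.mem_append, List.mem_singleton]
    have hG : ∀ t ∈ r1p ++ [b], t < m → ∀ x ∈ s, t < x := by
      intro t ht _ x hx
      have hxb := hs_gt_b x hx
      rcases List.mem_append.1 ht with h1 | h1
      · have := hr1p_lt_b t h1; omega
      · simp at h1; omega
    have hM : ∀ j k : ℕ, j < k → k < s.length → s.getD j 0 < m → s.getD j 0 < s.getD k 0 := by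
      intro j k hjk hk hjm
      by_contra hc
      have hne : s.getD j 0 ≠ s.getD k 0 := by
        intro he
        have h1 : s[j]'(by omega) = s[k]'(by omega) := by
          have e1 := List.getD_eq_getElem s 0 (show j < s.length by omega)
          have e2 := List.getD_eq_getElem s 0 (show k < s.length by omega)
          rw [e1, e2] at he
          exact he
        have := (List.Nodup.getElem_inj_iff hsnd).1 h1
        omega
      have hpat := hfw i (i+2+j) (i+2+k) (by omega) (by omega)
        (by rw [hlen]; rw [hslen] at hk; omega)
      rw [hgA, hgS j, hgS k] at hpat
      exact hpat ⟨by omega, by omega⟩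
    -- potential
    have hNinit : c + 1 ≤ CW.Nfun m (r2p ++ [a]) a := by
      have hsub2 : insert a Cset ⊆ (r2p ++ [a]).toFinset.filter (fun t => m ≤ t ∧ t ≤ a) := by
        intro t ht
        rw [CW.toFinset_append_singleton]
        rcases Finset.mem_insert.1 ht with rfl | h1
        · exact Finset.mem_filter.2 ⟨Finset.mem_insert_self _ _, by omega, le_rfl⟩
        · obtain ⟨htp, htb, hta⟩ := hCsub t h1
          have htr2 : t ∈ r2p := by
            rcases (Rp.mem t).1 htp with h2 | h2
            · exact absurd (hr1p_lt_b t h2) (by omega)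
            · exact h2
          refine Finset.mem_filter.2 ⟨Finset.mem_insert_of_mem (List.mem_toFinset.2 htr2),
            Cset.min'_le t h1, by omega⟩
      have h1 : (insert a Cset).card = c + 1 := by
        rw [Finset.card_insert_of_notMem]
        intro hc2
        exact absurd (hCsub a hc2).2.2 (by omega)
      calc c + 1 = (insert a Cset).card := h1.symm
        _ ≤ _ := Finset.card_le_card hsub2
    have hAinit : CW.Afun s a + c + b + 1 = a := by
      have e1 : s.toFinset.filter (fun t => t < a) = Finset.Ioo b a \ Cset := by
        ext t
        rw [Finset.mem_filter, Finset.mem_sdiff, Finset.mem_Ioo, List.mem_toFinset]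
        constructor
        · rintro ⟨h1, h2⟩
          refine ⟨⟨hs_gt_b t h1, h2⟩, ?_⟩
          intro hc2
          exact hpdisj t (hCsub t hc2).1 h1
        · rintro ⟨⟨h1, h2⟩, h3⟩
          have htn : t < n := by omega
          rcases (hmemw t).1 htn with h4 | h4 | h4 | h4
          · exact absurd (hCmem t h4 h1) h3
          · omega
          · omega
          · exact ⟨h4, h2⟩
      have hCsubIoo : Cset ⊆ Finset.Ioo b a := by
        intro t ht
        rw [Finset.mem_Ioo]
        exact ⟨(hCsub t ht).2.1, (hCsub t ht).2.2⟩
      have e2 : (Finset.Ioo b a \ Cset).card = (a - b - 1) - c := by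
        rw [Finset.card_sdiff_of_subset hCsubIoo, Nat.card_Ioo]
      have hcle : c ≤ a - b - 1 := by
        have := Finset.card_le_card hCsubIoo
        rw [Nat.card_Ioo] at this
        omega
      have : CW.Afun s a = (a - b - 1) - c := by
        rw [CW.Afun, e1, e2]
      omega
    have hpot : 2 * CW.Nfun m (r2p ++ [a]) a + CW.Afun s a + m ≥ a + 4 := by omega
    -- apply master
    have hmaster := CW.master n m s ((p ++ [b]) ++ [a]) ((p ++ [a]) ++ [b])
      ((r1p ++ [b]) ++ [a]) r2p (r1p ++ [b]) (r2p ++ [a]) a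
      hfv2 hfw2 hnv2 hnw3 harrn hfn hcomp Rv2 Rw2 rel1 hδ1 rel2 hanr2p hma hG hM hpot
    rcases hmaster with hL | hR
    · exfalso
      apply hP
      rw [RSKP, RSKP, eLv, eLw, CW.RSKList_append ((p ++ [b]) ++ [a]) s,
        CW.RSKList_append ((p ++ [a]) ++ [b]) s, Rv2.tab, Rw2.tab]
      exact hL
    · obtain ⟨r1, r2, δ', hfold, hmδ', hineq⟩ := hR
      have hRSKP : RSKP w = [r1, r2] := by
        rw [RSKP, eLw, CW.RSKList_append ((p ++ [a]) ++ [b]) s, Rw2.tab]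
        exact hfold
      have hRow2 : Row2 (RSKP w) = r2.toFinset := by
        rw [hRSKP, Row2]
        rfl
      -- produce the crowded witness
      set xn : ℕ := (δ' - m + 1) / 2 with hxn
      have hxn1 : 1 ≤ xn := by omega
      have h2xn : δ' - m ≤ 2 * xn ∧ 2 * xn ≤ δ' - m + 1 := by omega
      set K : ℕ := CW.Nfun m r2 δ' with hK
      have hKx : xn + 2 ≤ K := by omega
      refine ⟨(xn : ℤ), (m : ℤ), by exact_mod_cast hxn1, ?_⟩
      have hsub3 : r2.toFinset.filter (fun t => m ≤ t ∧ t ≤ δ') ⊆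
          (Row2 (RSKP w)).filter (fun t : ℕ => (m : ℤ) ≤ (t : ℤ) ∧
            (t : ℤ) ≤ (m : ℤ) + 2 * (xn : ℤ)) := by
        rw [hRow2]
        intro t ht
        rw [Finset.mem_filter] at ht ⊢
        refine ⟨ht.1, by exact_mod_cast ht.2.1, ?_⟩
        have : (t : ℕ) ≤ m + 2 * xn := by omega
        push_cast
        omega
      have hcard := Finset.card_le_card hsub3
      have hKeq : (r2.toFinset.filter (fun t => m ≤ t ∧ t ≤ δ')).card = K := rfl
      rw [hKeq] at hcard
      have : (xn : ℤ) + 1 < (K : ℤ) := by exact_mod_cast (by omega : xn + 1 < K)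
      calc ((xn : ℤ) + 1) < (K : ℤ) := this
        _ ≤ _ := by exact_mod_cast hcard
end

section
/- Consider the set of fully commutative permutations of S_n, partially ordered by the right weak order. The uncrowded permutations form an order ideal of this poset, and the crowded permutations form a dual order ideal: if v ≤ w are fully commutative and w is uncrowded then v is uncrowded, and if v is crowded then w is crowded. -/
namespace CrowdedAux

/-- A list of naturals avoids the pattern 321 (positions, strict descents). -/
def Avoids (l : List ℕ) : Prop :=
  ∀ p q r : ℕ, p < q → q < r → r < l.length →
    ¬ (l.getD r 0 < l.getD q 0 ∧ l.getD q 0 < l.getD p 0)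

lemma getD_pre (u v : List ℕ) {p : ℕ} (hp : p < u.length) :
    (u ++ v).getD p 0 = u.getD p 0 :=
  List.getD_append _ _ _ _ hp

lemma avoids_prefix {u v : List ℕ} (h : Avoids (u ++ v)) : Avoids u := by
  intro p q r hpq hqr hr hc
  refine h p q r hpq hqr (by simp only [List.length_append]; omega) ?_
  rw [getD_pre u v hr, getD_pre u v (show q < u.length by omega),
    getD_pre u v (show p < u.length by omega)]
  exact hc

lemma getD_snoc (u : List ℕ) (x : ℕ) : (u ++ [x]).getD u.length 0 = x := by
  rw [List.getD_append_right _ _ _ _ le_rfl]; simp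

lemma sorted_nodup {l : List ℕ} (h : l.Pairwise (· < ·)) : l.Nodup :=
  h.imp ne_of_lt

lemma sorted_snoc {l : List ℕ} {x : ℕ} (h : l.Pairwise (· < ·)) (hx : ∀ a ∈ l, a < x) :
    (l ++ [x]).Pairwise (· < ·) := by
  rw [List.pairwise_append]
  exact ⟨h, List.pairwise_singleton _ _, by simpa using hx⟩

lemma sorted_ext {l l' : List ℕ} (h : l.Pairwise (· < ·)) (h' : l'.Pairwise (· < ·))
    (hm : ∀ a, a ∈ l ↔ a ∈ l') : l = l' := by
  haveI : IsAntisymm ℕ (· < ·) := ⟨fun a b h1 h2 => absurd h2 (lt_asymm h1)⟩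
  refine List.Perm.eq_of_pairwise (fun a b _ _ h1 h2 => absurd h2 (lt_asymm h1)) h h' ?_
  refine List.perm_of_nodup_nodup_toFinset_eq (sorted_nodup h) (sorted_nodup h') ?_
  ext a; simp [hm a]

lemma find?_min {x y : ℕ} : ∀ l : List ℕ, l.Pairwise (· < ·) →
    l.find? (fun z => decide (x < z)) = some y →
    x < y ∧ y ∈ l ∧ ∀ v ∈ l, v ≠ y → v ≤ x ∨ y < v := by
  intro l
  induction l with
  | nil => simp
  | cons a l ih =>
    intro hs hf
    obtain ⟨hs1, hs2⟩ := List.pairwise_cons.mp hs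
    by_cases hxa : x < a
    · rw [List.find?_cons_of_pos (p := fun z => decide (x < z)) (a := a) (l := l) (by simpa using hxa)] at hf
      obtain rfl : a = y := by simpa using hf
      refine ⟨hxa, by simp, ?_⟩
      intro v hv hne
      rcases List.mem_cons.mp hv with rfl | hv
      · exact absurd rfl hne
      · exact Or.inr (hs1 v hv)
    · rw [List.find?_cons_of_neg (p := fun z => decide (x < z)) (a := a) (l := l) (by simpa using hxa)] at hf
      obtain ⟨h1, h2, h3⟩ := ih hs2 hf
      refine ⟨h1, List.mem_cons_of_mem _ h2, ?_⟩
      intro v hv hne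
      rcases List.mem_cons.mp hv with rfl | hv
      · exact Or.inl (by omega)
      · exact h3 v hv hne

lemma find?_eq_some_of_min {x y : ℕ} : ∀ l : List ℕ, l.Pairwise (· < ·) → y ∈ l → x < y →
    (∀ v ∈ l, v ≠ y → v ≤ x ∨ y < v) → l.find? (fun z => decide (x < z)) = some y := by
  intro l
  induction l with
  | nil => simp
  | cons a l ih =>
    intro hs hy hxy hmin
    obtain ⟨hs1, hs2⟩ := List.pairwise_cons.mp hs
    by_cases hay : a = y
    · subst hay
      exact List.find?_cons_of_pos (p := fun z => decide (x < z)) (a := a) (l := l) (by simpa using hxy)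
    · have hyl : y ∈ l := by
        rcases List.mem_cons.mp hy with rfl | h
        · exact absurd rfl hay
        · exact h
      have hax : a ≤ x := by
        rcases hmin a (by simp) hay with h | h
        · exact h
        · exact absurd (hs1 y hyl) (by omega)
      rw [List.find?_cons_of_neg (p := fun z => decide (x < z)) (a := a) (l := l) (by simpa using hax.not_gt)]
      exact ih hs2 hyl hxy (fun v hv hne => hmin v (List.mem_cons_of_mem _ hv) hne)

lemma replace_spec {x y : ℕ} : ∀ l : List ℕ, l.Pairwise (· < ·) → x ∉ l →
    l.find? (fun z => decide (x < z)) = some y →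
    (l.map fun z => if z = y then x else z).Pairwise (· < ·) ∧
    (∀ a, a ∈ (l.map fun z => if z = y then x else z) ↔ (a = x ∨ (a ∈ l ∧ a ≠ y))) := by
  intro l
  induction l with
  | nil => simp
  | cons a l ih =>
    intro hs hx hf
    obtain ⟨hs1, hs2⟩ := List.pairwise_cons.mp hs
    by_cases hxa : x < a
    · rw [List.find?_cons_of_pos (p := fun z => decide (x < z)) (a := a) (l := l) (by simpa using hxa)] at hf
      obtain rfl : a = y := by simpa using hf
      have hne : ∀ z ∈ l, z ≠ a := fun z hz h => absurd (hs1 z hz) (by omega)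
      have hmap : l.map (fun z => if z = a then x else z) = l := by
        rw [show l.map (fun z => if z = a then x else z) = l.map id from
          List.map_congr_left (fun z hz => if_neg (hne z hz)), List.map_id]
      rw [List.map_cons, if_pos rfl, hmap]
      constructor
      · exact List.pairwise_cons.mpr ⟨fun b hb => lt_trans hxa (hs1 b hb), hs2⟩
      · intro c
        simp only [List.mem_cons]
        constructor
        · rintro (rfl | hc)
          · exact Or.inl rfl
          · exact Or.inr ⟨Or.inr hc, hne c hc⟩
        · rintro (rfl | ⟨rfl | hc, hne'⟩)
          · exact Or.inl rfl
          · exact absurd rfl hne'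
          · exact Or.inr hc
    · rw [List.find?_cons_of_neg (p := fun z => decide (x < z)) (a := a) (l := l) (by simpa using hxa)] at hf
      have hxl : x ∉ l := fun h => hx (List.mem_cons_of_mem _ h)
      obtain ⟨ih1, ih2⟩ := ih hs2 hxl hf
      obtain ⟨hxy, hyl, -⟩ := find?_min l hs2 hf
      have hay : a ≠ y := fun h => absurd (hs1 y hyl) (by omega)
      have hax : a ≠ x := fun h => hx (by simp [h])
      rw [List.map_cons, if_neg hay]
      constructor
      · refine List.pairwise_cons.mpr ⟨?_, ih1⟩
        intro b hb
        rcases (ih2 b).mp hb with rfl | ⟨hbl, -⟩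
        · omega
        · exact hs1 b hbl
      · intro c
        simp only [List.mem_cons]
        constructor
        · rintro (rfl | hc)
          · exact Or.inr ⟨Or.inl rfl, hay⟩
          · rcases (ih2 c).mp hc with rfl | ⟨hcl, hcy⟩
            · exact Or.inl rfl
            · exact Or.inr ⟨Or.inr hcl, hcy⟩
        · rintro (rfl | ⟨rfl | hc, hne'⟩)
          · exact Or.inr ((ih2 c).mpr (Or.inl rfl))
          · exact Or.inl rfl
          · exact Or.inr ((ih2 c).mpr (Or.inr ⟨hc, hne'⟩))

end CrowdedAux
namespace CrowdedAux

lemma RSKList_snoc (u : List ℕ) (x : ℕ) :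
    RSKList (u ++ [x]) = rowInsert (RSKList u) x := by
  simp [RSKList, List.foldl_concat]

lemma rowInsert_nil (x : ℕ) : rowInsert [] x = [[x]] := rfl

lemma rowInsert_cons_none {r : List ℕ} {rest : List (List ℕ)} {x : ℕ}
    (hf : r.find? (fun y => decide (x < y)) = none) :
    rowInsert (r :: rest) x = (r ++ [x]) :: rest := by
  simp only [rowInsert, hf]

lemma rowInsert_cons_some {r : List ℕ} {rest : List (List ℕ)} {x y : ℕ}
    (hf : r.find? (fun y => decide (x < y)) = some y) :
    rowInsert (r :: rest) x = (r.map fun z => if z = y then x else z) :: rowInsert rest y := by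
  simp only [rowInsert, hf]

/-- Invariant describing the RSK tableau of a 321-avoiding word. -/
structure Inv (u r1 r2 : List ℕ) : Prop where
  len2 : (RSKList u).length ≤ 2
  row1 : (RSKList u).getD 0 [] = r1
  row2 : (RSKList u).getD 1 [] = r2
  s1 : r1.Pairwise (· < ·)
  s2 : r2.Pairwise (· < ·)
  mem1 : ∀ a ∈ r1, a ∈ u
  mem2 : ∀ a ∈ r2, a ∈ u
  nd : (r1 ++ r2).Nodup
  wit : ∀ z ∈ r2, ∃ p q : ℕ, p < q ∧ q < u.length ∧ u.getD p 0 = z ∧ u.getD q 0 < z ∧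
      ∀ y ∈ r1, y ≤ u.getD q 0 ∨ z < y ∨ ∃ m, q < m ∧ m < u.length ∧ u.getD m 0 = y

lemma inv_nil : Inv [] [] [] := by
  refine ⟨?_, ?_, ?_, ?_, ?_, ?_, ?_, ?_, ?_⟩ <;> simp [RSKList]

lemma tab_cases {u r1 r2 : List ℕ} (h : Inv u r1 r2) :
    (RSKList u = [] ∧ r1 = [] ∧ r2 = []) ∨ (RSKList u = [r1] ∧ r2 = []) ∨
      RSKList u = [r1, r2] := by
  have h0 := h.row1; have h1 := h.row2; have h2 := h.len2
  rcases e : RSKList u with _ | ⟨c, _ | ⟨d, _ | ⟨f, tl⟩⟩⟩ <;> rw [e] at h0 h1 h2 <;>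
    simp at h0 h1 h2
  · exact Or.inl ⟨rfl, h0, h1⟩
  · exact Or.inr (Or.inl ⟨by rw [h0], h1⟩)
  · exact Or.inr (Or.inr (by rw [h0, h1]))

lemma fresh_of_nodup {u : List ℕ} {x : ℕ} (hn : (u ++ [x]).Nodup) : x ∉ u :=
  fun hx => (List.nodup_append'.mp hn).2.2 hx (by simp)

lemma bump_gt {u r1 r2 : List ℕ} {x y : ℕ} (h : Inv u r1 r2)
    (ha : Avoids (u ++ [x])) (hf : r1.find? (fun z => decide (x < z)) = some y) :
    ∀ z ∈ r2, z < y := by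
  obtain ⟨hxy, hyr1, -⟩ := find?_min r1 h.s1 hf
  intro z hz
  have hzy : z ≠ y := by
    intro e; subst e
    exact (List.nodup_append'.mp h.nd).2.2 hyr1 hz
  by_contra hlt
  have hyz : y < z := by omega
  obtain ⟨p, q, hpq, hq, hup, huq, htri⟩ := h.wit z hz
  have hlen : u.length < (u ++ [x]).length := by simp
  rcases htri y hyr1 with h1 | h2 | ⟨m, hm1, hm2, hum⟩
  · refine ha p q u.length hpq hq hlen ⟨?_, ?_⟩
    · rw [getD_snoc, getD_pre _ _ hq]; omega
    · rw [getD_pre _ _ hq, getD_pre _ _ (by omega), hup]; omega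
  · omega
  · refine ha p m u.length (by omega) (by omega) hlen ⟨?_, ?_⟩
    · rw [getD_snoc, getD_pre _ _ hm2, hum]; omega
    · rw [getD_pre _ _ hm2, getD_pre _ _ (by omega), hup, hum]; omega

lemma inv_step_none {u r1 r2 : List ℕ} {x : ℕ} (h : Inv u r1 r2) (hn : (u ++ [x]).Nodup)
    (hf : r1.find? (fun z => decide (x < z)) = none) :
    Inv (u ++ [x]) (r1 ++ [x]) r2 := by
  have hxu : x ∉ u := fresh_of_nodup hn
  have hlt : ∀ a ∈ r1, a < x := by
    intro a ha
    have h1 := List.find?_eq_none.mp hf a ha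
    have hne : a ≠ x := fun e => hxu (e ▸ h.mem1 a ha)
    simp at h1; omega
  have hR := RSKList_snoc u x
  have hnd1 : r1.Nodup := (List.nodup_append'.mp h.nd).1
  have hmem1 : ∀ a ∈ r1 ++ [x], a ∈ u ++ [x] := by
    intro a ha
    rcases List.mem_append.mp ha with ha | ha
    · exact List.mem_append_left _ (h.mem1 a ha)
    · exact List.mem_append_right _ ha
  have hnd' : (r1 ++ [x]).Nodup := by
    refine List.nodup_append'.mpr ⟨hnd1, by simp, ?_⟩
    intro a ha ha'
    simp at ha'; subst ha'
    exact absurd (hlt a ha) (lt_irrefl _)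
  have hwit : ∀ z ∈ r2, ∃ p q : ℕ, p < q ∧ q < (u ++ [x]).length ∧
      (u ++ [x]).getD p 0 = z ∧ (u ++ [x]).getD q 0 < z ∧
      ∀ y ∈ r1 ++ [x], y ≤ (u ++ [x]).getD q 0 ∨ z < y ∨
        ∃ m, q < m ∧ m < (u ++ [x]).length ∧ (u ++ [x]).getD m 0 = y := by
    intro z hz
    obtain ⟨p, q, hpq, hq, hup, huq, htri⟩ := h.wit z hz
    refine ⟨p, q, hpq, by simp; omega, ?_, ?_, ?_⟩
    · rw [getD_pre _ _ (by omega)]; exact hup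
    · rw [getD_pre _ _ hq]; exact huq
    · intro y hy
      rcases List.mem_append.mp hy with hy | hy
      · rcases htri y hy with h1 | h2 | ⟨m, hm1, hm2, hum⟩
        · exact Or.inl (by rw [getD_pre _ _ hq]; exact h1)
        · exact Or.inr (Or.inl h2)
        · exact Or.inr (Or.inr ⟨m, hm1, by simp; omega, by rw [getD_pre _ _ hm2]; exact hum⟩)
      · simp at hy
        exact Or.inr (Or.inr ⟨u.length, by omega, by simp, by rw [getD_snoc]; omega⟩)
  rcases tab_cases h with ⟨e, e1, e2⟩ | ⟨e, e2⟩ | e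
  · subst e1; subst e2
    rw [e, rowInsert_nil] at hR
    exact ⟨by rw [hR]; simp, by rw [hR]; simp, by rw [hR]; simp, by simp,
      by simp, hmem1, by simp, by simpa using hnd', by simp⟩
  · subst e2
    rw [e, rowInsert_cons_none hf] at hR
    exact ⟨by rw [hR]; simp, by rw [hR]; simp, by rw [hR]; simp,
      sorted_snoc h.s1 hlt, by simp, hmem1, by simp, by simpa using hnd', by simp⟩
  · rw [e, rowInsert_cons_none hf] at hR
    refine ⟨by rw [hR]; simp, by rw [hR]; simp, by rw [hR]; simp,
      sorted_snoc h.s1 hlt, h.s2, hmem1,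
      fun a ha => List.mem_append_left _ (h.mem2 a ha), ?_, hwit⟩
    · refine List.nodup_append'.mpr ⟨hnd', (List.nodup_append'.mp h.nd).2.1, ?_⟩
      intro a ha ha'
      rcases List.mem_append.mp ha with ha | ha
      · exact (List.nodup_append'.mp h.nd).2.2 ha ha'
      · simp at ha; subst ha
        exact hxu (h.mem2 _ ha')

lemma inv_step_some {u r1 r2 : List ℕ} {x y : ℕ} (h : Inv u r1 r2) (hn : (u ++ [x]).Nodup)
    (ha : Avoids (u ++ [x]))
    (hf : r1.find? (fun z => decide (x < z)) = some y) :
    Inv (u ++ [x]) (r1.map fun z => if z = y then x else z) (r2 ++ [y]) := by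
  have hxu : x ∉ u := fresh_of_nodup hn
  have hxr1 : x ∉ r1 := fun hx => hxu (h.mem1 x hx)
  obtain ⟨hxy, hyr1, hminy⟩ := find?_min r1 h.s1 hf
  obtain ⟨hrs, hrm⟩ := replace_spec r1 h.s1 hxr1 hf
  have hgt := bump_gt h ha hf
  have hR := RSKList_snoc u x
  obtain ⟨hnd1, hnd2, hdisj⟩ := List.nodup_append'.mp h.nd
  have hyu : y ∈ u := h.mem1 y hyr1
  obtain ⟨py, hpy, hpye⟩ := List.getElem_of_mem hyu
  have hpyD : u.getD py 0 = y := by rw [List.getD_eq_getElem _ _ hpy, hpye]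
  have hmem1' : ∀ a ∈ (r1.map fun z => if z = y then x else z), a ∈ u ++ [x] := by
    intro a ha'
    rcases (hrm a).mp ha' with rfl | ⟨ha1, -⟩
    · exact List.mem_append_right _ (by simp)
    · exact List.mem_append_left _ (h.mem1 a ha1)
  have hs2' : (r2 ++ [y]).Pairwise (· < ·) := sorted_snoc h.s2 hgt
  have hnd' : ((r1.map fun z => if z = y then x else z) ++ (r2 ++ [y])).Nodup := by
    refine List.nodup_append'.mpr ⟨sorted_nodup hrs, sorted_nodup hs2', ?_⟩
    intro a ha' ha''
    rcases (hrm a).mp ha' with rfl | ⟨ha1, hay⟩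
    · rcases List.mem_append.mp ha'' with hb | hb
      · exact hxu (h.mem2 _ hb)
      · simp at hb; omega
    · rcases List.mem_append.mp ha'' with hb | hb
      · exact hdisj ha1 hb
      · simp at hb; exact hay hb
  have hwit' : ∀ z ∈ r2 ++ [y], ∃ p q : ℕ, p < q ∧ q < (u ++ [x]).length ∧
      (u ++ [x]).getD p 0 = z ∧ (u ++ [x]).getD q 0 < z ∧
      ∀ v ∈ (r1.map fun z => if z = y then x else z), v ≤ (u ++ [x]).getD q 0 ∨ z < v ∨
        ∃ m, q < m ∧ m < (u ++ [x]).length ∧ (u ++ [x]).getD m 0 = v := by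
    intro z hz
    rcases List.mem_append.mp hz with hz | hz
    · obtain ⟨p, q, hpq, hq, hup, huq, htri⟩ := h.wit z hz
      refine ⟨p, q, hpq, by simp; omega, by rw [getD_pre _ _ (by omega)]; exact hup,
        by rw [getD_pre _ _ hq]; exact huq, ?_⟩
      intro v hv
      rcases (hrm v).mp hv with hvx | ⟨hv1, -⟩
      · exact Or.inr (Or.inr ⟨u.length, by omega, by simp, by rw [getD_snoc]; omega⟩)
      · rcases htri v hv1 with h1 | h2 | ⟨m, hm1, hm2, hum⟩
        · exact Or.inl (by rw [getD_pre _ _ hq]; exact h1)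
        · exact Or.inr (Or.inl h2)
        · exact Or.inr (Or.inr ⟨m, hm1, by simp; omega, by rw [getD_pre _ _ hm2]; exact hum⟩)
    · simp at hz; subst hz
      refine ⟨py, u.length, hpy, by simp, by rw [getD_pre _ _ hpy]; exact hpyD,
        by rw [getD_snoc]; exact hxy, ?_⟩
      intro v hv
      rcases (hrm v).mp hv with rfl | ⟨hv1, hvy⟩
      · exact Or.inl (by rw [getD_snoc])
      · rcases hminy v hv1 hvy with h1 | h2
        · exact Or.inl (by rw [getD_snoc]; exact h1)
        · exact Or.inr (Or.inl h2)
  rcases tab_cases h with ⟨e, e1, e2⟩ | ⟨e, e2⟩ | e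
  · exfalso; subst e1; simp at hf
  · subst e2
    rw [e, rowInsert_cons_some hf, rowInsert_nil] at hR
    exact ⟨by rw [hR]; simp, by rw [hR]; simp, by rw [hR]; simp, hrs, hs2',
      hmem1', by intro a ha'; simp at ha'; subst ha'; exact List.mem_append_left _ hyu,
      by simpa using hnd', by simpa using hwit'⟩
  · rw [e, rowInsert_cons_some hf] at hR
    have hfr2 : r2.find? (fun z => decide (y < z)) = none := by
      refine List.find?_eq_none.mpr ?_
      intro z hz
      simp only [decide_eq_true_eq]
      exact fun hc => absurd (hgt z hz) (by omega)
    rw [rowInsert_cons_none hfr2] at hR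
    refine ⟨by rw [hR]; simp, by rw [hR]; simp, by rw [hR]; simp, hrs, hs2', hmem1', ?_,
      hnd', hwit'⟩
    intro a ha'
    rcases List.mem_append.mp ha' with ha1 | ha1
    · exact List.mem_append_left _ (h.mem2 a ha1)
    · simp at ha1; subst ha1; exact List.mem_append_left _ hyu

lemma inv_exists : ∀ u : List ℕ, u.Nodup → Avoids u → ∃ r1 r2, Inv u r1 r2 := by
  intro u
  induction u using List.reverseRecOn with
  | nil => exact fun _ _ => ⟨[], [], inv_nil⟩
  | append_singleton u x ih =>
    intro hn ha
    obtain ⟨r1, r2, h⟩ := ih (List.nodup_append'.mp hn).1 (avoids_prefix ha)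
    rcases e : r1.find? (fun z => decide (x < z)) with - | y
    · exact ⟨_, _, inv_step_none h hn e⟩
    · exact ⟨_, _, inv_step_some h hn ha e⟩

end CrowdedAux
namespace CrowdedAux

/-- The two tableau states agree, except possibly one value `b` has been bumped
to the second row on the primed side but not yet on the unprimed side. -/
def Rel (r1 r2 r1' r2' : List ℕ) : Prop :=
  (r1 = r1' ∧ r2 = r2') ∨
  ∃ b, b ∈ r1 ∧ b ∉ r1' ∧ b ∉ r2 ∧
    (∀ a, a ∈ r1 ↔ (a ∈ r1' ∨ a = b)) ∧ (∀ a, a ∈ r2' ↔ (a ∈ r2 ∨ a = b))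

set_option maxHeartbeats 1000000 in
lemma rel_step {u u' r1 r2 r1' r2' : List ℕ} {x : ℕ}
    (h : Inv u r1 r2) (h' : Inv u' r1' r2')
    (hn : (u ++ [x]).Nodup) (hn' : (u' ++ [x]).Nodup)
    (ha : Avoids (u ++ [x])) (ha' : Avoids (u' ++ [x])) (hrel : Rel r1 r2 r1' r2') :
    ∃ t1 t2 t1' t2', Inv (u ++ [x]) t1 t2 ∧ Inv (u' ++ [x]) t1' t2' ∧ Rel t1 t2 t1' t2' := by
  rcases hrel with ⟨e1, e2⟩ | ⟨b, hb1, hb2, hb3, m1, m2⟩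
  · subst e1; subst e2
    rcases e : r1.find? (fun z => decide (x < z)) with - | y
    · exact ⟨_, _, _, _, inv_step_none h hn e, inv_step_none h' hn' e, Or.inl ⟨rfl, rfl⟩⟩
    · exact ⟨_, _, _, _, inv_step_some h hn ha e, inv_step_some h' hn' ha' e,
        Or.inl ⟨rfl, rfl⟩⟩
  · have hxu : x ∉ u := fresh_of_nodup hn
    have hxu' : x ∉ u' := fresh_of_nodup hn'
    have hbu : b ∈ u := h.mem1 b hb1
    have hbx : b ≠ x := fun e => hxu (e ▸ hbu)
    have hxr1 : x ∉ r1 := fun hx => hxu (h.mem1 x hx)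
    have hxr1' : x ∉ r1' := fun hx => hxu' (h'.mem1 x hx)
    obtain ⟨hnd1, hnd2, hdisj⟩ := List.nodup_append'.mp h.nd
    rcases e : r1.find? (fun z => decide (x < z)) with - | y
    · have e' : r1'.find? (fun z => decide (x < z)) = none := by
        refine List.find?_eq_none.mpr (fun v hv => ?_)
        exact List.find?_eq_none.mp e v ((m1 v).mpr (Or.inl hv))
      refine ⟨_, _, _, _, inv_step_none h hn e, inv_step_none h' hn' e',
        Or.inr ⟨b, List.mem_append_left _ hb1, ?_, hb3, ?_, m2⟩⟩
      · intro hc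
        rcases List.mem_append.mp hc with hc | hc
        · exact hb2 hc
        · exact hbx (by simpa using hc)
      · intro a
        have hm := m1 a
        have hax : a = b → ¬ a = x := fun e1 e2 => hbx (e1 ▸ e2)
        simp only [List.mem_append, List.mem_singleton]
        tauto
    · obtain ⟨hxy, hyr1, hminy⟩ := find?_min r1 h.s1 e
      by_cases hyb : y = b
      · subst hyb
        have I := inv_step_some h hn ha e
        obtain ⟨-, hrm⟩ := replace_spec r1 h.s1 hxr1 e
        rcases e' : r1'.find? (fun z => decide (x < z)) with - | c
        · have I' := inv_step_none h' hn' e'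
          refine ⟨_, _, _, _, I, I', Or.inl ⟨?_, ?_⟩⟩
          · refine sorted_ext I.s1 I'.s1 ?_
            intro a
            have hm := m1 a
            have hab : a ∈ r1' → a ≠ y := fun h1 e1 => hb2 (e1 ▸ h1)
            rw [hrm a]
            simp only [List.mem_append, List.mem_singleton]
            tauto
          · refine sorted_ext I.s2 h'.s2 ?_
            intro a
            have hm := m2 a
            simp only [List.mem_append, List.mem_singleton]
            tauto
        · obtain ⟨hxc, hcr1', hminc⟩ := find?_min r1' h'.s1 e'
          have hcb : c ≠ y := fun e1 => hb2 (e1 ▸ hcr1')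
          have hcr1 : c ∈ r1 := (m1 c).mpr (Or.inl hcr1')
          have hbc : y < c := by
            rcases hminy c hcr1 hcb with h1 | h1
            · omega
            · exact h1
          have I' := inv_step_some h' hn' ha' e'
          obtain ⟨-, hrm'⟩ := replace_spec r1' h'.s1 hxr1' e'
          refine ⟨_, _, _, _, I, I', Or.inr ⟨c, ?_, ?_, ?_, ?_, ?_⟩⟩
          · exact (hrm c).mpr (Or.inr ⟨hcr1, hcb⟩)
          · intro hc
            rcases (hrm' c).mp hc with h1 | ⟨-, h1⟩
            · omega
            · exact h1 rfl
          · intro hc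
            rcases List.mem_append.mp hc with hc | hc
            · exact hdisj hcr1 hc
            · exact hcb (by simpa using hc)
          · intro a
            have hm := m1 a
            have h1 : a ∈ r1' → a ≠ y := fun h1 e1 => hb2 (e1 ▸ h1)
            have h2 : a = c → a ∈ r1' := fun e1 => e1 ▸ hcr1'
            have h3 : a = c → a ≠ y := fun e1 => e1 ▸ hcb
            rw [hrm a, hrm' a]
            tauto
          · intro a
            have hm := m2 a
            simp only [List.mem_append, List.mem_singleton]
            tauto
      · have hyr1' : y ∈ r1' := by
          rcases (m1 y).mp hyr1 with h1 | h1
          · exact h1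
          · exact absurd h1 hyb
        have e' : r1'.find? (fun z => decide (x < z)) = some y :=
          find?_eq_some_of_min r1' h'.s1 hyr1' hxy
            (fun v hv hne => hminy v ((m1 v).mpr (Or.inl hv)) hne)
        have hbx' : b < x := by
          have hbgt := bump_gt h' ha' e'
          have hbr2' : b ∈ r2' := (m2 b).mpr (Or.inr rfl)
          have hblty : b < y := hbgt b hbr2'
          rcases hminy b hb1 (fun e1 => hyb e1.symm) with h1 | h1
          · omega
          · omega
        have I := inv_step_some h hn ha e
        have I' := inv_step_some h' hn' ha' e'
        obtain ⟨-, hrm⟩ := replace_spec r1 h.s1 hxr1 e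
        obtain ⟨-, hrm'⟩ := replace_spec r1' h'.s1 hxr1' e'
        refine ⟨_, _, _, _, I, I', Or.inr ⟨b, ?_, ?_, ?_, ?_, ?_⟩⟩
        · exact (hrm b).mpr (Or.inr ⟨hb1, fun e1 => hyb e1.symm⟩)
        · intro hc
          rcases (hrm' b).mp hc with h1 | ⟨h1, -⟩
          · exact hbx h1
          · exact hb2 h1
        · intro hc
          rcases List.mem_append.mp hc with hc | hc
          · exact hb3 hc
          · exact hyb (show b = y by simpa using hc).symm
        · intro a
          have hm := m1 a
          have h1 : a ∈ r1' → a ≠ b := fun h1 e1 => hb2 (e1 ▸ h1)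
          have h2 : a = b → a ≠ y := fun e1 e2 => hyb (e1 ▸ e2 : b = y).symm
          have h3 : a = b → ¬ a = x := fun e1 e2 => hbx (e1 ▸ e2)
          rw [hrm a, hrm' a]
          tauto
        · intro a
          have hm := m2 a
          simp only [List.mem_append, List.mem_singleton]
          tauto

lemma suffix_sub : ∀ (S u u' r1 r2 r1' r2' : List ℕ),
    Inv u r1 r2 → Inv u' r1' r2' →
    (u ++ S).Nodup → (u' ++ S).Nodup → Avoids (u ++ S) → Avoids (u' ++ S) →
    Rel r1 r2 r1' r2' →
    ∀ a ∈ (RSKList (u ++ S)).getD 1 [], a ∈ (RSKList (u' ++ S)).getD 1 [] := by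
  intro S
  induction S with
  | nil =>
    intro u u' r1 r2 r1' r2' h h' _ _ _ _ hrel a haR
    rw [List.append_nil] at haR ⊢
    rw [h.row2] at haR
    rw [h'.row2]
    rcases hrel with ⟨e1, e2⟩ | ⟨b, -, -, -, -, m2⟩
    · exact e2 ▸ haR
    · exact (m2 a).mpr (Or.inl haR)
  | cons x S ih =>
    intro u u' r1 r2 r1' r2' h h' hn hn' ha ha' hrel
    have hass : u ++ x :: S = (u ++ [x]) ++ S := by simp
    have hass' : u' ++ x :: S = (u' ++ [x]) ++ S := by simp
    rw [hass] at hn ha ⊢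
    rw [hass'] at hn' ha' ⊢
    obtain ⟨t1, t2, t1', t2', I, I', R⟩ := rel_step h h'
      (List.nodup_append'.mp (by rwa [List.append_assoc] at hn)).1
      (List.nodup_append'.mp (by rwa [List.append_assoc] at hn')).1
      (avoids_prefix ha) (avoids_prefix ha') hrel
    exact ih (u ++ [x]) (u' ++ [x]) t1 t2 t1' t2' I I' hn hn' ha ha' R

end CrowdedAux
namespace CrowdedAux

lemma getD2_at (P S : List ℕ) (c d : ℕ) :
    (P ++ c :: d :: S).getD P.length 0 = c ∧ (P ++ c :: d :: S).getD (P.length + 1) 0 = d ∧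
    ∀ j, P.length + 2 ≤ j → (P ++ c :: d :: S).getD j 0 = S.getD (j - P.length - 2) 0 := by
  refine ⟨?_, ?_, ?_⟩
  · rw [List.getD_append_right _ _ _ _ le_rfl]; simp
  · rw [List.getD_append_right _ _ _ _ (by omega)]
    have : P.length + 1 - P.length = 1 := by omega
    rw [this]; rfl
  · intro j hj
    rw [List.getD_append_right _ _ _ _ (by omega)]
    have h2 : j - P.length = (j - P.length - 2) + 1 + 1 := by omega
    rw [h2]
    rfl

lemma avoids_transfer (P S : List ℕ) (a b : ℕ) (hab : a < b)
    (h : Avoids (P ++ b :: a :: S)) : Avoids (P ++ a :: b :: S) := by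
  obtain ⟨gc, gd, gs⟩ := getD2_at P S a b
  obtain ⟨gc', gd', gs'⟩ := getD2_at P S b a
  intro p q r hpq hqr hr hcon
  obtain ⟨h1, h2⟩ := hcon
  set L := P.length with hL
  set f : ℕ → ℕ := fun j => if j = L then L + 1 else if j = L + 1 then L else j with hf
  have hlen : (P ++ b :: a :: S).length = (P ++ a :: b :: S).length := by simp
  have key : ∀ j, j < (P ++ a :: b :: S).length →
      (P ++ b :: a :: S).getD (f j) 0 = (P ++ a :: b :: S).getD j 0 := by
    intro j hj
    by_cases e1 : j = L
    · subst e1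
      have hfv : f L = L + 1 := by simp only [hf]; split_ifs <;> omega
      rw [hfv, gd', gc]
    · by_cases e2 : j = L + 1
      · subst e2
        have hfv : f (L + 1) = L := by simp only [hf]; split_ifs <;> omega
        rw [hfv, gc', gd]
      · have hfv : f j = j := by simp only [hf]; split_ifs <;> omega
        rw [hfv]
        by_cases e3 : j < L
        · rw [getD_pre _ _ e3, getD_pre _ _ e3]
        · have h4 : L + 2 ≤ j := by omega
          rw [gs j h4, gs' j h4]
  have hpqne : ¬ (p = L ∧ q = L + 1) := by
    rintro ⟨rfl, rfl⟩
    rw [gc, gd] at h2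
    omega
  have hqrne : ¬ (q = L ∧ r = L + 1) := by
    rintro ⟨rfl, rfl⟩
    rw [gc, gd] at h1
    omega
  have horder : ∀ s t, s < t → ¬ (s = L ∧ t = L + 1) → f s < f t := by
    intro s t hst hne
    simp only [hf]
    split_ifs <;> omega
  have hflt : f r < (P ++ b :: a :: S).length := by
    rw [hlen]
    have h5 : L + 2 ≤ (P ++ a :: b :: S).length := by
      simp only [List.length_append, List.length_cons, hL]; omega
    simp only [hf]
    split_ifs <;> omega
  refine h (f p) (f q) (f r) (horder p q hpq hpqne) (horder q r hqr hqrne) hflt ?_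
  rw [key p (by omega), key q (by omega), key r hr]
  exact ⟨h1, h2⟩

lemma prefix_lt (P S : List ℕ) (a b : ℕ) (hab : a < b) (hn : (P ++ b :: a :: S).Nodup)
    (h : Avoids (P ++ b :: a :: S)) : ∀ v ∈ P, v < b := by
  obtain ⟨gc', gd', -⟩ := getD2_at P S b a
  intro v hv
  obtain ⟨p, hp, hpe⟩ := List.getElem_of_mem hv
  have hgd : (P ++ b :: a :: S).getD p 0 = v := by
    rw [getD_pre _ _ hp, List.getD_eq_getElem _ _ hp, hpe]
  have hvb : v ≠ b := by
    intro e
    exact (List.nodup_append'.mp hn).2.2 hv (by simp [e])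
  by_contra hbv
  refine h p P.length (P.length + 1) hp (by omega) (by simp) ⟨?_, ?_⟩
  · rw [gd', gc']; exact hab
  · rw [gc', hgd]; omega

lemma core (P S : List ℕ) (a b : ℕ) (hab : a < b)
    (hn : (P ++ a :: b :: S).Nodup) (hn' : (P ++ b :: a :: S).Nodup)
    (ha : Avoids (P ++ a :: b :: S)) (ha' : Avoids (P ++ b :: a :: S)) :
    ∀ z ∈ (RSKList (P ++ a :: b :: S)).getD 1 [], z ∈ (RSKList (P ++ b :: a :: S)).getD 1 [] := by
  obtain ⟨hndP, hnd2, hdisj⟩ := List.nodup_append'.mp hn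
  have haP : a ∉ P := fun hc => hdisj hc (by simp)
  have hPb : ∀ v ∈ P, v < b := prefix_lt P S a b hab hn' ha'
  obtain ⟨p1, p2, hP⟩ := inv_exists P hndP (avoids_prefix (v := a :: b :: S) ha)
  have hp1b : ∀ v ∈ p1, v < b := fun v hv => hPb v (hP.mem1 v hv)
  have hp2b : ∀ v ∈ p2, v < b := fun v hv => hPb v (hP.mem2 v hv)
  have e1 : P ++ a :: b :: S = ((P ++ [a]) ++ [b]) ++ S := by simp
  have e1' : P ++ b :: a :: S = ((P ++ [b]) ++ [a]) ++ S := by simp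
  have hnfull : (((P ++ [a]) ++ [b]) ++ S).Nodup := by rwa [e1] at hn
  have hnfull' : (((P ++ [b]) ++ [a]) ++ S).Nodup := by rwa [e1'] at hn'
  have hafull : Avoids (((P ++ [a]) ++ [b]) ++ S) := by rwa [e1] at ha
  have hafull' : Avoids (((P ++ [b]) ++ [a]) ++ S) := by rwa [e1'] at ha'
  have hnab : ((P ++ [a]) ++ [b]).Nodup := (List.nodup_append'.mp hnfull).1
  have hnba : ((P ++ [b]) ++ [a]).Nodup := (List.nodup_append'.mp hnfull').1
  have haab : Avoids ((P ++ [a]) ++ [b]) := avoids_prefix hafull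
  have haba : Avoids ((P ++ [b]) ++ [a]) := avoids_prefix hafull'
  have hna : (P ++ [a]).Nodup := (List.nodup_append'.mp hnab).1
  have hnb : (P ++ [b]).Nodup := (List.nodup_append'.mp hnba).1
  have haa : Avoids (P ++ [a]) := avoids_prefix haab
  have efb : p1.find? (fun z => decide (b < z)) = none := by
    refine List.find?_eq_none.mpr (fun v hv => ?_)
    have := hp1b v hv
    simp only [decide_eq_true_eq]
    omega
  have I1' : Inv (P ++ [b]) (p1 ++ [b]) p2 := inv_step_none hP hnb efb
  rcases ea : p1.find? (fun z => decide (a < z)) with - | y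
  · -- a appends to the first row of P's tableau
    have I1 : Inv (P ++ [a]) (p1 ++ [a]) p2 := inv_step_none hP hna ea
    have efb2 : (p1 ++ [a]).find? (fun z => decide (b < z)) = none := by
      refine List.find?_eq_none.mpr (fun v hv => ?_)
      simp only [decide_eq_true_eq]
      rcases List.mem_append.mp hv with hv | hv
      · have := hp1b v hv; omega
      · simp at hv; omega
    have I2 : Inv ((P ++ [a]) ++ [b]) ((p1 ++ [a]) ++ [b]) p2 := inv_step_none I1 hnab efb2
    have efa : (p1 ++ [b]).find? (fun z => decide (a < z)) = some b := by
      rw [List.find?_append, ea]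
      simp [hab]
    have I2' : Inv ((P ++ [b]) ++ [a]) ((p1 ++ [b]).map fun z => if z = b then a else z)
        (p2 ++ [b]) := inv_step_some I1' hnba haba efa
    have hanotin : a ∉ p1 ++ [b] := by
      intro hc
      rcases List.mem_append.mp hc with hc | hc
      · exact haP (hP.mem1 a hc)
      · simp at hc; omega
    obtain ⟨-, hrm'⟩ := replace_spec (p1 ++ [b]) I1'.s1 hanotin efa
    have R : Rel ((p1 ++ [a]) ++ [b]) p2
        ((p1 ++ [b]).map fun z => if z = b then a else z) (p2 ++ [b]) := by
      refine Or.inr ⟨b, by simp, ?_, fun hc => absurd (hp2b b hc) (lt_irrefl _), ?_, ?_⟩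
      · intro hc
        rcases (hrm' b).mp hc with h1 | ⟨-, h1⟩
        · omega
        · exact h1 rfl
      · intro c
        have hmc := hrm' c
        have hc1 : c ∈ p1 → c ≠ b := fun h1 e => absurd (hp1b c h1) (e ▸ lt_irrefl c)
        rw [hmc]
        simp only [List.mem_append, List.mem_singleton]
        tauto
      · intro c
        simp only [List.mem_append, List.mem_singleton]
    intro z hz
    rw [e1'] 
    rw [e1] at hz
    exact suffix_sub S ((P ++ [a]) ++ [b]) ((P ++ [b]) ++ [a]) _ _ _ _ I2 I2'
      hnfull hnfull' hafull hafull' R z hz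
  · -- a bumps y from the first row of P's tableau
    obtain ⟨hay, hyp1, hminy⟩ := find?_min p1 hP.s1 ea
    have hyb : y < b := hp1b y hyp1
    have I1 : Inv (P ++ [a]) (p1.map fun z => if z = y then a else z) (p2 ++ [y]) :=
      inv_step_some hP hna haa ea
    obtain ⟨-, hrm⟩ := replace_spec p1 hP.s1 (fun hc => haP (hP.mem1 a hc)) ea
    have efb2 : ((p1.map fun z => if z = y then a else z)).find?
        (fun z => decide (b < z)) = none := by
      refine List.find?_eq_none.mpr (fun v hv => ?_)
      simp only [decide_eq_true_eq]
      rcases (hrm v).mp hv with rfl | ⟨h1, -⟩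
      · omega
      · have := hp1b v h1; omega
    have I2 : Inv ((P ++ [a]) ++ [b]) ((p1.map fun z => if z = y then a else z) ++ [b])
        (p2 ++ [y]) := inv_step_none I1 hnab efb2
    have efa : (p1 ++ [b]).find? (fun z => decide (a < z)) = some y := by
      rw [List.find?_append, ea]
      rfl
    have I2' : Inv ((P ++ [b]) ++ [a]) ((p1 ++ [b]).map fun z => if z = y then a else z)
        (p2 ++ [y]) := inv_step_some I1' hnba haba efa
    have hbmap : (p1 ++ [b]).map (fun z => if z = y then a else z) =
        (p1.map fun z => if z = y then a else z) ++ [b] := by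
      rw [List.map_append]
      congr 1
      simp only [List.map_cons, List.map_nil]
      rw [if_neg (show b ≠ y from fun e => absurd hyb (e ▸ lt_irrefl b))]
    have R : Rel ((p1.map fun z => if z = y then a else z) ++ [b]) (p2 ++ [y])
        ((p1 ++ [b]).map fun z => if z = y then a else z) (p2 ++ [y]) :=
      Or.inl ⟨hbmap.symm, rfl⟩
    intro z hz
    rw [e1']
    rw [e1] at hz
    exact suffix_sub S ((P ++ [a]) ++ [b]) ((P ++ [b]) ++ [a]) _ _ _ _ I2 I2'
      hnfull hnfull' hafull hafull' R z hz

end CrowdedAux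
namespace CrowdedAux

lemma oneLine_length {n : ℕ} (w : Equiv.Perm (Fin n)) : (oneLine w).length = n := by
  simp [oneLine]

lemma oneLine_getElem {n : ℕ} (w : Equiv.Perm (Fin n)) {j : ℕ}
    (hj : j < (oneLine w).length) :
    (oneLine w)[j] = (w ⟨j, by rwa [oneLine_length] at hj⟩ : ℕ) := by
  simp [oneLine]

lemma oneLine_getD {n : ℕ} (w : Equiv.Perm (Fin n)) {j : ℕ} (hj : j < n) :
    (oneLine w).getD j 0 = (w ⟨j, hj⟩ : ℕ) := by
  rw [List.getD_eq_getElem _ _ (by rwa [oneLine_length]), oneLine_getElem]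

lemma oneLine_nodup {n : ℕ} (w : Equiv.Perm (Fin n)) : (oneLine w).Nodup := by
  rw [oneLine, List.nodup_ofFn]
  intro a c hac
  exact w.injective (Fin.val_injective hac)

lemma fc_iff_avoids {n : ℕ} (w : Equiv.Perm (Fin n)) :
    FullyCommutative w ↔ Avoids (oneLine w) := by
  constructor
  · intro hfc p q r hpq hqr hr hc
    rw [oneLine_length] at hr
    rw [oneLine_getD w (show r < n from hr), oneLine_getD w (show q < n by omega),
      oneLine_getD w (show p < n by omega)] at hc
    exact hfc ⟨⟨p, by omega⟩, ⟨q, by omega⟩, ⟨r, hr⟩, by rw [Fin.lt_def]; exact hpq,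
      by rw [Fin.lt_def]; exact hqr, by rw [Fin.lt_def]; exact hc.1,
      by rw [Fin.lt_def]; exact hc.2⟩
  · rintro hav ⟨i, j, k, hij, hjk, h1, h2⟩
    refine hav i j k (Fin.lt_def.mp hij) (Fin.lt_def.mp hjk)
      (by rw [oneLine_length]; exact k.isLt) ?_
    rw [oneLine_getD w k.isLt, oneLine_getD w j.isLt, oneLine_getD w i.isLt,
      Fin.eta, Fin.eta, Fin.eta]
    exact ⟨Fin.lt_def.mp h1, Fin.lt_def.mp h2⟩

lemma simpleTr_left {n i : ℕ} (h : i + 1 < n) :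
    simpleTr i h ⟨i, by omega⟩ = ⟨i + 1, h⟩ := Equiv.swap_apply_left _ _

lemma simpleTr_right {n i : ℕ} (h : i + 1 < n) :
    simpleTr i h ⟨i + 1, h⟩ = ⟨i, by omega⟩ := Equiv.swap_apply_right _ _

lemma simpleTr_other {n i j : ℕ} (h : i + 1 < n) (hj : j < n) (h1 : j ≠ i) (h2 : j ≠ i + 1) :
    simpleTr i h ⟨j, hj⟩ = ⟨j, hj⟩ :=
  Equiv.swap_apply_of_ne_of_ne (fun hc => h1 (by simpa [Fin.ext_iff] using hc))
    (fun hc => h2 (by simpa [Fin.ext_iff] using hc))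

lemma simpleTr_invol {n i : ℕ} (h : i + 1 < n) (p : Fin n) :
    simpleTr i h (simpleTr i h p) = p := Equiv.swap_apply_self _ _ _

set_option maxHeartbeats 1000000 in
lemma invCount_mul_swap {n : ℕ} (u : Equiv.Perm (Fin n)) (i : ℕ) (h : i + 1 < n)
    (hasc : u ⟨i, by omega⟩ < u ⟨i + 1, h⟩) :
    invCount (u * simpleTr i h) = invCount u + 1 := by
  set s := simpleTr i h with hs
  set i0 : Fin n := ⟨i, by omega⟩ with hi0
  set i1 : Fin n := ⟨i + 1, h⟩ with hi1
  have hval : ∀ p : Fin n, ((s p : Fin n) : ℕ) =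
      if (p : ℕ) = i then i + 1 else if (p : ℕ) = i + 1 then i else (p : ℕ) := by
    intro p
    rcases eq_or_ne p i0 with rfl | hp0
    · rw [hs, simpleTr_left h, if_pos rfl]
    · rcases eq_or_ne p i1 with rfl | hp1
      · rw [hs, simpleTr_right h]
        rw [show ((i1 : Fin n) : ℕ) = i + 1 from rfl, if_neg (by omega), if_pos rfl]
        try rfl
      · have hfix : s p = p := by
          rw [hs]
          rcases p with ⟨pv, hpv⟩
          exact simpleTr_other h hpv (fun hc => hp0 (by simp [hi0, Fin.ext_iff, hc]))
            (fun hc => hp1 (by simp [hi1, Fin.ext_iff, hc]))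
        rw [hfix, if_neg (fun hc => hp0 (by simp [hi0, Fin.ext_iff, hc])),
          if_neg (fun hc => hp1 (by simp [hi1, Fin.ext_iff, hc]))]
  have hss : ∀ p : Fin n, s (s p) = p := fun p => by rw [hs]; exact simpleTr_invol h p
  have horder : ∀ p q : Fin n, p < q → ¬(p = i0 ∧ q = i1) → s p < s q := by
    intro p q hpq hne
    have hpq' : (p : ℕ) < (q : ℕ) := Fin.lt_def.mp hpq
    have hne' : ¬((p : ℕ) = i ∧ (q : ℕ) = i + 1) := by
      intro hc
      exact hne ⟨Fin.ext hc.1, Fin.ext hc.2⟩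
    rw [Fin.lt_def, hval p, hval q]
    split_ifs <;> omega
  have hii : (i0, i1) ∈ Finset.univ.filter
      (fun p : Fin n × Fin n => p.1 < p.2 ∧ (u * s) p.2 < (u * s) p.1) := by
    refine Finset.mem_filter.mpr ⟨Finset.mem_univ _, Fin.lt_def.mpr (show i < i + 1 by omega), ?_⟩
    rw [Equiv.Perm.mul_apply, Equiv.Perm.mul_apply, hs, simpleTr_left h, simpleTr_right h]
    exact hasc
  have hcard : ((Finset.univ.filter
        (fun p : Fin n × Fin n => p.1 < p.2 ∧ (u * s) p.2 < (u * s) p.1)).erase (i0, i1)).card =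
      (Finset.univ.filter (fun p : Fin n × Fin n => p.1 < p.2 ∧ u p.2 < u p.1)).card := by
    refine Finset.card_bij (fun p _ => (s p.1, s p.2)) ?_ ?_ ?_
    · intro p hp
      have hne := (Finset.mem_erase.mp hp).1
      have hmem := Finset.mem_filter.mp (Finset.mem_erase.mp hp).2
      obtain ⟨-, hlt, hinvp⟩ := hmem
      have hnepair : ¬(p.1 = i0 ∧ p.2 = i1) := fun hc => hne (Prod.ext hc.1 hc.2)
      refine Finset.mem_filter.mpr ⟨Finset.mem_univ _, horder _ _ hlt hnepair, ?_⟩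
      rw [Equiv.Perm.mul_apply, Equiv.Perm.mul_apply] at hinvp
      exact hinvp
    · intro p hp q hq heq
      have h1 : s p.1 = s q.1 := congrArg Prod.fst heq
      have h2 : s p.2 = s q.2 := congrArg Prod.snd heq
      exact Prod.ext (s.injective h1) (s.injective h2)
    · intro q hq
      obtain ⟨-, hlt, hinvq⟩ := Finset.mem_filter.mp hq
      have hnepair : ¬(q.1 = i0 ∧ q.2 = i1) := by
        rintro ⟨e1, e2⟩
        rw [e1, e2] at hinvq
        exact absurd hasc (not_lt.mpr (le_of_lt hinvq))
      refine ⟨(s q.1, s q.2), Finset.mem_erase.mpr ⟨?_, Finset.mem_filter.mpr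
        ⟨Finset.mem_univ _, horder _ _ hlt hnepair, ?_⟩⟩, ?_⟩
      · intro hc
        have e1 : s q.1 = i0 := congrArg Prod.fst hc
        have e2 : s q.2 = i1 := congrArg Prod.snd hc
        have f1 : q.1 = s i0 := by rw [← e1, hss]
        have f2 : q.2 = s i1 := by rw [← e2, hss]
        rw [hs, simpleTr_left h] at f1
        rw [hs, simpleTr_right h] at f2
        have := Fin.lt_def.mp hlt
        rw [f1, f2] at this
        have h9 : (i + 1 : ℕ) < i := this
        omega
      · rw [Equiv.Perm.mul_apply, Equiv.Perm.mul_apply, hss, hss]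
        try exact hinvq
      · exact Prod.ext (hss q.1) (hss q.2)
  have hcnt := Finset.card_erase_add_one hii
  unfold invCount
  omega

lemma ascent_of_cover {n : ℕ} {v : Equiv.Perm (Fin n)} {i : ℕ} {h : i + 1 < n}
    (hinv : invCount (v * simpleTr i h) = invCount v + 1) :
    v ⟨i, by omega⟩ < v ⟨i + 1, h⟩ := by
  by_contra hc
  have hne : v ⟨i, by omega⟩ ≠ v ⟨i + 1, h⟩ := fun e => by
    have := v.injective e
    simp [Fin.ext_iff] at this
  have hba : v ⟨i + 1, h⟩ < v ⟨i, by omega⟩ :=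
    lt_of_le_of_ne (not_lt.mp hc) (fun e => hne e.symm)
  have hw : (v * simpleTr i h) ⟨i, by omega⟩ < (v * simpleTr i h) ⟨i + 1, h⟩ := by
    rw [Equiv.Perm.mul_apply, Equiv.Perm.mul_apply, simpleTr_left h, simpleTr_right h]
    exact hba
  have h2 : invCount (v * simpleTr i h * simpleTr i h) = invCount (v * simpleTr i h) + 1 :=
    invCount_mul_swap _ i h hw
  have h3 : v * simpleTr i h * simpleTr i h = v := by
    rw [mul_assoc, show simpleTr i h * simpleTr i h = 1 from Equiv.swap_mul_self _ _, mul_one]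
  rw [h3] at h2
  omega

lemma oneLine_decomp {n : ℕ} (v : Equiv.Perm (Fin n)) {i : ℕ} (h : i + 1 < n) :
    oneLine v = (oneLine v).take i ++ (v ⟨i, by omega⟩ : ℕ) :: (v ⟨i + 1, h⟩ : ℕ) ::
      (oneLine v).drop (i + 2) := by
  have hlen : (oneLine v).length = n := oneLine_length v
  have h1 : (oneLine v).drop i = (oneLine v)[i]'(by omega) :: (oneLine v).drop (i + 1) :=
    List.drop_eq_getElem_cons (by omega)
  have h2 : (oneLine v).drop (i + 1) =
      (oneLine v)[i + 1]'(by omega) :: (oneLine v).drop (i + 2) :=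
    List.drop_eq_getElem_cons (by omega)
  conv_lhs => rw [← List.take_append_drop i (oneLine v)]
  rw [h1, h2, oneLine_getElem, oneLine_getElem]

lemma oneLine_mul {n : ℕ} (v : Equiv.Perm (Fin n)) {i : ℕ} (h : i + 1 < n) :
    oneLine (v * simpleTr i h) = (oneLine v).take i ++ (v ⟨i + 1, h⟩ : ℕ) ::
      (v ⟨i, by omega⟩ : ℕ) :: (oneLine v).drop (i + 2) := by
  rw [oneLine_decomp (v * simpleTr i h) h]
  congr 1
  · apply List.ext_getElem (by simp [oneLine_length])
    intro j h1 h2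
    have hj : j < i ∧ j < n := by simpa [oneLine_length] using h2
    rw [List.getElem_take, List.getElem_take, oneLine_getElem, oneLine_getElem,
      Equiv.Perm.mul_apply, simpleTr_other h (by omega) (by omega) (by omega)]
  congr 1
  · rw [Equiv.Perm.mul_apply, simpleTr_left h]
  congr 1
  · rw [Equiv.Perm.mul_apply, simpleTr_right h]
  · apply List.ext_getElem (by simp [oneLine_length])
    intro j h1 h2
    have hjn : i + 2 + j < n := by
      simp only [List.length_drop, oneLine_length] at h2; omega
    rw [List.getElem_drop, List.getElem_drop, oneLine_getElem, oneLine_getElem,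
      Equiv.Perm.mul_apply, simpleTr_other h (by omega) (by omega) (by omega)]

lemma cover_step {n : ℕ} {v w : Equiv.Perm (Fin n)} (hc : RWCovers v w)
    (hw : FullyCommutative w) :
    FullyCommutative v ∧ ∀ z ∈ (RSKP v).getD 1 [], z ∈ (RSKP w).getD 1 [] := by
  obtain ⟨i, h, heq, hinv⟩ := hc
  have hasc : v ⟨i, by omega⟩ < v ⟨i + 1, h⟩ := ascent_of_cover (by rw [← heq]; exact hinv)
  have hab : ((v ⟨i, by omega⟩ : Fin n) : ℕ) < ((v ⟨i + 1, h⟩ : Fin n) : ℕ) := Fin.lt_def.mp hasc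
  have hl := oneLine_decomp v h
  have hl' : oneLine w = (oneLine v).take i ++ ((v ⟨i + 1, h⟩ : Fin n) : ℕ) ::
      ((v ⟨i, by omega⟩ : Fin n) : ℕ) :: (oneLine v).drop (i + 2) := by
    rw [heq]; exact oneLine_mul v h
  have hA' : Avoids ((oneLine v).take i ++ ((v ⟨i + 1, h⟩ : Fin n) : ℕ) ::
      ((v ⟨i, by omega⟩ : Fin n) : ℕ) :: (oneLine v).drop (i + 2)) := by
    rw [← hl']; exact (fc_iff_avoids w).mp hw
  have hN : ((oneLine v).take i ++ ((v ⟨i, by omega⟩ : Fin n) : ℕ) ::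
      ((v ⟨i + 1, h⟩ : Fin n) : ℕ) :: (oneLine v).drop (i + 2)).Nodup := by
    rw [← hl]; exact oneLine_nodup v
  have hN' : ((oneLine v).take i ++ ((v ⟨i + 1, h⟩ : Fin n) : ℕ) ::
      ((v ⟨i, by omega⟩ : Fin n) : ℕ) :: (oneLine v).drop (i + 2)).Nodup := by
    rw [← hl']; exact oneLine_nodup w
  have hA : Avoids ((oneLine v).take i ++ ((v ⟨i, by omega⟩ : Fin n) : ℕ) ::
      ((v ⟨i + 1, h⟩ : Fin n) : ℕ) :: (oneLine v).drop (i + 2)) :=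
    avoids_transfer _ _ _ _ hab hA'
  constructor
  · exact (fc_iff_avoids v).mpr (by rw [hl]; exact hA)
  · intro z hz
    rw [RSKP, hl']
    refine core _ _ _ _ hab hN hN' hA hA' z ?_
    rw [RSKP, hl] at hz
    exact hz

lemma key {n : ℕ} (v w : Equiv.Perm (Fin n)) (hle : RightWeakLE v w) :
    FullyCommutative w →
      FullyCommutative v ∧ ∀ z ∈ (RSKP v).getD 1 [], z ∈ (RSKP w).getD 1 [] := by
  induction hle with
  | refl => exact fun hv => ⟨hv, fun z hz => hz⟩
  | tail hstep hcov ih =>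
    intro hw
    obtain ⟨hfcb, hsub⟩ := cover_step hcov hw
    obtain ⟨hfcv, hsub'⟩ := ih hfcb
    exact ⟨hfcv, fun z hz => hsub z (hsub' z hz)⟩

end CrowdedAux
/-- **Lemma.** In the right weak order on fully commutative permutations, the
uncrowded permutations form an order ideal and the crowded permutations a dual
order ideal. -/
theorem uncrowded_order_ideal {n : ℕ} (v w : Equiv.Perm (Fin n))
    (hv : FullyCommutative v) (hw : FullyCommutative w)
    (hle : RightWeakLE v w) :
    (¬ CrowdedPerm w → ¬ CrowdedPerm v) ∧ (CrowdedPerm v → CrowdedPerm w) := by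
  obtain ⟨-, hsub⟩ := CrowdedAux.key v w hle hw
  have hsub' : Row2 (RSKP v) ⊆ Row2 (RSKP w) := by
    intro z hz
    simp only [Row2, List.mem_toFinset] at hz ⊢
    exact hsub z hz
  have mono : CrowdedPerm v → CrowdedPerm w := by
    intro hcv
    have hcv' : CrowdedSet (Row2 (RSKP v)) := hcv
    obtain ⟨x, y, hx, hcard⟩ := hcv'
    show CrowdedSet (Row2 (RSKP w))
    refine ⟨x, y, hx, lt_of_lt_of_le hcard ?_⟩
    exact_mod_cast Finset.card_le_card (Finset.filter_subset_filter _ hsub')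
  exact ⟨fun hnc hcv => hnc (mono hcv), mono⟩
end

section
/- Let w ∈ S_n be a fully commutative permutation and suppose d is a descent of w (i.e., w(d) > w(d+1)) such that, during the RSK insertion of w, the value w(d+1) does not bump w(d). Then P(w) = P(w·s_d). -/
/-- Every entry of `rowInsert T c` is an entry of `T` or equals `c`. -/
lemma rowInsert_mem : ∀ (T : List (List ℕ)) (c : ℕ) (r : List ℕ) (x : ℕ),
    r ∈ rowInsert T c → x ∈ r → (∃ r' ∈ T, x ∈ r') ∨ x = c := by
  intro T
  induction T with
  | nil =>
    intro c r x hr hx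
    simp only [rowInsert, List.mem_singleton] at hr
    subst hr
    simp only [List.mem_singleton] at hx
    exact Or.inr hx
  | cons R rest ih =>
    intro c r x hr hx
    unfold rowInsert at hr
    cases hf : R.find? (fun y => decide (c < y)) with
    | none =>
      rw [hf] at hr
      rcases List.mem_cons.mp hr with h | h
      · subst h
        rcases List.mem_append.mp hx with h | h
        · exact Or.inl ⟨R, List.mem_cons_self, h⟩
        · simp only [List.mem_singleton] at h; exact Or.inr h
      · exact Or.inl ⟨r, List.mem_cons_of_mem _ h, hx⟩
    | some y =>
      rw [hf] at hr
      rcases List.mem_cons.mp hr with h | h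
      · subst h
        rcases List.mem_map.mp hx with ⟨z, hz, hzx⟩
        by_cases hzy : z = y
        · simp only [hzy, if_pos rfl] at hzx; exact Or.inr hzx.symm
        · simp only [if_neg hzy] at hzx
          exact Or.inl ⟨R, List.mem_cons_self, hzx ▸ hz⟩
      · rcases ih y r x h hx with ⟨r', hr', hx'⟩ | h'
        · exact Or.inl ⟨r', List.mem_cons_of_mem _ hr', hx'⟩
        · subst h'
          exact Or.inl ⟨R, List.mem_cons_self, List.mem_of_find?_eq_some hf⟩

/-- Every entry of the RSK tableau of `p` is a letter of `p`. -/
lemma RSKList_mem {p : List ℕ} {r : List ℕ} {x : ℕ}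
    (hr : r ∈ RSKList p) (hx : x ∈ r) : x ∈ p := by
  induction p using List.reverseRecOn generalizing r with
  | nil => simp [RSKList] at hr
  | append_singleton p c ih =>
    rw [RSKList, List.foldl_append] at hr
    simp only [List.foldl_cons, List.foldl_nil] at hr
    rcases rowInsert_mem _ _ _ _ hr hx with ⟨r', hr', hx'⟩ | h
    · exact List.mem_append.mpr (Or.inl (ih hr' hx'))
    · exact List.mem_append.mpr (Or.inr (by simp [h]))

lemma RSKList_split (p : List ℕ) (k : ℕ) (hk : k + 1 < p.length) :
    RSKList p = List.foldl rowInsert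
      (rowInsert (rowInsert (RSKList (p.take k)) (p.getD k 0)) (p.getD (k+1) 0))
      (p.drop (k+2)) := by
  have hk0 : k < p.length := by omega
  have h1 : p.take (k+2) = p.take k ++ [p.getD k 0, p.getD (k+1) 0] := by
    rw [show k+2 = (k+1)+1 from rfl, List.take_succ, List.take_succ]
    rw [List.getElem?_eq_getElem hk0, List.getElem?_eq_getElem hk,
      List.getD_eq_getElem _ _ hk0, List.getD_eq_getElem _ _ hk]
    simp only [Option.toList_some, List.append_assoc, List.singleton_append]
  conv_lhs => rw [RSKList, ← List.take_append_drop (k+2) p, List.foldl_append, h1,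
    List.foldl_append]
  simp [RSKList]

lemma rowInsert_cons_none {R : List ℕ} {rest : List (List ℕ)} {x : ℕ}
    (h : R.find? (fun y => decide (x < y)) = none) :
    rowInsert (R :: rest) x = (R ++ [x]) :: rest := by
  unfold rowInsert; rw [h]

lemma rowInsert_cons_some {R : List ℕ} {rest : List (List ℕ)} {x y : ℕ}
    (h : R.find? (fun y => decide (x < y)) = some y) :
    rowInsert (R :: rest) x = (R.map fun z => if z = y then x else z) :: rowInsert rest y := by
  conv_lhs => rw [rowInsert]
  rw [h]

lemma RSKList_concat (p : List ℕ) (c : ℕ) :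
    RSKList (p ++ [c]) = rowInsert (RSKList p) c := by
  rw [RSKList, List.foldl_append]; rfl

/-- **Lemma.** If `d` is a descent of the fully commutative permutation `w` and
`w(d+1)` does not bump `w(d)` during RSK insertion, then `P(w) = P(w·s_d)`. -/
theorem non_bumping_descent_tableau {n : ℕ} (w : Equiv.Perm (Fin n))
    (hw : FullyCommutative w) (d : ℕ) (hd : d + 1 < n)
    (hdesc : entry w (d + 1) < entry w d)
    (hnb : ¬ BumpsAt (oneLine w) (d + 1) (entry w d)) :
    RSKP w = RSKP (w * simpleTr d hd) := by
  have hdn : d < n := by omega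
  set l := oneLine w with hl
  have hlen : l.length = n := by simp [hl, oneLine]
  set a : ℕ := (w ⟨d, hdn⟩ : ℕ) with ha
  set b : ℕ := (w ⟨d + 1, hd⟩ : ℕ) with hb
  have hea : entry w d = a := by rw [entry, dif_pos hdn]
  have heb : entry w (d + 1) = b := by rw [entry, dif_pos hd]
  have hab : b < a := by rw [hea, heb] at hdesc; exact hdesc
  rw [hea] at hnb
  have hget : ∀ (j : ℕ) (hj : j < n), l.getD j 0 = (w ⟨j, hj⟩ : ℕ) := by
    intro j hj
    rw [List.getD_eq_getElem _ _ (by omega : j < l.length)]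
    simp [hl, oneLine]
  set T := RSKList (l.take d) with hT
  -- every first-row entry of T is a letter among the first d letters
  have hrow1 : ∀ x ∈ T.getD 0 [], ∃ j : ℕ, ∃ hj : j < n, j < d ∧ (w ⟨j, hj⟩ : ℕ) = x := by
    intro x hx
    have hxl : x ∈ l.take d := by
      cases hTc : T with
      | nil => rw [hTc] at hx; simp at hx
      | cons R rest =>
        rw [hTc] at hx
        simp only [List.getD_cons_zero] at hx
        exact RSKList_mem (by rw [← hT, hTc]; exact List.mem_cons_self) hx
    rw [List.mem_iff_getElem] at hxl
    obtain ⟨j, hj, hjx⟩ := hxl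
    have hjd : j < d ∧ j < n := by
      have := hj; simp only [List.length_take, hlen] at this; omega
    refine ⟨j, hjd.2, hjd.1, ?_⟩
    rw [← hjx, List.getElem_take]
    simp [hl, oneLine]
  -- no first-row entry of T exceeds a (else 321 pattern)
  have hA : ∀ x ∈ T.getD 0 [], ¬ a < x := by
    intro x hx hax
    obtain ⟨j, hj, hjd, hjx⟩ := hrow1 x hx
    exact hw ⟨⟨j, hj⟩, ⟨d, hdn⟩, ⟨d + 1, hd⟩,
      by simp [Fin.lt_def]; omega, by simp [Fin.lt_def],
      by rw [Fin.lt_def]; exact hab, by rw [Fin.lt_def]; rw [hjx]; exact hax⟩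
  have hA' : (T.getD 0 []).find? (fun y => decide (a < y)) = none :=
    List.find?_eq_none.mpr fun x hx => by simpa using hA x hx
  -- T is nonempty will come later; first compute rowInsert T a in general
  have hBgen : rowInsert T a = (T.getD 0 [] ++ [a]) :: T.drop 1 := by
    cases hTc : T with
    | nil => simp [rowInsert]
    | cons R rest =>
      rw [hTc] at hA'
      simp only [List.getD_cons_zero] at hA'
      rw [rowInsert_cons_none hA']
      simp
  -- unfold the non-bumping hypothesis
  have htake1 : l.take (d + 1) = l.take d ++ [a] := by
    rw [List.take_succ, List.getElem?_eq_getElem (by omega : d < l.length)]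
    have : l[d] = a := by
      rw [← List.getD_eq_getElem l 0 (by omega : d < l.length)]; exact hget d hdn
    rw [this]; rfl
  have hT1 : RSKList (l.take (d + 1)) = (T.getD 0 [] ++ [a]) :: T.drop 1 := by
    rw [htake1, RSKList_concat, ← hT, hBgen]
  have hnb' : (T.getD 0 [] ++ [a]).find? (fun y => decide (b < y)) ≠ some a := by
    intro hcon
    exact hnb ⟨by omega, by
      rw [hT1]
      simp only [List.getD_cons_zero]
      rw [hget (d + 1) hd]
      exact hcon⟩
  -- extract the element y' that b bumps
  have hsplit : (T.getD 0 [] ++ [a]).find? (fun y => decide (b < y)) =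
      ((T.getD 0 []).find? (fun y => decide (b < y))).or (some a) := by
    rw [List.find?_append]
    congr 1
    simp [List.find?, hab]
  obtain ⟨y', hy'⟩ : ∃ y', (T.getD 0 []).find? (fun y => decide (b < y)) = some y' := by
    cases hc : (T.getD 0 []).find? (fun y => decide (b < y)) with
    | none => exfalso; apply hnb'; rw [hsplit, hc]; rfl
    | some y' => exact ⟨y', rfl⟩
  have hy'mem : y' ∈ T.getD 0 [] := List.mem_of_find?_eq_some hy'
  have hby' : b < y' := by have := List.find?_some hy'; simpa using this
  have hy'a : y' < a := by
    have h1 : ¬ a < y' := hA y' hy'mem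
    rcases lt_or_eq_of_le (not_lt.mp h1) with h | h
    · exact h
    · exfalso
      obtain ⟨j, hj, hjd, hjx⟩ := hrow1 y' hy'mem
      have : (⟨j, hj⟩ : Fin n) = ⟨d, hdn⟩ := w.injective (Fin.val_injective (by rw [hjx, h]))
      have := Fin.mk.injEq j hj d hdn ▸ this
      omega
  -- T is nonempty
  obtain ⟨R, rest, hTc⟩ : ∃ R rest, T = R :: rest := by
    cases hTc : T with
    | nil => rw [hTc] at hy'mem; simp at hy'mem
    | cons R rest => exact ⟨R, rest, rfl⟩
  rw [hTc] at hA' hy' hy'mem hA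
  simp only [List.getD_cons_zero] at hA' hy' hy'mem hA
  -- the key commutation
  have hfa : a ≠ y' := by omega
  have key : rowInsert (rowInsert T a) b = rowInsert (rowInsert T b) a := by
    rw [hTc]
    rw [rowInsert_cons_none hA']
    rw [rowInsert_cons_some (x := b) (y := y') (by rw [List.find?_append, hy']; rfl)]
    rw [rowInsert_cons_some hy']
    have hnone : (R.map fun z => if z = y' then b else z).find?
        (fun y => decide (a < y)) = none := by
      refine List.find?_eq_none.mpr fun x hx => ?_
      rcases List.mem_map.mp hx with ⟨z, hz, hzx⟩
      by_cases hzy : z = y'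
      · simp only [hzy, if_pos rfl] at hzx
        subst hzx; simp; omega
      · simp only [if_neg hzy] at hzx
        subst hzx; simpa using hA z hz
    rw [rowInsert_cons_none hnone]
    congr 1
    rw [List.map_append]
    congr 1
    simp [hfa]
  -- one-line notation of w * s_d
  set l' := oneLine (w * simpleTr d hd) with hl'
  have hlen' : l'.length = n := by simp [hl', oneLine]
  have happly : ∀ (j : ℕ) (hj : j < n), l'.getD j 0 =
      ((w * simpleTr d hd) ⟨j, hj⟩ : ℕ) := by
    intro j hj
    rw [List.getD_eq_getElem _ _ (by omega : j < l'.length)]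
    simp [hl', oneLine]
  have hfix : ∀ (j : ℕ) (hj : j < n), j ≠ d → j ≠ d + 1 →
      l'.getD j 0 = l.getD j 0 := by
    intro j hj h1 h2
    rw [happly j hj, hget j hj]
    simp only [Equiv.Perm.mul_apply, simpleTr]
    rw [Equiv.swap_apply_of_ne_of_ne (by simp [Fin.ext_iff]; omega)
      (by simp [Fin.ext_iff]; omega)]
  have hgd : l'.getD d 0 = b := by
    rw [happly d hdn]
    simp only [Equiv.Perm.mul_apply, simpleTr, Equiv.swap_apply_left]
    rfl
  have hgd1 : l'.getD (d + 1) 0 = a := by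
    rw [happly (d + 1) hd]
    simp only [Equiv.Perm.mul_apply, simpleTr, Equiv.swap_apply_right]
    rfl
  have htake : l'.take d = l.take d := by
    apply List.ext_getElem (by simp [hlen, hlen'])
    intro i h1 h2
    have hid : i < d := by simp [List.length_take] at h1; omega
    have hin : i < n := by omega
    rw [List.getElem_take, List.getElem_take,
      ← List.getD_eq_getElem l' 0 (by omega), ← List.getD_eq_getElem l 0 (by omega)]
    exact hfix i hin (by omega) (by omega)
  have hdrop : l'.drop (d + 2) = l.drop (d + 2) := by
    apply List.ext_getElem (by simp [hlen, hlen'])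
    intro i h1 h2
    have hin : d + 2 + i < n := by simp [List.length_drop, hlen'] at h1; omega
    rw [List.getElem_drop, List.getElem_drop,
      ← List.getD_eq_getElem l' 0 (by omega), ← List.getD_eq_getElem l 0 (by omega)]
    exact hfix (d + 2 + i) hin (by omega) (by omega)
  -- assemble
  have e1 : RSKP w = List.foldl rowInsert (rowInsert (rowInsert T a) b)
      (l.drop (d + 2)) := by
    rw [RSKP, ← hl, RSKList_split l d (by omega), hget d hdn, hget (d + 1) hd, ← hT,
      ← ha, ← hb]
  have e2 : RSKP (w * simpleTr d hd) = List.foldl rowInsert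
      (rowInsert (rowInsert T b) a) (l'.drop (d + 2)) := by
    rw [RSKP, ← hl', RSKList_split l' d (by omega), hgd, hgd1, htake, ← hT]
  rw [e1, e2, key, hdrop]
end

section
/- Let w ∈ S_n be a minimal crowded permutation, i.e., a minimal element of the set of crowded fully commutative permutations under the right weak order. Then: (a) d is a descent of w if and only if, during the RSK insertion of w, the value w(d+1) bumps w(d) to the second row; (b) every entry of Row₂(P(w)) equals w(d) for some descent d of w, and is bumped to the second row by w(d+1). -/
/-! ### Auxiliary machinery for the proof -/

section Aux

open List

/-- The first row of the insertion tableau after inserting the first `k` letters. -/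
abbrev Rrow (l : List ℕ) (k : ℕ) : List ℕ := (RSKList (l.take k)).getD 0 []

lemma RSKList_append (A B : List ℕ) :
    RSKList (A ++ B) = B.foldl rowInsert (RSKList A) := by
  simp [RSKList, List.foldl_append]

lemma RSKList_take_succ (l : List ℕ) (k : ℕ) (h : k < l.length) :
    RSKList (l.take (k + 1)) = rowInsert (RSKList (l.take k)) (l.getD k 0) := by
  rw [List.take_succ]
  have h1 : l[k]?.toList = [l.getD k 0] := by
    rw [List.getElem?_eq_getElem h, List.getD_eq_getElem l 0 h]
    rfl
  rw [h1, RSKList_append]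
  rfl

lemma row1_rowInsert (T : List (List ℕ)) (x : ℕ) :
    ((T.getD 0 []).find? (fun y => decide (x < y)) = none ∧
      (rowInsert T x).getD 0 [] = T.getD 0 [] ++ [x]) ∨
    ∃ y, (T.getD 0 []).find? (fun y => decide (x < y)) = some y ∧
      (rowInsert T x).getD 0 [] = (T.getD 0 []).map (fun z => if z = y then x else z) := by
  match T with
  | [] => left; constructor <;> simp [rowInsert]
  | r :: rest =>
    cases hf : r.find? (fun y => decide (x < y)) with
    | none =>
      left
      refine ⟨by simpa using hf, ?_⟩
      simp only [rowInsert]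
      rw [hf]
      simp
    | some y =>
      right
      refine ⟨y, by simpa using hf, ?_⟩
      simp only [rowInsert]
      rw [hf]
      simp

lemma row1_rowInsert_none (T : List (List ℕ)) (x : ℕ)
    (h : (T.getD 0 []).find? (fun y => decide (x < y)) = none) :
    (rowInsert T x).getD 0 [] = T.getD 0 [] ++ [x] := by
  rcases row1_rowInsert T x with ⟨_, h2⟩ | ⟨y, hy, _⟩
  · exact h2
  · rw [h] at hy; cases hy

lemma row1_rowInsert_some (T : List (List ℕ)) (x y : ℕ)
    (h : (T.getD 0 []).find? (fun y => decide (x < y)) = some y) :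
    (rowInsert T x).getD 0 [] = (T.getD 0 []).map (fun z => if z = y then x else z) := by
  rcases row1_rowInsert T x with ⟨h1, _⟩ | ⟨y', hy', h2⟩
  · rw [h] at h1; cases h1
  · rw [h] at hy'
    cases hy'
    exact h2

lemma mem_row1_rowInsert (T : List (List ℕ)) (x z : ℕ)
    (hz : z ∈ (rowInsert T x).getD 0 []) :
    z = x ∨ z ∈ T.getD 0 [] := by
  rcases row1_rowInsert T x with ⟨_, h⟩ | ⟨y, hy, h⟩
  · rw [h] at hz
    rcases List.mem_append.mp hz with h' | h'
    · right; exact h'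
    · left; simpa using h'
  · rw [h] at hz
    rcases List.mem_map.mp hz with ⟨a, ha, rfl⟩
    by_cases hay : a = y
    · left; simp [hay]
    · right; simpa [hay] using ha

lemma mem_row2_rowInsert (T : List (List ℕ)) (x z : ℕ)
    (hz : z ∈ (rowInsert T x).getD 1 []) :
    z ∈ T.getD 1 [] ∨ (T.getD 0 []).find? (fun y => decide (x < y)) = some z := by
  match T with
  | [] => simp [rowInsert] at hz
  | r :: rest =>
    cases hf : r.find? (fun y => decide (x < y)) with
    | none =>
      left
      have hT : rowInsert (r :: rest) x = (r ++ [x]) :: rest := by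
        simp only [rowInsert]; rw [hf]
      rw [hT] at hz
      simpa using hz
    | some y =>
      have hT : rowInsert (r :: rest) x
          = (r.map fun z => if z = y then x else z) :: rowInsert rest y := by
        simp only [rowInsert]; rw [hf]
      rw [hT] at hz
      have hz' : z ∈ (rowInsert rest y).getD 0 [] := by simpa using hz
      rcases mem_row1_rowInsert rest y z hz' with rfl | h
      · right; simpa using hf
      · left; simpa using h

lemma Rrow_zero (l : List ℕ) : Rrow l 0 = [] := rfl

lemma Rrow_succ (l : List ℕ) (k : ℕ) (h : k < l.length) :
    Rrow l (k + 1) = (rowInsert (RSKList (l.take k)) (l.getD k 0)).getD 0 [] := by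
  rw [Rrow, RSKList_take_succ l k h]

lemma Rrow_mem_exists (l : List ℕ) :
    ∀ k, k ≤ l.length → ∀ z ∈ Rrow l k, ∃ j, j < k ∧ j < l.length ∧ l.getD j 0 = z := by
  intro k
  induction k with
  | zero => intro _ z hz; rw [Rrow_zero] at hz; cases hz
  | succ k ih =>
    intro hk z hz
    have hkl : k < l.length := hk
    rw [Rrow_succ l k hkl] at hz
    rcases mem_row1_rowInsert _ _ _ hz with rfl | h
    · exact ⟨k, Nat.lt_succ_self k, hkl, rfl⟩
    · obtain ⟨j, h1, h2, h3⟩ := ih (le_of_lt hkl) z h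
      exact ⟨j, Nat.lt_succ_of_lt h1, h2, h3⟩

lemma rowInsert_swap (T : List (List ℕ)) (c e z : ℕ) (hec : e < c)
    (hcn : (T.getD 0 []).find? (fun y => decide (c < y)) = none)
    (hes : (T.getD 0 []).find? (fun y => decide (e < y)) = some z)
    (hzc : z ≠ c) :
    rowInsert (rowInsert T c) e = rowInsert (rowInsert T e) c := by
  match T with
  | [] => simp at hes
  | r :: rest =>
    have hr : (r :: rest : List (List ℕ)).getD 0 [] = r := rfl
    rw [hr] at hcn hes
    have hT1 : rowInsert (r :: rest) c = (r ++ [c]) :: rest := by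
      simp only [rowInsert]; rw [hcn]
    have hT2 : rowInsert (r :: rest) e
        = (r.map fun y => if y = z then e else y) :: rowInsert rest z := by
      simp only [rowInsert]; rw [hes]
    rw [hT1, hT2]
    have hfind1 : (r ++ [c]).find? (fun y => decide (e < y)) = some z := by
      rw [List.find?_append, hes]; rfl
    have hstep1 : rowInsert ((r ++ [c]) :: rest) e
        = ((r ++ [c]).map fun y => if y = z then e else y) :: rowInsert rest z := by
      simp only [rowInsert]; rw [hfind1]
    have hfind2 : (r.map fun y => if y = z then e else y).find? (fun y => decide (c < y))
        = none := by
      rw [List.find?_eq_none]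
      intro x hx
      rcases List.mem_map.mp hx with ⟨a, ha, rfl⟩
      by_cases haz : a = z
      · simp [haz]; omega
      · have := List.find?_eq_none.mp hcn a ha
        simp [haz]
        simpa using this
    have hstep2 : rowInsert ((r.map fun y => if y = z then e else y) :: rowInsert rest z) c
        = ((r.map fun y => if y = z then e else y) ++ [c]) :: rowInsert rest z := by
      simp only [rowInsert]; rw [hfind2]
    rw [hstep1, hstep2]
    congr 1
    rw [List.map_append]
    simp only [List.map_cons, List.map_nil]
    rw [if_neg (fun h : c = z => hzc h.symm)]

end Aux

section Aux2

open List

variable {n : ℕ}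

lemma oneLine_length (w : Equiv.Perm (Fin n)) : (oneLine w).length = n :=
  List.length_ofFn

lemma oneLine_getD (w : Equiv.Perm (Fin n)) {j : ℕ} (h : j < n) :
    (oneLine w).getD j 0 = (w ⟨j, h⟩ : ℕ) := by
  have hj : j < (oneLine w).length := by rw [oneLine_length]; exact h
  rw [List.getD_eq_getElem _ 0 hj]
  simp only [oneLine, List.getElem_ofFn]

lemma entry_eq (w : Equiv.Perm (Fin n)) {j : ℕ} (h : j < n) :
    entry w j = (oneLine w).getD j 0 := by
  simp only [entry]
  rw [dif_pos h, oneLine_getD w h]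

lemma oneLine_getD_inj (w : Equiv.Perm (Fin n)) {i j : ℕ} (hi : i < n) (hj : j < n)
    (h : (oneLine w).getD i 0 = (oneLine w).getD j 0) : i = j := by
  rw [oneLine_getD w hi, oneLine_getD w hj] at h
  have h2 : w ⟨i, hi⟩ = w ⟨j, hj⟩ := Fin.val_injective h
  have h3 := w.injective h2
  exact congrArg Fin.val h3

lemma swap_val {d : ℕ} (hd : d + 1 < n) (x : Fin n) :
    ((Equiv.swap (⟨d, by omega⟩ : Fin n) ⟨d + 1, hd⟩ x : Fin n) : ℕ) =
      if (x : ℕ) = d then d + 1 else if (x : ℕ) = d + 1 then d else x := by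
  by_cases hxa : x = (⟨d, by omega⟩ : Fin n)
  · subst hxa; rw [Equiv.swap_apply_left]; simp
  · by_cases hxb : x = (⟨d + 1, hd⟩ : Fin n)
    · subst hxb; rw [Equiv.swap_apply_right]; simp
    · rw [Equiv.swap_apply_of_ne_of_ne hxa hxb]
      have h1 : (x : ℕ) ≠ d := fun h => hxa (Fin.ext h)
      have h2 : (x : ℕ) ≠ d + 1 := fun h => hxb (Fin.ext h)
      rw [if_neg h1, if_neg h2]

lemma swap_ord {d : ℕ} (hd : d + 1 < n) {p q : Fin n} (hpq : p < q)
    (hne : ¬((p : ℕ) = d ∧ (q : ℕ) = d + 1)) :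
    Equiv.swap (⟨d, by omega⟩ : Fin n) ⟨d + 1, hd⟩ p
      < Equiv.swap (⟨d, by omega⟩ : Fin n) ⟨d + 1, hd⟩ q := by
  rw [Fin.lt_def] at hpq ⊢
  rw [swap_val hd p, swap_val hd q]
  split_ifs <;> omega

lemma fc_mul_simpleTr (w : Equiv.Perm (Fin n)) (hfc : FullyCommutative w)
    {d : ℕ} (hd : d + 1 < n) (hdes : w ⟨d + 1, hd⟩ < w ⟨d, by omega⟩) :
    FullyCommutative (w * simpleTr d hd) := by
  rintro ⟨i, j, k, hij, hjk, h1, h2⟩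
  set σ := Equiv.swap (⟨d, by omega⟩ : Fin n) ⟨d + 1, hd⟩ with hσ
  have happ : ∀ x : Fin n, (w * simpleTr d hd) x = w (σ x) := fun x => rfl
  have hσd : σ ⟨d, by omega⟩ = ⟨d + 1, hd⟩ := Equiv.swap_apply_left _ _
  have hσd1 : σ ⟨d + 1, hd⟩ = ⟨d, by omega⟩ := Equiv.swap_apply_right _ _
  have hij' : ¬((i : ℕ) = d ∧ (j : ℕ) = d + 1) := by
    rintro ⟨hi, hj⟩
    have hi' : i = (⟨d, Nat.lt_of_succ_lt hd⟩ : Fin n) := Fin.ext hi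
    have hj' : j = (⟨d + 1, hd⟩ : Fin n) := Fin.ext hj
    subst hi'; subst hj'
    have h2' : w (σ ⟨d + 1, hd⟩) < w (σ ⟨d, Nat.lt_of_succ_lt hd⟩) := h2
    rw [hσd, hσd1] at h2'
    exact absurd hdes (not_lt.mpr (le_of_lt h2'))
  have hjk' : ¬((j : ℕ) = d ∧ (k : ℕ) = d + 1) := by
    rintro ⟨hj, hk⟩
    have hj' : j = (⟨d, Nat.lt_of_succ_lt hd⟩ : Fin n) := Fin.ext hj
    have hk' : k = (⟨d + 1, hd⟩ : Fin n) := Fin.ext hk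
    subst hj'; subst hk'
    have h1' : w (σ ⟨d + 1, hd⟩) < w (σ ⟨d, Nat.lt_of_succ_lt hd⟩) := h1
    rw [hσd, hσd1] at h1'
    exact absurd hdes (not_lt.mpr (le_of_lt h1'))
  exact hfc ⟨σ i, σ j, σ k, swap_ord hd hij hij', swap_ord hd hjk hjk', h1, h2⟩

lemma invCount_mul_simpleTr (u : Equiv.Perm (Fin n)) {i : ℕ} (h : i + 1 < n)
    (hasc : u ⟨i, by omega⟩ < u ⟨i + 1, h⟩) :
    invCount (u * simpleTr i h) = invCount u + 1 := by
  classical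
  set a : Fin n := ⟨i, by omega⟩ with ha
  set b : Fin n := ⟨i + 1, h⟩ with hb
  have hab : a < b := by rw [Fin.lt_def]; simp [ha, hb]
  set σ := Equiv.swap a b with hσ
  have happ : ∀ x : Fin n, (u * simpleTr i h) x = u (σ x) := fun x => rfl
  have hσσ : ∀ x : Fin n, σ (σ x) = x := fun x => Equiv.swap_apply_self _ _ x
  have hσa : σ a = b := Equiv.swap_apply_left _ _
  have hσb : σ b = a := Equiv.swap_apply_right _ _
  have hord : ∀ p q : Fin n, p < q → ¬(p = a ∧ q = b) → σ p < σ q := by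
    intro p q hpq hne
    refine swap_ord h hpq ?_
    rintro ⟨h1, h2⟩
    exact hne ⟨Fin.ext h1, Fin.ext h2⟩
  have key : (Finset.univ.filter fun p : Fin n × Fin n =>
        p.1 < p.2 ∧ (u * simpleTr i h) p.2 < (u * simpleTr i h) p.1)
      = insert (a, b) ((Finset.univ.filter fun p : Fin n × Fin n =>
          p.1 < p.2 ∧ u p.2 < u p.1).image fun p => (σ p.1, σ p.2)) := by
    ext ⟨p, q⟩
    simp only [Finset.mem_insert, Finset.mem_image, Finset.mem_filter, Finset.mem_univ,
      true_and, Prod.mk.injEq, Prod.exists]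
    constructor
    · rintro ⟨hpq, hv⟩
      rw [happ, happ] at hv
      by_cases hcase : p = a ∧ q = b
      · left; exact ⟨hcase.1, hcase.2⟩
      · right
        refine ⟨σ p, σ q, ⟨hord p q hpq hcase, hv⟩, hσσ p, hσσ q⟩
    · rintro (⟨rfl, rfl⟩ | ⟨p', q', ⟨hpq', hv'⟩, rfl, rfl⟩)
      · refine ⟨hab, ?_⟩
        rw [happ, happ, hσa, hσb]
        exact hasc
      · have hne : ¬(p' = a ∧ q' = b) := by
          rintro ⟨rfl, rfl⟩
          exact absurd hasc (not_lt.mpr (le_of_lt hv'))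
        refine ⟨hord p' q' hpq' hne, ?_⟩
        rw [happ, happ, hσσ, hσσ]
        exact hv'
  have hinj : Function.Injective (fun p : Fin n × Fin n => (σ p.1, σ p.2)) := by
    intro p q hpq
    simp only [Prod.mk.injEq] at hpq
    exact Prod.ext (σ.injective hpq.1) (σ.injective hpq.2)
  have hnotmem : (a, b) ∉ ((Finset.univ.filter fun p : Fin n × Fin n =>
      p.1 < p.2 ∧ u p.2 < u p.1).image fun p => (σ p.1, σ p.2)) := by
    rw [Finset.mem_image]
    rintro ⟨⟨p', q'⟩, hmem, heq⟩
    simp only [Prod.mk.injEq] at heq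
    have hp' : p' = b := by
      have := congrArg σ heq.1; rwa [hσσ, hσa] at this
    have hq' : q' = a := by
      have := congrArg σ heq.2; rwa [hσσ, hσb] at this
    rw [Finset.mem_filter] at hmem
    rw [hp', hq'] at hmem
    exact absurd hmem.2.1 (not_lt.mpr (le_of_lt hab))
  show (Finset.univ.filter fun p : Fin n × Fin n =>
      p.1 < p.2 ∧ (u * simpleTr i h) p.2 < (u * simpleTr i h) p.1).card = _
  rw [key, Finset.card_insert_of_notMem hnotmem, Finset.card_image_of_injective _ hinj]
  rfl

lemma oneLine_mul_simpleTr (w : Equiv.Perm (Fin n)) {d : ℕ} (hd : d + 1 < n) :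
    oneLine (w * simpleTr d hd) =
      (oneLine w).take d ++ (w ⟨d + 1, hd⟩ : ℕ) :: (w ⟨d, by omega⟩ : ℕ) ::
        (oneLine w).drop (d + 2) := by
  have hlen : (oneLine w).length = n := oneLine_length w
  apply List.ext_getElem
  · simp only [oneLine_length, List.length_append, List.length_take, List.length_cons,
      List.length_drop, hlen]
    omega
  · intro j h1 h2
    have hjn : j < n := by rwa [oneLine_length] at h1
    have hL : (oneLine (w * simpleTr d hd))[j] = (w (Equiv.swap (⟨d, by omega⟩ : Fin n)
        ⟨d + 1, hd⟩ ⟨j, hjn⟩) : ℕ) := by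
      simp only [oneLine, List.getElem_ofFn]
      rfl
    rw [hL]
    have htlen : ((oneLine w).take d).length = d := by
      rw [List.length_take]; omega
    by_cases hjd : j < d
    · rw [List.getElem_append_left (by omega)]
      rw [List.getElem_take]
      rw [Equiv.swap_apply_of_ne_of_ne (fun hh => by
          have := congrArg Fin.val hh; simp at this; omega)
        (fun hh => by have := congrArg Fin.val hh; simp at this; omega)]
      simp only [oneLine, List.getElem_ofFn]
    · rw [List.getElem_append_right (by omega)]
      have hidx : j - ((oneLine w).take d).length = j - d := by rw [htlen]
      by_cases hjd2 : j = d
      · subst hjd2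
        have : j - ((oneLine w).take j).length = 0 := by omega
        simp only [this, List.getElem_cons_zero]
        rw [show (⟨j, hjn⟩ : Fin n) = ⟨j, by omega⟩ from rfl, Equiv.swap_apply_left]
      · by_cases hjd3 : j = d + 1
        · subst hjd3
          have : d + 1 - ((oneLine w).take d).length = 1 := by omega
          simp only [this, List.getElem_cons_succ, List.getElem_cons_zero]
          rw [show (⟨d + 1, hjn⟩ : Fin n) = ⟨d + 1, hd⟩ from rfl, Equiv.swap_apply_right]
        · have hge : d + 2 ≤ j := by omega
          have : j - ((oneLine w).take d).length = (j - d - 2) + 2 := by omega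
          simp only [this, List.getElem_cons_succ]
          rw [List.getElem_drop]
          have : d + 2 + (j - d - 2) = j := by omega
          simp only [this]
          rw [Equiv.swap_apply_of_ne_of_ne (fun hh => by
              have := congrArg Fin.val hh; simp at this; omega)
            (fun hh => by have := congrArg Fin.val hh; simp at this; omega)]
          simp only [oneLine, List.getElem_ofFn]

end Aux2

section Aux3

open List

variable {n : ℕ}

lemma descent_append (w : Equiv.Perm (Fin n)) (hfc : FullyCommutative w) {d : ℕ}
    (hd : d + 1 < n) (hdes : (oneLine w).getD (d + 1) 0 < (oneLine w).getD d 0) :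
    (Rrow (oneLine w) d).find? (fun y => decide ((oneLine w).getD d 0 < y)) = none := by
  cases hu : (Rrow (oneLine w) d).find? (fun y => decide ((oneLine w).getD d 0 < y)) with
  | none => rfl
  | some u =>
  exfalso
  have humem : u ∈ Rrow (oneLine w) d := List.mem_of_find?_eq_some hu
  have hcu : (oneLine w).getD d 0 < u := by simpa using List.find?_some hu
  have hlen : (oneLine w).length = n := oneLine_length w
  obtain ⟨j, hjd, hjn', hju⟩ := Rrow_mem_exists (oneLine w) d (by omega) u humem
  have hjn : j < n := by omega
  apply hfc
  refine ⟨⟨j, hjn⟩, ⟨d, Nat.lt_of_succ_lt hd⟩, ⟨d + 1, hd⟩, ?_, ?_, ?_, ?_⟩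
  · rw [Fin.lt_def]; exact hjd
  · rw [Fin.lt_def]; exact Nat.lt_succ_self d
  · rw [Fin.lt_def]
    rwa [oneLine_getD w hd, oneLine_getD w (Nat.lt_of_succ_lt hd)] at hdes
  · rw [Fin.lt_def]
    rw [oneLine_getD w (Nat.lt_of_succ_lt hd)] at hcu
    rw [oneLine_getD w hjn] at hju
    omega

lemma descent_find_none (w : Equiv.Perm (Fin n)) (hmin : MinimalCrowded w) {d : ℕ}
    (hd : d + 1 < n) (hdes : (oneLine w).getD (d + 1) 0 < (oneLine w).getD d 0) :
    (Rrow (oneLine w) d).find? (fun y => decide ((oneLine w).getD (d + 1) 0 < y)) = none := by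
  classical
  obtain ⟨hfc, hcr, hm⟩ := hmin
  have hlen : (oneLine w).length = n := oneLine_length w
  cases hz : (Rrow (oneLine w) d).find? (fun y => decide ((oneLine w).getD (d + 1) 0 < y)) with
  | none => rfl
  | some z =>
  exfalso
  have hzmem : z ∈ Rrow (oneLine w) d := List.mem_of_find?_eq_some hz
  have hez : (oneLine w).getD (d + 1) 0 < z := by simpa using List.find?_some hz
  obtain ⟨j, hjd, hjn', hjz⟩ := Rrow_mem_exists (oneLine w) d (by omega) z hzmem
  have hjn : j < n := by omega
  have hzc : z ≠ (oneLine w).getD d 0 := by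
    intro hc
    have := oneLine_getD_inj w hjn (Nat.lt_of_succ_lt hd) (by rw [hjz, hc])
    omega
  have hcnone := descent_append w hfc hd hdes
  have hswap := rowInsert_swap (RSKList ((oneLine w).take d)) ((oneLine w).getD d 0)
      ((oneLine w).getD (d + 1) 0) z hdes hcnone hz hzc
  have hd1 : d < (oneLine w).length := by omega
  have hd2 : d + 1 < (oneLine w).length := by omega
  have hdecomp : oneLine w = (oneLine w).take d ++ (oneLine w).getD d 0 ::
      (oneLine w).getD (d + 1) 0 :: (oneLine w).drop (d + 2) := by
    have hc' : (oneLine w).getD d 0 = (oneLine w)[d]'hd1 :=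
      List.getD_eq_getElem (oneLine w) 0 hd1
    have he' : (oneLine w).getD (d + 1) 0 = (oneLine w)[d + 1]'hd2 :=
      List.getD_eq_getElem (oneLine w) 0 hd2
    rw [hc', he', ← List.drop_eq_getElem_cons, ← List.drop_eq_getElem_cons,
      List.take_append_drop]
  have hvOne : oneLine (w * simpleTr d hd) = (oneLine w).take d ++
      (oneLine w).getD (d + 1) 0 :: (oneLine w).getD d 0 :: (oneLine w).drop (d + 2) := by
    rw [oneLine_mul_simpleTr w hd, oneLine_getD w hd, oneLine_getD w (Nat.lt_of_succ_lt hd)]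
  have hkey : RSKList (oneLine (w * simpleTr d hd)) = RSKList (oneLine w) := by
    rw [hvOne]
    conv_rhs => rw [hdecomp]
    rw [RSKList_append, RSKList_append]
    simp only [List.foldl_cons]
    rw [hswap]
  have hdesF : w ⟨d + 1, hd⟩ < w ⟨d, Nat.lt_of_succ_lt hd⟩ := by
    rw [Fin.lt_def]
    rwa [oneLine_getD w hd, oneLine_getD w (Nat.lt_of_succ_lt hd)] at hdes
  have hfcv := fc_mul_simpleTr w hfc hd hdesF
  have hvasc : (w * simpleTr d hd) ⟨d, Nat.lt_of_succ_lt hd⟩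
      < (w * simpleTr d hd) ⟨d + 1, hd⟩ := by
    have e1 : (w * simpleTr d hd) ⟨d, Nat.lt_of_succ_lt hd⟩ = w ⟨d + 1, hd⟩ := by
      show w (Equiv.swap _ _ _) = _
      rw [Equiv.swap_apply_left]
    have e2 : (w * simpleTr d hd) ⟨d + 1, hd⟩ = w ⟨d, Nat.lt_of_succ_lt hd⟩ := by
      show w (Equiv.swap _ _ _) = _
      rw [Equiv.swap_apply_right]
    rw [e1, e2]
    exact hdesF
  have hvw : (w * simpleTr d hd) * simpleTr d hd = w := by
    rw [mul_assoc]
    simp [simpleTr, Equiv.swap_mul_self]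
  have hinv : invCount w = invCount (w * simpleTr d hd) + 1 := by
    have := invCount_mul_simpleTr (w * simpleTr d hd) hd hvasc
    rwa [hvw] at this
  have hle : RightWeakLE (w * simpleTr d hd) w :=
    Relation.ReflTransGen.single ⟨d, hd, hvw.symm, hinv⟩
  have hnev : (w * simpleTr d hd) ≠ w := by
    intro hvweq
    have h3 : (w * simpleTr d hd) ⟨d, Nat.lt_of_succ_lt hd⟩ = w ⟨d, Nat.lt_of_succ_lt hd⟩ := by
      rw [hvweq]
    have h4 : (w * simpleTr d hd) ⟨d, Nat.lt_of_succ_lt hd⟩ = w ⟨d + 1, hd⟩ := by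
      show w (Equiv.swap _ _ _) = _
      rw [Equiv.swap_apply_left]
    have h5 : d + 1 = d := congrArg Fin.val (w.injective (h4.symm.trans h3))
    omega
  have hcrv : CrowdedPerm (w * simpleTr d hd) := by
    unfold CrowdedPerm RSKP at hcr ⊢
    rwa [hkey]
  exact hm _ hfcv hle hnev hcrv

lemma descent_bump (w : Equiv.Perm (Fin n)) (hmin : MinimalCrowded w) {d : ℕ}
    (hd : d + 1 < n) (hdes : (oneLine w).getD (d + 1) 0 < (oneLine w).getD d 0) :
    (Rrow (oneLine w) (d + 1)).find? (fun y => decide ((oneLine w).getD (d + 1) 0 < y))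
        = some ((oneLine w).getD d 0) ∧
      Rrow (oneLine w) (d + 2) = Rrow (oneLine w) d ++ [(oneLine w).getD (d + 1) 0] := by
  have hlen : (oneLine w).length = n := oneLine_length w
  have hcnone := descent_append w hmin.1 hd hdes
  have henone := descent_find_none w hmin hd hdes
  have h1 : Rrow (oneLine w) (d + 1) = Rrow (oneLine w) d ++ [(oneLine w).getD d 0] := by
    rw [Rrow_succ _ _ (by omega)]
    exact row1_rowInsert_none _ _ hcnone
  have hfind : (Rrow (oneLine w) (d + 1)).find?
      (fun y => decide ((oneLine w).getD (d + 1) 0 < y)) = some ((oneLine w).getD d 0) := by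
    rw [h1, List.find?_append, henone]
    rw [List.find?_cons_of_pos (p := fun y => decide ((oneLine w).getD (d + 1) 0 < y))
      (a := (oneLine w).getD d 0) (by simpa using hdes)]
    rfl
  refine ⟨hfind, ?_⟩
  have h2 : Rrow (oneLine w) (d + 2) = (Rrow (oneLine w) (d + 1)).map
      (fun z => if z = (oneLine w).getD d 0 then (oneLine w).getD (d + 1) 0 else z) := by
    rw [Rrow_succ _ _ (show d + 1 < (oneLine w).length by omega)]
    exact row1_rowInsert_some _ _ _ hfind
  rw [h2, h1, List.map_append]
  have hmapid : (Rrow (oneLine w) d).map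
      (fun z => if z = (oneLine w).getD d 0 then (oneLine w).getD (d + 1) 0 else z)
      = Rrow (oneLine w) d := by
    have hid : ∀ z ∈ Rrow (oneLine w) d,
        (if z = (oneLine w).getD d 0 then (oneLine w).getD (d + 1) 0 else z) = id z := by
      intro z hzm
      obtain ⟨j, hjd, hjn', hjz⟩ := Rrow_mem_exists (oneLine w) d (by omega) z hzm
      have hjn : j < n := by omega
      simp only [id]
      rw [if_neg]
      intro hc
      exact absurd (oneLine_getD_inj w hjn (Nat.lt_of_succ_lt hd) (hjz.trans hc))
        (Nat.ne_of_lt hjd)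
    rw [List.map_congr_left hid, List.map_id]
  rw [hmapid]
  simp

lemma row2_bumped (l : List ℕ) :
    ∀ k, k ≤ l.length → ∀ z ∈ (RSKList (l.take k)).getD 1 [], ∃ k', BumpsAt l k' z := by
  intro k
  induction k with
  | zero => intro _ z hz; simp [RSKList] at hz
  | succ k ih =>
    intro hk z hz
    have hkl : k < l.length := hk
    rw [RSKList_take_succ l k hkl] at hz
    rcases mem_row2_rowInsert _ _ _ hz with h | h
    · exact ih (le_of_lt hkl) z h
    · exact ⟨k, hkl, h⟩

lemma bump_struct (w : Equiv.Perm (Fin n)) (hmin : MinimalCrowded w) :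
    ∀ k, ∀ z, BumpsAt (oneLine w) k z →
      ∃ d, k = d + 1 ∧ (oneLine w).getD (d + 1) 0 < (oneLine w).getD d 0 ∧
        z = (oneLine w).getD d 0 ∧
        ∀ y ∈ Rrow (oneLine w) (k + 1), y ≤ (oneLine w).getD k 0 := by
  intro k
  induction k using Nat.strong_induction_on with
  | _ k ih =>
    intro z hbz
    obtain ⟨hk, hfind⟩ := hbz
    have hlen : (oneLine w).length = n := oneLine_length w
    have hkn : k < n := by omega
    cases k with
    | zero =>
      exfalso
      simp [RSKList] at hfind
    | succ d =>
      have hdn : d + 1 < n := hkn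
      have hbz' : (oneLine w).getD (d + 1) 0 < z := by simpa using List.find?_some hfind
      have hzmem : z ∈ Rrow (oneLine w) (d + 1) := List.mem_of_find?_eq_some hfind
      rcases Nat.lt_trichotomy ((oneLine w).getD d 0) ((oneLine w).getD (d + 1) 0)
        with hlt | heq | hgt
      · exfalso
        have hzne : z ≠ (oneLine w).getD d 0 := by omega
        have hzmem' : z ∈ Rrow (oneLine w) d := by
          rw [Rrow_succ _ _ (show d < (oneLine w).length by omega)] at hzmem
          rcases mem_row1_rowInsert _ _ _ hzmem with h | h
          · exact absurd h hzne
          · exact h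
        have hsome : ((Rrow (oneLine w) d).find?
            (fun y => decide ((oneLine w).getD d 0 < y))).isSome := by
          rw [List.find?_isSome]
          exact ⟨z, hzmem', by simp only [decide_eq_true_eq]; omega⟩
        obtain ⟨u, hu⟩ := Option.isSome_iff_exists.mp hsome
        obtain ⟨d', hd', hdes', hzu, hrow⟩ := ih d (by omega) u ⟨by omega, hu⟩
        have := hrow z hzmem
        omega
      · exfalso
        have := oneLine_getD_inj w (Nat.lt_of_succ_lt hdn) hdn heq
        omega
      · obtain ⟨hfind2, hrow2⟩ := descent_bump w hmin hdn hgt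
        have hz : z = (oneLine w).getD d 0 := Option.some.inj (hfind.symm.trans hfind2)
        refine ⟨d, rfl, hgt, hz, ?_⟩
        intro y hy
        rw [show d + 1 + 1 = d + 2 from rfl, hrow2] at hy
        rcases List.mem_append.mp hy with h | h
        · have := List.find?_eq_none.mp (descent_find_none w hmin hdn hgt) y h
          simp only [decide_eq_true_eq] at this
          omega
        · simp only [List.mem_singleton] at h
          omega

end Aux3
/-- **Corollary.** Let `w` be a minimal crowded permutation. (a) `d` is a descent
of `w` iff `w(d+1)` bumps `w(d)` to the second row during RSK insertion;
(b) every entry of `Row₂(P(w))` is `w(d)` for some descent `d`, bumped by `w(d+1)`. -/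
theorem minimal_crowded_bumps {n : ℕ} (w : Equiv.Perm (Fin n))
    (hmin : MinimalCrowded w) :
    (∀ d : ℕ, entry w (d + 1) < entry w d ↔
      BumpsAt (oneLine w) (d + 1) (entry w d)) ∧
    (∀ z ∈ Row2 (RSKP w), ∃ d : ℕ,
      entry w (d + 1) < entry w d ∧ entry w d = z ∧
        BumpsAt (oneLine w) (d + 1) z) := by
  classical
  have hlen : (oneLine w).length = n := oneLine_length w
  constructor
  · intro d
    constructor
    · intro hdes
      by_cases hdn : d + 1 < n
      · have hdes' : (oneLine w).getD (d + 1) 0 < (oneLine w).getD d 0 := by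
          rwa [entry_eq w hdn, entry_eq w (Nat.lt_of_succ_lt hdn)] at hdes
        obtain ⟨hfind2, -⟩ := descent_bump w hmin hdn hdes'
        refine ⟨by omega, ?_⟩
        rw [entry_eq w (Nat.lt_of_succ_lt hdn)]
        exact hfind2
      · exfalso
        by_cases hdn2 : d < n
        · have h1 : entry w (d + 1) = d + 1 := by
            simp only [entry]; rw [dif_neg (by omega)]
          have h2 : entry w d = (w ⟨d, hdn2⟩ : ℕ) := by
            simp only [entry]; rw [dif_pos hdn2]
          rw [h1, h2] at hdes
          have := (w ⟨d, hdn2⟩).is_lt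
          omega
        · have h1 : entry w (d + 1) = d + 1 := by
            simp only [entry]; rw [dif_neg (by omega)]
          have h2 : entry w d = d := by
            simp only [entry]; rw [dif_neg hdn2]
          rw [h1, h2] at hdes
          omega
    · rintro ⟨hk, hfind⟩
      have hdn : d + 1 < n := by omega
      have hlt := List.find?_some hfind
      simp only [decide_eq_true_eq] at hlt
      rwa [entry_eq w hdn]
  · intro z hz
    simp only [Row2, RSKP, List.mem_toFinset] at hz
    have hz' : z ∈ (RSKList ((oneLine w).take (oneLine w).length)).getD 1 [] := by
      rwa [List.take_length]
    obtain ⟨k, hbk⟩ := row2_bumped (oneLine w) (oneLine w).length le_rfl z hz'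
    obtain ⟨d, rfl, hdes, hzeq, -⟩ := bump_struct w hmin k z hbk
    have hdn : d + 1 < n := by
      have := hbk.1
      omega
    refine ⟨d, ?_, ?_, hbk⟩
    · rw [entry_eq w hdn, entry_eq w (Nat.lt_of_succ_lt hdn)]
      exact hdes
    · rw [entry_eq w (Nat.lt_of_succ_lt hdn)]
      exact hzeq.symm
end
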